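/- arXiv:1105.1944 — 10 statements merged into one kernel-verified Lean document; each statement's English description precedes it below -/
import Mathlib

section
/- Let f : [0,1] → ℝ be continuously differentiable, let r > 0, and suppose f(1) = 0. Then there is a constant C depending only on r such that ∫₀¹ s^{r-1} f(s)² ds ≤ C ∫₀¹ s^{r+1} f'(s)² ds. -/
open MeasureTheory intervalIntegral Set

theorem stmt_1 (r : ℝ) (hr : 0 < r) :
    ∃ C : ℝ, 0 < C ∧ ∀ (f f' : ℝ → ℝ),
      (∀ x ∈ Set.Icc (0:ℝ) 1, HasDerivWithinAt f (f' x) (Set.Icc 0 1) x) →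
      ContinuousOn f' (Set.Icc (0:ℝ) 1) →
      f 1 = 0 →
      ∫ s in (0:ℝ)..1, s ^ (r - 1) * (f s)^2 ≤ C * ∫ s in (0:ℝ)..1, s ^ (r + 1) * (f' s)^2 := by
  refine ⟨4 / r ^ 2, by positivity, fun f f' hf hf' hf1 => ?_⟩
  have hsub : Set.uIcc (0:ℝ) 1 ⊆ Set.Icc 0 1 := by
    rw [Set.uIcc_of_le (by norm_num)]
  have hcf : ContinuousOn f (Set.Icc (0:ℝ) 1) :=
    fun x hx => (hf x hx).continuousWithinAt
  -- integrability
  have hIrm1 : IntervalIntegrable (fun s : ℝ => s ^ (r - 1)) volume 0 1 :=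
    intervalIntegral.intervalIntegrable_rpow' (by linarith)
  have hI1 : IntervalIntegrable (fun s : ℝ => s ^ (r - 1) * (f s) ^ 2) volume 0 1 :=
    hIrm1.mul_continuousOn ((hcf.mono hsub).pow 2)
  have hcr1 : ContinuousOn (fun s : ℝ => s ^ (r + 1)) (Set.Icc (0:ℝ) 1) :=
    ContinuousOn.rpow_const continuousOn_id (fun x _ => Or.inr (by linarith))
  have hcr : ContinuousOn (fun s : ℝ => s ^ r) (Set.Icc (0:ℝ) 1) :=
    ContinuousOn.rpow_const continuousOn_id (fun x _ => Or.inr hr.le)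
  have hI2 : IntervalIntegrable (fun s : ℝ => s ^ (r + 1) * (f' s) ^ 2) volume 0 1 :=
    ((hcr1.mul (hf'.pow 2)).mono hsub).intervalIntegrable
  have hI3 : IntervalIntegrable (fun s : ℝ => s ^ r * (f s * f' s)) volume 0 1 :=
    ((hcr.mul (hcf.mul hf')).mono hsub).intervalIntegrable
  set L := ∫ s in (0:ℝ)..1, s ^ (r - 1) * (f s) ^ 2 with hLdef
  set R := ∫ s in (0:ℝ)..1, s ^ (r + 1) * (f' s) ^ 2 with hRdef
  set M := ∫ s in (0:ℝ)..1, s ^ r * (f s * f' s) with hMdef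
  -- FTC for g s = s^r * (f s)^2
  have hg : ∀ x ∈ Set.Ioo (0:ℝ) 1,
      HasDerivAt (fun s : ℝ => s ^ r * (f s) ^ 2)
        (r * (x ^ (r - 1) * (f x) ^ 2) + 2 * (x ^ r * (f x * f' x))) x := by
    intro x hx
    have hx0 : x ≠ 0 := ne_of_gt hx.1
    have h1 : HasDerivAt (fun s : ℝ => s ^ r) (r * x ^ (r - 1)) x :=
      Real.hasDerivAt_rpow_const (Or.inl hx0)
    have hfd : HasDerivAt f (f' x) x :=
      (hf x ⟨hx.1.le, hx.2.le⟩).hasDerivAt (Icc_mem_nhds hx.1 hx.2)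
    have h2 : HasDerivAt (fun s : ℝ => (f s) ^ 2) (2 * f x ^ (2 - 1) * f' x) x :=
      hfd.pow 2
    have := h1.mul h2
    refine this.congr_deriv ?_
    ring
  have a1 : IntervalIntegrable (fun s : ℝ => r * (s ^ (r - 1) * (f s) ^ 2)) volume 0 1 :=
    hI1.const_mul r
  have a2 : IntervalIntegrable (fun s : ℝ => 2 * (s ^ r * (f s * f' s))) volume 0 1 :=
    hI3.const_mul 2
  have hftc : ∫ s in (0:ℝ)..1,
      (r * (s ^ (r - 1) * (f s) ^ 2) + 2 * (s ^ r * (f s * f' s)))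
      = (fun s : ℝ => s ^ r * (f s) ^ 2) 1 - (fun s : ℝ => s ^ r * (f s) ^ 2) 0 := by
    refine intervalIntegral.integral_eq_sub_of_hasDerivAt_of_le (by norm_num)
      (hcr.mul (hcf.pow 2)) hg (a1.add a2)
  have hends : (fun s : ℝ => s ^ r * (f s) ^ 2) 1 - (fun s : ℝ => s ^ r * (f s) ^ 2) 0 = 0 := by
    simp [hf1, Real.zero_rpow hr.ne']
  have hsplit : r * L + 2 * M = 0 := by
    rw [hLdef, hMdef, ← intervalIntegral.integral_const_mul,
      ← intervalIntegral.integral_const_mul, ← intervalIntegral.integral_add a1 a2,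
      hftc, hends]
  -- pointwise bound
  have hpw : ∀ x ∈ Set.Icc (0:ℝ) 1,
      (-2) * (x ^ r * (f x * f' x))
        ≤ (r / 2) * (x ^ (r - 1) * (f x) ^ 2) + (2 / r) * (x ^ (r + 1) * (f' x) ^ 2) := by
    intro x hx
    rcases eq_or_lt_of_le hx.1 with h0 | h0
    · rw [← h0]
      rw [Real.zero_rpow hr.ne']
      have h1 : (0:ℝ) ^ (r - 1) ≥ 0 := Real.rpow_nonneg le_rfl _
      have h2 : (0:ℝ) ^ (r + 1) ≥ 0 := Real.rpow_nonneg le_rfl _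
      have := sq_nonneg (f 0); have := sq_nonneg (f' 0)
      have hr2 : 0 < r / 2 := by linarith
      have hr2' : 0 < 2 / r := by positivity
      nlinarith [mul_nonneg h1 (sq_nonneg (f 0)), mul_nonneg h2 (sq_nonneg (f' 0))]
    · set A := x ^ ((r - 1) / 2) with hA
      set B := x ^ ((r + 1) / 2) with hB
      have e1 : A * A = x ^ (r - 1) := by rw [hA, ← Real.rpow_add h0]; ring_nf
      have e2 : B * B = x ^ (r + 1) := by rw [hB, ← Real.rpow_add h0]; ring_nf
      have e3 : A * B = x ^ r := by rw [hA, hB, ← Real.rpow_add h0]; ring_nf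
      rw [← e1, ← e2, ← e3]
      have key : 0 ≤ (r * (A * f x) + 2 * (B * f' x)) ^ 2 := sq_nonneg _
      have expand : (r / 2) * ((A * A) * (f x) ^ 2) + (2 / r) * ((B * B) * (f' x) ^ 2)
          + 2 * ((A * B) * (f x * f' x))
          = (r * (A * f x) + 2 * (B * f' x)) ^ 2 / (2 * r) := by
        field_simp
        ring
      have hnn : 0 ≤ (r * (A * f x) + 2 * (B * f' x)) ^ 2 / (2 * r) :=
        div_nonneg key (by linarith)
      linarith [expand ▸ hnn]
  have hmono : ∫ s in (0:ℝ)..1, (-2) * (s ^ r * (f s * f' s))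
      ≤ ∫ s in (0:ℝ)..1,
        ((r / 2) * (s ^ (r - 1) * (f s) ^ 2) + (2 / r) * (s ^ (r + 1) * (f' s) ^ 2)) :=
    intervalIntegral.integral_mono_on (by norm_num) (hI3.const_mul _)
      ((hI1.const_mul _).add (hI2.const_mul _)) hpw
  rw [intervalIntegral.integral_const_mul,
    intervalIntegral.integral_add (hI1.const_mul _) (hI2.const_mul _),
    intervalIntegral.integral_const_mul, intervalIntegral.integral_const_mul] at hmono
  -- hmono : -2 * M ≤ (r/2) * L + (2/r) * R
  have h2 : (r / 2) * L ≤ (2 / r) * R := by linarith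
  have h3 : r * ((r / 2) * L) ≤ r * ((2 / r) * R) :=
    mul_le_mul_of_nonneg_left h2 hr.le
  have h4 : r * ((2 / r) * R) = 2 * R := by field_simp
  rw [div_mul_eq_mul_div, le_div_iff₀ (by positivity : (0:ℝ) < r ^ 2)]
  nlinarith [h3, h4]
end

section
/- Let f : [0,1] → ℝ be continuously differentiable, let r > 0, and suppose f(1) = 0. Then there is a constant C depending only on r such that sup_{0≤s≤1} s^r f(s)² ≤ C ∫₀¹ s^{r+1} f'(s)² ds. -/
open MeasureTheory intervalIntegral

theorem stmt_2 (r : ℝ) (hr : 0 < r) :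
    ∃ C : ℝ, 0 < C ∧ ∀ (f f' : ℝ → ℝ),
      (∀ x ∈ Set.Icc (0:ℝ) 1, HasDerivWithinAt f (f' x) (Set.Icc 0 1) x) →
      ContinuousOn f' (Set.Icc (0:ℝ) 1) →
      f 1 = 0 →
      ∀ s ∈ Set.Icc (0:ℝ) 1,
        s ^ r * (f s)^2 ≤ C * ∫ x in (0:ℝ)..1, x ^ (r + 1) * (f' x)^2 := by
  refine ⟨1/r, by positivity, ?_⟩
  intro f f' hder hcont hf1 s hs
  obtain ⟨hs0, hs1⟩ := hs
  set I : ℝ := ∫ x in (0:ℝ)..1, x ^ (r + 1) * (f' x)^2 with hIdef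
  have hgcont : ContinuousOn (fun x => x ^ (r+1) * (f' x)^2) (Set.Icc (0:ℝ) 1) := by
    apply ContinuousOn.mul _ (hcont.pow 2)
    intro x hx
    exact (Real.continuousAt_rpow_const x (r+1) (Or.inr (by linarith))).continuousWithinAt
  have hInonneg : 0 ≤ I := by
    apply intervalIntegral.integral_nonneg zero_le_one
    intro x hx
    have : (0:ℝ) ≤ x ^ (r+1) := Real.rpow_nonneg hx.1 _
    positivity
  rcases eq_or_lt_of_le hs0 with hs0' | hs0'
  · rw [← hs0', Real.zero_rpow (ne_of_gt hr)]
    simp only [zero_mul]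
    exact mul_nonneg (by positivity) hInonneg
  -- now 0 < s
  have hfcont : ContinuousOn f (Set.Icc (0:ℝ) 1) :=
    fun x hx => (hder x hx).continuousWithinAt
  have hsub : Set.Icc s 1 ⊆ Set.Icc (0:ℝ) 1 := Set.Icc_subset_Icc hs0 le_rfl
  have huIcc : Set.uIcc s (1:ℝ) = Set.Icc s 1 := Set.uIcc_of_le hs1
  have hint_f' : IntervalIntegrable f' volume s 1 :=
    ((hcont.mono hsub).mono (le_of_eq huIcc)).intervalIntegrable
  have hfs : f s = -∫ x in s..(1:ℝ), f' x := by
    have hFTC := intervalIntegral.integral_eq_sub_of_hasDeriv_right_of_le hs1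
      (hfcont.mono hsub)
      (fun x hx => (((hder x ⟨le_of_lt (lt_trans hs0' hx.1), le_of_lt hx.2⟩).hasDerivAt
        (Icc_mem_nhds (lt_trans hs0' hx.1) hx.2))).hasDerivWithinAt)
      hint_f'
    rw [hFTC, hf1]
    ring
  -- key bound for every t > 0
  have key : ∀ t : ℝ, 0 < t → |f s| ≤ t/(2*r) * s ^ (-r) + I/(2*t) := by
    intro t ht
    have h1 : |f s| ≤ ∫ x in s..1, |f' x| := by
      rw [hfs, abs_neg]
      exact intervalIntegral.abs_integral_le_integral_abs hs1
    have hcont_neg : ContinuousOn (fun x : ℝ => x ^ (-(r+1))) (Set.Icc s 1) := by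
      intro x hx
      exact (Real.continuousAt_rpow_const x _
        (Or.inl (ne_of_gt (lt_of_lt_of_le hs0' hx.1)))).continuousWithinAt
    have int_neg : IntervalIntegrable (fun x : ℝ => x ^ (-(r+1))) volume s 1 :=
      (hcont_neg.mono (le_of_eq huIcc)).intervalIntegrable
    have int_g : IntervalIntegrable (fun x => x ^ (r+1) * (f' x)^2) volume s 1 :=
      (((hgcont.mono hsub)).mono (le_of_eq huIcc)).intervalIntegrable
    have h2 : (∫ x in s..1, |f' x|) ≤
        ∫ x in s..1, (t/2 * x ^ (-(r+1)) + 1/(2*t) * (x ^ (r+1) * (f' x)^2)) := by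
      apply intervalIntegral.integral_mono_on hs1
        (hint_f'.abs)
        ((int_neg.const_mul _).add (int_g.const_mul _))
      intro x hx
      have hx0 : 0 < x := lt_of_lt_of_le hs0' hx.1
      have ha : 0 < x ^ (r+1) := Real.rpow_pos_of_pos hx0 _
      have hinv : x ^ (-(r+1)) = (x ^ (r+1))⁻¹ := Real.rpow_neg (le_of_lt hx0) _
      rw [hinv]
      have habs : |f' x| ^ 2 = (f' x)^2 := sq_abs _
      rw [div_mul_eq_mul_div, ← div_eq_mul_inv]
      have h := sq_nonneg (t - x ^ (r+1) * |f' x|)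
      have key2 : 2 * t * (x ^ (r+1) * |f' x|) ≤ t^2 + (x ^ (r+1))^2 * (f' x)^2 := by
        nlinarith [sq_abs (f' x)]
      calc |f' x| ≤ (t^2 + (x ^ (r+1))^2 * (f' x)^2) / (2*t*x ^ (r+1)) := by
            rw [le_div_iff₀ (by positivity)]
            nlinarith
        _ = t / x ^ (r+1) / 2 + 1/(2*t) * (x ^ (r+1) * (f' x)^2) := by
            field_simp
    have h3 : (∫ x in s..1, (t/2 * x ^ (-(r+1)) + 1/(2*t) * (x ^ (r+1) * (f' x)^2)))
        = t/2 * (∫ x in s..1, x ^ (-(r+1)))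
          + 1/(2*t) * ∫ x in s..1, x ^ (r+1) * (f' x)^2 := by
      rw [intervalIntegral.integral_add (int_neg.const_mul _) (int_g.const_mul _),
        intervalIntegral.integral_const_mul, intervalIntegral.integral_const_mul]
    have h4 : (∫ x in s..1, x ^ (-(r+1))) = (s ^ (-r) - 1)/r := by
      rw [integral_rpow (Or.inr ⟨by intro hc; linarith, by
        rw [huIcc]; intro hc; exact absurd hc.1 (not_le.mpr hs0')⟩)]
      have he : -(r+1) + 1 = -r := by ring
      have hrne : r ≠ 0 := ne_of_gt hr
      rw [he, Real.one_rpow]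
      field_simp
      ring
    have h4' : (∫ x in s..1, x ^ (-(r+1))) ≤ s ^ (-r) / r := by
      rw [h4]
      have : (0:ℝ) < s ^ (-r) := Real.rpow_pos_of_pos hs0' _
      gcongr
      linarith
    have h5 : (∫ x in s..1, x ^ (r+1) * (f' x)^2) ≤ I := by
      have int_g0 : IntervalIntegrable (fun x => x ^ (r+1) * (f' x)^2) volume 0 s :=
        ((hgcont.mono (Set.Icc_subset_Icc le_rfl hs1)).mono
          (le_of_eq (Set.uIcc_of_le hs0))).intervalIntegrable
      have hsplit := intervalIntegral.integral_add_adjacent_intervals int_g0 int_g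
      have hpos : 0 ≤ ∫ x in (0:ℝ)..s, x ^ (r+1) * (f' x)^2 := by
        apply intervalIntegral.integral_nonneg hs0
        intro x hx
        have : (0:ℝ) ≤ x ^ (r+1) := Real.rpow_nonneg hx.1 _
        positivity
      rw [hIdef, ← hsplit]
      linarith
    calc |f s| ≤ ∫ x in s..1, (t/2 * x ^ (-(r+1)) + 1/(2*t) * (x ^ (r+1) * (f' x)^2)) :=
          h1.trans h2
      _ = t/2 * (∫ x in s..1, x ^ (-(r+1)))
          + 1/(2*t) * ∫ x in s..1, x ^ (r+1) * (f' x)^2 := h3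
      _ ≤ t/2 * (s ^ (-r) / r) + 1/(2*t) * I :=
          add_le_add (mul_le_mul_of_nonneg_left h4' (by positivity))
            (mul_le_mul_of_nonneg_left h5 (by positivity))
      _ = t/(2*r) * s ^ (-r) + I/(2*t) := by ring
  -- optimize over t, with epsilon slack
  rw [show (1:ℝ)/r * I = I/r by ring]
  apply le_of_forall_pos_le_add
  intro ε hε
  set J : ℝ := I + r * ε with hJdef
  have hJpos : 0 < J := by nlinarith
  have hIJ : I ≤ J := by nlinarith
  set u : ℝ := Real.sqrt (r * J) with hu_def
  have hu : 0 < u := Real.sqrt_pos.mpr (by positivity)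
  have hu2 : u^2 = r * J := Real.sq_sqrt (by positivity)
  have hspow : (0:ℝ) < s ^ (r/2) := Real.rpow_pos_of_pos hs0' _
  have hb := key (u * s ^ (r/2)) (by positivity)
  have hBeq : s ^ (r/2) * ((u * s ^ (r/2))/(2*r) * s ^ (-r) + I/(2*(u * s ^ (r/2))))
      = u/(2*r) + I/(2*u) := by
    have hss : s ^ (r/2) * s ^ (r/2) * s ^ (-r) = 1 := by
      rw [← Real.rpow_add hs0', ← Real.rpow_add hs0']
      norm_num
    have e1 : s ^ (r/2) * ((u * s ^ (r/2))/(2*r) * s ^ (-r))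
        = u * (s ^ (r/2) * s ^ (r/2) * s ^ (-r)) / (2*r) := by ring
    have e2 : s ^ (r/2) * (I/(2*(u * s ^ (r/2)))) = I/(2*u) := by
      have h1ne : s ^ (r/2) ≠ 0 := ne_of_gt hspow
      have h2ne : u ≠ 0 := ne_of_gt hu
      field_simp
    rw [mul_add, e1, hss, mul_one, e2]
  have hstep : s ^ (r/2) * |f s| ≤ u/(2*r) + I/(2*u) := by
    rw [← hBeq]
    exact mul_le_mul_of_nonneg_left hb (le_of_lt hspow)
  have hsq : s ^ r * (f s)^2 = (s ^ (r/2) * |f s|)^2 := by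
    rw [mul_pow, sq_abs, ← Real.rpow_natCast (s ^ (r/2)) 2, ← Real.rpow_mul (le_of_lt hs0')]
    norm_num
  rw [hsq]
  have hBnn : 0 ≤ u/(2*r) + I/(2*u) := by positivity
  have hfinal : (u/(2*r) + I/(2*u))^2 ≤ I/r + ε := by
    have he0 : u/(2*r) = J/(2*u) := by
      rw [div_eq_div_iff (by positivity) (by positivity)]
      linear_combination 2 * hu2
    have he1 : u/(2*r) + I/(2*u) = (J + I)/(2*u) := by
      rw [he0, ← add_div]
    rw [he1, div_pow, div_le_iff₀ (by positivity)]
    have h2u : (2*u)^2 = 4*r*J := by linear_combination 4 * hu2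
    have hrhs : (I/r + ε) * (2*u)^2 = 4*J*J := by
      rw [h2u, hJdef]
      field_simp
    rw [hrhs]
    nlinarith [hIJ, hInonneg]
  calc (s ^ (r/2) * |f s|)^2 ≤ (u/(2*r) + I/(2*u))^2 := by
        apply pow_le_pow_left₀ (by positivity) hstep
    _ ≤ I/r + ε := hfinal
end

section
/- Let f : [0,1] → ℝ be continuously differentiable and let r > 0. Then there is a constant C depending only on r such that ∫₀¹ s^{r-1} f(s)² ds ≤ C ( ∫₀¹ s^r f(s)² ds + ∫₀¹ s^{r+1} f'(s)² ds ). -/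
open MeasureTheory intervalIntegral

theorem stmt_3 (r : ℝ) (hr : 0 < r) :
    ∃ C : ℝ, 0 < C ∧ ∀ (f f' : ℝ → ℝ),
      (∀ x ∈ Set.Icc (0:ℝ) 1, HasDerivWithinAt f (f' x) (Set.Icc 0 1) x) →
      ContinuousOn f' (Set.Icc (0:ℝ) 1) →
      ∫ s in (0:ℝ)..1, s ^ (r - 1) * (f s)^2 ≤
        C * ((∫ s in (0:ℝ)..1, s ^ r * (f s)^2) + ∫ s in (0:ℝ)..1, s ^ (r + 1) * (f' s)^2) := by
  refine ⟨2*(r+1)/r + 4/r^2, by positivity, ?_⟩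
  intro f f' hf hf'
  have hfc : ContinuousOn f (Set.Icc 0 1) := fun x hx => (hf x hx).continuousWithinAt
  have huIcc : Set.uIcc (0:ℝ) 1 = Set.Icc 0 1 := Set.uIcc_of_le zero_le_one
  -- integrability of power weights
  have hpow : ∀ p : ℝ, -1 < p → IntervalIntegrable (fun s : ℝ => s ^ p) volume 0 1 :=
    fun p hp => intervalIntegrable_rpow' hp
  have hA : IntervalIntegrable (fun s : ℝ => s ^ (r-1) * (f s)^2) volume 0 1 := by
    apply (hpow (r-1) (by linarith)).mul_continuousOn
    rw [huIcc]; exact hfc.pow 2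
  have hB : IntervalIntegrable (fun s : ℝ => s ^ r * (f s)^2) volume 0 1 := by
    apply (hpow r (by linarith)).mul_continuousOn
    rw [huIcc]; exact hfc.pow 2
  have hE : IntervalIntegrable (fun s : ℝ => s ^ (r+1) * (f' s)^2) volume 0 1 := by
    apply (hpow (r+1) (by linarith)).mul_continuousOn
    rw [huIcc]; exact hf'.pow 2
  have hD : IntervalIntegrable (fun s : ℝ => (s ^ r - s ^ (r+1)) * (2 * f s * f' s)) volume 0 1 := by
    apply IntervalIntegrable.mul_continuousOn
    · exact (hpow r (by linarith)).sub (hpow (r+1) (by linarith))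
    · rw [huIcc]
      exact ((continuousOn_const.mul hfc).mul hf')
  -- FTC
  have key : ∫ s in (0:ℝ)..1,
      ((r * s ^ (r-1) - (r+1) * s ^ r) * (f s)^2 + (s ^ r - s ^ (r+1)) * (2 * f s * f' s)) = 0 := by
    have hcont : ContinuousOn (fun s : ℝ => (s ^ r - s ^ (r+1)) * (f s)^2) (Set.Icc 0 1) := by
      apply ContinuousOn.mul _ (hfc.pow 2)
      apply ContinuousOn.sub
      · exact fun x hx => (Real.continuousAt_rpow_const x r (Or.inr hr.le)).continuousWithinAt
      · exact fun x hx => (Real.continuousAt_rpow_const x (r+1) (Or.inr (by linarith))).continuousWithinAt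
    have hderiv : ∀ x ∈ Set.Ioo (0:ℝ) 1,
        HasDerivWithinAt (fun s : ℝ => (s ^ r - s ^ (r+1)) * (f s)^2)
          ((r * x ^ (r-1) - (r+1) * x ^ r) * (f x)^2 + (x ^ r - x ^ (r+1)) * (2 * f x * f' x))
          (Set.Ioi x) x := by
      intro x hx
      have hx0 : x ≠ 0 := ne_of_gt hx.1
      have h1 : HasDerivAt (fun s : ℝ => s ^ r) (r * x ^ (r-1)) x :=
        Real.hasDerivAt_rpow_const (Or.inl hx0)
      have h2 : HasDerivAt (fun s : ℝ => s ^ (r+1)) ((r+1) * x ^ r) x := by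
        have := Real.hasDerivAt_rpow_const (x := x) (p := r+1) (Or.inl hx0)
        simpa using this
      have hfx : HasDerivAt f (f' x) x := by
        apply (hf x ⟨hx.1.le, hx.2.le⟩).hasDerivAt
        exact Icc_mem_nhds hx.1 hx.2
      have := ((h1.sub h2).mul (hfx.pow 2))
      apply HasDerivAt.hasDerivWithinAt
      refine this.congr_deriv ?_
      simp only [Pi.pow_apply, Pi.sub_apply, Nat.cast_ofNat, Nat.add_one_sub_one, pow_one]
    have := integral_eq_sub_of_hasDeriv_right_of_le zero_le_one hcont hderiv
      (by
        apply IntervalIntegrable.add _ hD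
        apply IntervalIntegrable.mul_continuousOn
        · exact ((hpow (r-1) (by linarith)).const_mul r).sub ((hpow r (by linarith)).const_mul (r+1))
        · rw [huIcc]; exact hfc.pow 2)
    rw [this]
    rw [Real.one_rpow, Real.one_rpow, Real.zero_rpow hr.ne', Real.zero_rpow (by linarith : r+1 ≠ 0)]
    ring
  -- split the integral
  have hA' : IntervalIntegrable (fun s : ℝ => (r * s ^ (r-1) - (r+1) * s ^ r) * (f s)^2) volume 0 1 := by
    apply IntervalIntegrable.mul_continuousOn
    · exact ((hpow (r-1) (by linarith)).const_mul r).sub ((hpow r (by linarith)).const_mul (r+1))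
    · rw [huIcc]; exact hfc.pow 2
  have split : r * (∫ s in (0:ℝ)..1, s ^ (r-1) * (f s)^2)
      - (r+1) * (∫ s in (0:ℝ)..1, s ^ r * (f s)^2)
      + (∫ s in (0:ℝ)..1, (s ^ r - s ^ (r+1)) * (2 * f s * f' s)) = 0 := by
    rw [← intervalIntegral.integral_const_mul, ← intervalIntegral.integral_const_mul,
      ← intervalIntegral.integral_sub ((hA.const_mul r)) ((hB.const_mul (r+1))),
      ← intervalIntegral.integral_add _ hD]
    · rw [← key]; congr 1; funext s; ring
    · apply IntervalIntegrable.sub (hA.const_mul r) (hB.const_mul (r+1))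
  -- pointwise bound
  have hptwise : ∀ s ∈ Set.Icc (0:ℝ) 1,
      -((s ^ r - s ^ (r+1)) * (2 * f s * f' s)) ≤
        (r/2) * (s ^ (r-1) * (f s)^2) + (2/r) * (s ^ (r+1) * (f' s)^2) := by
    intro s hs
    rcases eq_or_lt_of_le hs.1 with h0 | h0
    · subst h0
      rw [Real.zero_rpow hr.ne', Real.zero_rpow (by linarith : r+1 ≠ 0)]
      have h1 : 0 ≤ (r/2) * ((0:ℝ)^(r-1) * f 0^2) :=
        mul_nonneg (by positivity) (mul_nonneg (Real.rpow_nonneg le_rfl _) (sq_nonneg _))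
      have h2 : 0 ≤ (2/r) * ((0:ℝ)^(r+1) * f' 0^2) := by
        rw [Real.zero_rpow (by linarith : r+1 ≠ 0)]
        simp
      simp only [sub_self, zero_mul, neg_zero]
      linarith
    · have hp : (0:ℝ) ≤ s ^ ((r-1)/2) := Real.rpow_nonneg hs.1 _
      have hq : (0:ℝ) ≤ s ^ ((r+1)/2) := Real.rpow_nonneg hs.1 _
      have e1 : s ^ (r-1) = s ^ ((r-1)/2) * s ^ ((r-1)/2) := by
        rw [← Real.rpow_add h0]; ring_nf
      have e2 : s ^ (r+1) = s ^ ((r+1)/2) * s ^ ((r+1)/2) := by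
        rw [← Real.rpow_add h0]; ring_nf
      have e3 : s ^ r = s ^ ((r-1)/2) * s ^ ((r+1)/2) := by
        rw [← Real.rpow_add h0]; ring_nf
      have e4 : s ^ (r+1) = s * s ^ r := by
        rw [Real.rpow_add h0, Real.rpow_one]; ring
      set p := s ^ ((r-1)/2) with hpd
      set q := s ^ ((r+1)/2) with hqd
      have e5 : s * (p * q) = q * q := by rw [← e3, ← e4, e2]
      have hqp : q * q ≤ p * q := by
        rw [← e2, ← e3]
        exact Real.rpow_le_rpow_of_exponent_ge h0 hs.2 (by linarith)
      rw [e4, e1, e3, e5]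
      have h2r : (0:ℝ) < 2*r := by linarith
      have hR : r/2*(p*p*(f s)^2) + 2/r*(q*q*(f' s)^2)
          = (r^2*(p*p*(f s)^2) + 4*(q*q*(f' s)^2))/(2*r) := by
        field_simp; ring
      rw [hR, le_div_iff₀ h2r]
      rcases le_or_gt 0 (f s * f' s) with hab | hab
      · nlinarith [mul_nonneg (mul_nonneg (sub_nonneg.2 hqp) hab) hr.le,
          mul_nonneg (mul_nonneg hp hp) (sq_nonneg (f s)),
          mul_nonneg (mul_nonneg hq hq) (sq_nonneg (f' s)), sq_nonneg r]
      · nlinarith [sq_nonneg (r * p * f s + 2 * q * f' s),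
          mul_nonneg (mul_nonneg hq hq) (le_of_lt (neg_pos.2 hab)), hr.le]
  -- integrate the pointwise bound
  have hmono : (∫ s in (0:ℝ)..1, -((s ^ r - s ^ (r+1)) * (2 * f s * f' s)))
      ≤ ∫ s in (0:ℝ)..1, ((r/2) * (s ^ (r-1) * (f s)^2) + (2/r) * (s ^ (r+1) * (f' s)^2)) := by
    apply intervalIntegral.integral_mono_on zero_le_one hD.neg
      ((hA.const_mul (r/2)).add (hE.const_mul (2/r))) hptwise
  rw [intervalIntegral.integral_neg, intervalIntegral.integral_add (hA.const_mul (r/2)) (hE.const_mul (2/r)),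
    intervalIntegral.integral_const_mul, intervalIntegral.integral_const_mul] at hmono
  have hBnn : 0 ≤ ∫ s in (0:ℝ)..1, s ^ r * (f s)^2 := by
    apply intervalIntegral.integral_nonneg zero_le_one
    intro u hu
    exact mul_nonneg (Real.rpow_nonneg hu.1 _) (sq_nonneg _)
  have hEnn : 0 ≤ ∫ s in (0:ℝ)..1, s ^ (r+1) * (f' s)^2 := by
    apply intervalIntegral.integral_nonneg zero_le_one
    intro u hu
    exact mul_nonneg (Real.rpow_nonneg hu.1 _) (sq_nonneg _)
  set IA := ∫ s in (0:ℝ)..1, s ^ (r-1) * (f s)^2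
  set IB := ∫ s in (0:ℝ)..1, s ^ r * (f s)^2
  set IE := ∫ s in (0:ℝ)..1, s ^ (r+1) * (f' s)^2
  set ID := ∫ s in (0:ℝ)..1, (s ^ r - s ^ (r+1)) * (2 * f s * f' s)
  -- from split : r*IA - (r+1)*IB + ID = 0 and -ID ≤ (r/2)*IA + (2/r)*IE
  have h2 : (r/2) * IA ≤ (r+1) * IB + (2/r) * IE := by linarith
  have h3 : IA ≤ (2/r) * ((r+1) * IB + (2/r) * IE) := by
    calc IA = (2/r) * ((r/2) * IA) := by field_simp
    _ ≤ (2/r) * ((r+1) * IB + (2/r) * IE) :=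
        mul_le_mul_of_nonneg_left h2 (by positivity)
  have e : (2/r) * ((r+1) * IB + (2/r) * IE) = (2*(r+1)/r) * IB + (4/r^2) * IE := by
    field_simp; ring
  calc IA ≤ (2*(r+1)/r) * IB + (4/r^2) * IE := by rw [← e]; exact h3
  _ ≤ (2*(r+1)/r + 4/r^2) * (IB + IE) := by
      nlinarith [mul_nonneg (show (0:ℝ) ≤ 4/r^2 by positivity) hBnn,
        mul_nonneg (show (0:ℝ) ≤ 2*(r+1)/r by positivity) hEnn]
end

section
/- Let f : [0,1] → ℝ be continuously differentiable and let r > 0. Then there is a constant C depending only on r such that sup_{0≤s≤1} s^r f(s)² ≤ C ( ∫₀¹ s^r f(s)² ds + ∫₀¹ s^{r+1} f'(s)² ds ). -/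
open MeasureTheory intervalIntegral

section WeightedSobolevAux
open Set

lemma contOn_rpow (p : ℝ) (hp : 0 < p) : ContinuousOn (fun x : ℝ => x ^ p) (Set.Icc 0 1) :=
  fun x _ => (Real.continuousAt_rpow_const x p (Or.inr hp.le)).continuousWithinAt

lemma sq_half_rpow {x : ℝ} (hx : 0 ≤ x) : (x ^ ((1:ℝ)/2)) ^ 2 = x := by
  rw [← Real.rpow_natCast (x ^ ((1:ℝ)/2)) 2, ← Real.rpow_mul hx]
  norm_num

lemma abs_rpow_two (y : ℝ) : |y| ^ (2:ℝ) = y ^ 2 := by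
  rw [show (2:ℝ) = ((2:ℕ):ℝ) by norm_num, Real.rpow_natCast, sq_abs]

lemma cs_aux (r : ℝ) (hr : 0 < r) (f' : ℝ → ℝ) (hcont : ContinuousOn f' (Set.Icc 0 1))
    {a b : ℝ} (ha : 0 < a) (hab : a ≤ b) (hb1 : b ≤ 1) :
    (∫ u in a..b, f' u)^2 ≤ (a ^ (-r) / r) * ∫ x in (0:ℝ)..1, x ^ (r+1) * (f' x)^2 := by
  have ha0 : (0:ℝ) ≤ a := ha.le
  have hsub : Set.Icc a b ⊆ Set.Icc 0 1 := Set.Icc_subset_Icc ha0 hb1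
  set μ := volume.restrict (Set.Ioc a b) with hμ
  haveI : IsFiniteMeasure μ := ⟨by
    rw [hμ, Measure.restrict_apply_univ]
    exact measure_Ioc_lt_top⟩
  set F1 : ℝ → ℝ := fun x => |x ^ (-(r+1)/2)| with hF1
  set F2 : ℝ → ℝ := fun x => |x ^ ((r+1)/2) * f' x| with hF2
  have hcont1 : ContinuousOn (fun x : ℝ => x ^ (-(r+1)/2)) (Set.Ioc a b) := fun x hx =>
    (Real.continuousAt_rpow_const x _ (Or.inl (lt_of_lt_of_le ha hx.1.le).ne')).continuousWithinAt
  have hcont2 : ContinuousOn (fun x : ℝ => x ^ ((r+1)/2) * f' x) (Set.Icc 0 1) :=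
    (contOn_rpow _ (by positivity)).mul hcont
  have hm1 : MemLp F1 (ENNReal.ofReal 2) μ := by
    refine MemLp.of_bound (hcont1.abs.aestronglyMeasurable measurableSet_Ioc) (a ^ (-(r+1)/2)) ?_
    rw [hμ, ae_restrict_iff' measurableSet_Ioc]
    refine ae_of_all _ fun x hx => ?_
    have hx0 : 0 < x := lt_of_lt_of_le ha hx.1.le
    have : ‖F1 x‖ = x ^ (-(r+1)/2) := by
      rw [hF1, Real.norm_eq_abs, abs_abs, abs_of_nonneg (Real.rpow_nonneg hx0.le _)]
    rw [this]
    exact Real.rpow_le_rpow_of_nonpos ha hx.1.le (by linarith)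
  obtain ⟨M, hM⟩ := isCompact_Icc.exists_bound_of_continuousOn hcont2
  have hm2 : MemLp F2 (ENNReal.ofReal 2) μ := by
    refine MemLp.of_bound ((hcont2.mono (Set.Ioc_subset_Icc_self.trans hsub)).abs.aestronglyMeasurable
      measurableSet_Ioc) M ?_
    rw [hμ, ae_restrict_iff' measurableSet_Ioc]
    refine ae_of_all _ fun x hx => ?_
    have := hM x (hsub (Set.Ioc_subset_Icc_self hx))
    rwa [hF2, Real.norm_eq_abs, abs_abs, ← Real.norm_eq_abs]
  have hpq : Real.HolderConjugate 2 2 := Real.HolderConjugate.two_two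
  have hHold : ∫ x, F1 x * F2 x ∂μ ≤
      (∫ x, F1 x ^ (2:ℝ) ∂μ) ^ ((1:ℝ)/2) * (∫ x, F2 x ^ (2:ℝ) ∂μ) ^ ((1:ℝ)/2) :=
    MeasureTheory.integral_mul_le_Lp_mul_Lq_of_nonneg hpq
      (ae_of_all _ fun x => abs_nonneg _) (ae_of_all _ fun x => abs_nonneg _) hm1 hm2
  have e1 : ∫ x, F1 x * F2 x ∂μ = ∫ u in a..b, |f' u| := by
    rw [intervalIntegral.integral_of_le hab]
    refine setIntegral_congr_fun measurableSet_Ioc fun x hx => ?_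
    have hx0 : 0 < x := lt_of_lt_of_le ha hx.1.le
    show |x ^ (-(r+1)/2)| * |x ^ ((r+1)/2) * f' x| = |f' x|
    rw [← abs_mul, ← mul_assoc, ← Real.rpow_add hx0,
      show (-(r+1)/2 + (r+1)/2 : ℝ) = 0 by ring, Real.rpow_zero, one_mul]
  have e2 : ∫ x, F1 x ^ (2:ℝ) ∂μ = ∫ u in a..b, u ^ (-(r+1)) := by
    rw [intervalIntegral.integral_of_le hab]
    refine setIntegral_congr_fun measurableSet_Ioc fun x hx => ?_
    have hx0 : 0 < x := lt_of_lt_of_le ha hx.1.le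
    show |x ^ (-(r+1)/2)| ^ (2:ℝ) = x ^ (-(r+1))
    rw [abs_rpow_two, ← Real.rpow_natCast (x ^ (-(r+1)/2)) 2, ← Real.rpow_mul hx0.le]
    norm_num
  have e3 : ∫ x, F2 x ^ (2:ℝ) ∂μ = ∫ u in a..b, u ^ (r+1) * (f' u)^2 := by
    rw [intervalIntegral.integral_of_le hab]
    refine setIntegral_congr_fun measurableSet_Ioc fun x hx => ?_
    have hx0 : 0 < x := lt_of_lt_of_le ha hx.1.le
    show |x ^ ((r+1)/2) * f' x| ^ (2:ℝ) = x ^ (r+1) * (f' x)^2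
    rw [abs_rpow_two, mul_pow, ← Real.rpow_natCast (x ^ ((r+1)/2)) 2, ← Real.rpow_mul hx0.le]
    norm_num
  have hP : (0:ℝ) ≤ ∫ x, F1 x ^ (2:ℝ) ∂μ :=
    integral_nonneg fun x => Real.rpow_nonneg (abs_nonneg _) _
  have hQ : (0:ℝ) ≤ ∫ x, F2 x ^ (2:ℝ) ∂μ :=
    integral_nonneg fun x => Real.rpow_nonneg (abs_nonneg _) _
  have v2 : ∫ u in a..b, u ^ (-(r+1)) = (b ^ (-r) - a ^ (-r)) / (-r) := by
    rw [integral_rpow (Or.inr ⟨by intro h; apply hr.ne'; linarith,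
      by rw [Set.uIcc_of_le hab]; exact fun h => absurd h.1 (not_le.mpr ha)⟩)]
    norm_num
  have hPle : ∫ x, F1 x ^ (2:ℝ) ∂μ ≤ a ^ (-r) / r := by
    rw [e2, v2, show (b ^ (-r) - a ^ (-r)) / (-r) = (a ^ (-r) - b ^ (-r)) / r by ring]
    have hb0 : (0:ℝ) ≤ b ^ (-r) := Real.rpow_nonneg (ha0.trans hab) _
    exact (div_le_div_iff_of_pos_right hr).mpr (by linarith)
  have hcontD : ContinuousOn (fun u : ℝ => u ^ (r+1) * (f' u)^2) (Set.Icc 0 1) :=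
    (contOn_rpow _ (by linarith)).mul (hcont.pow 2)
  have hint : ∀ c d : ℝ, 0 ≤ c → c ≤ d → d ≤ 1 →
      IntervalIntegrable (fun u : ℝ => u ^ (r+1) * (f' u)^2) volume c d := fun c d hc hcd hd =>
    (hcontD.mono (by rw [Set.uIcc_of_le hcd]; exact Set.Icc_subset_Icc hc hd)).intervalIntegrable
  have hQle : ∫ x, F2 x ^ (2:ℝ) ∂μ ≤ ∫ x in (0:ℝ)..1, x ^ (r+1) * (f' x)^2 := by
    rw [e3]
    have hb0 : (0:ℝ) ≤ b := ha0.trans hab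
    have s1 : (∫ u in (0:ℝ)..a, u ^ (r+1) * (f' u)^2) + ∫ u in a..b, u ^ (r+1) * (f' u)^2
        = ∫ u in (0:ℝ)..b, u ^ (r+1) * (f' u)^2 :=
      integral_add_adjacent_intervals (hint 0 a le_rfl ha0 (hab.trans hb1)) (hint a b ha0 hab hb1)
    have s2 : (∫ u in (0:ℝ)..b, u ^ (r+1) * (f' u)^2) + ∫ u in b..1, u ^ (r+1) * (f' u)^2
        = ∫ u in (0:ℝ)..1, u ^ (r+1) * (f' u)^2 :=
      integral_add_adjacent_intervals (hint 0 b le_rfl hb0 hb1) (hint b 1 hb0 hb1 le_rfl)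
    have n1 : (0:ℝ) ≤ ∫ u in (0:ℝ)..a, u ^ (r+1) * (f' u)^2 :=
      intervalIntegral.integral_nonneg ha0
        (fun u hu => mul_nonneg (Real.rpow_nonneg hu.1 _) (sq_nonneg _))
    have n2 : (0:ℝ) ≤ ∫ u in b..1, u ^ (r+1) * (f' u)^2 :=
      intervalIntegral.integral_nonneg hb1
        (fun u hu => mul_nonneg (Real.rpow_nonneg (hb0.trans hu.1) _) (sq_nonneg _))
    linarith
  have habsR : |∫ u in a..b, f' u| ≤ ∫ u in a..b, |f' u| :=
    intervalIntegral.abs_integral_le_integral_abs hab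
  have hS : (∫ u in a..b, |f' u|) ^ 2 ≤ (∫ x, F1 x ^ (2:ℝ) ∂μ) * (∫ x, F2 x ^ (2:ℝ) ∂μ) := by
    rw [← e1]
    calc (∫ x, F1 x * F2 x ∂μ) ^ 2
        ≤ ((∫ x, F1 x ^ (2:ℝ) ∂μ) ^ ((1:ℝ)/2) * (∫ x, F2 x ^ (2:ℝ) ∂μ) ^ ((1:ℝ)/2)) ^ 2 :=
          pow_le_pow_left₀ (integral_nonneg fun x => mul_nonneg (abs_nonneg _) (abs_nonneg _))
            hHold 2
      _ = _ := by rw [mul_pow, sq_half_rpow hP, sq_half_rpow hQ]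
  have hra : (0:ℝ) ≤ a ^ (-r) / r := div_nonneg (Real.rpow_nonneg ha0 _) hr.le
  calc (∫ u in a..b, f' u) ^ 2 = |∫ u in a..b, f' u| ^ 2 := (sq_abs _).symm
    _ ≤ (∫ u in a..b, |f' u|) ^ 2 := pow_le_pow_left₀ (abs_nonneg _) habsR 2
    _ ≤ (∫ x, F1 x ^ (2:ℝ) ∂μ) * (∫ x, F2 x ^ (2:ℝ) ∂μ) := hS
    _ ≤ (a ^ (-r) / r) * ∫ x in (0:ℝ)..1, x ^ (r+1) * (f' x)^2 :=
        mul_le_mul hPle hQle hQ hra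

end WeightedSobolevAux

theorem stmt_4 (r : ℝ) (hr : 0 < r) :
    ∃ C : ℝ, 0 < C ∧ ∀ (f f' : ℝ → ℝ),
      (∀ x ∈ Set.Icc (0:ℝ) 1, HasDerivWithinAt f (f' x) (Set.Icc 0 1) x) →
      ContinuousOn f' (Set.Icc (0:ℝ) 1) →
      ∀ s ∈ Set.Icc (0:ℝ) 1,
        s ^ r * (f s)^2 ≤
          C * ((∫ x in (0:ℝ)..1, x ^ r * (f x)^2) + ∫ x in (0:ℝ)..1, x ^ (r + 1) * (f' x)^2) := by
  have h2r : (1:ℝ) ≤ 2 ^ r := by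
    rw [show (1:ℝ) = (2:ℝ) ^ (0:ℝ) by rw [Real.rpow_zero]]
    exact Real.rpow_le_rpow_of_exponent_le one_le_two hr.le
  have h2rpos : (0:ℝ) < 2 ^ r := lt_of_lt_of_le one_pos h2r
  refine ⟨4 * 2 ^ r + 2 * 2 ^ r / r, by positivity, ?_⟩
  intro f f' hderiv hcont s hs
  have hfc : ContinuousOn f (Set.Icc 0 1) := fun x hx => (hderiv x hx).continuousWithinAt
  set A := ∫ x in (0:ℝ)..1, x ^ r * (f x)^2 with hAdef
  set D := ∫ x in (0:ℝ)..1, x ^ (r+1) * (f' x)^2 with hDdef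
  have hA : 0 ≤ A := intervalIntegral.integral_nonneg zero_le_one
    (fun u hu => mul_nonneg (Real.rpow_nonneg hu.1 _) (sq_nonneg _))
  have hD : 0 ≤ D := intervalIntegral.integral_nonneg zero_le_one
    (fun u hu => mul_nonneg (Real.rpow_nonneg hu.1 _) (sq_nonneg _))
  have ftc : ∀ a b : ℝ, 0 ≤ a → a ≤ b → b ≤ 1 → ∫ u in a..b, f' u = f b - f a := by
    intro a b ha hab hb1
    refine intervalIntegral.integral_eq_sub_of_hasDeriv_right_of_le hab
      (hfc.mono (Set.Icc_subset_Icc ha hb1)) (fun x hx => ?_)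
      ((hcont.mono (by rw [Set.uIcc_of_le hab]; exact Set.Icc_subset_Icc ha hb1)).intervalIntegrable)
    have hx01 : x ∈ Set.Ioo (0:ℝ) 1 := ⟨lt_of_le_of_lt ha hx.1, lt_of_lt_of_le hx.2 hb1⟩
    exact ((hderiv x (Set.Ioo_subset_Icc_self hx01)).hasDerivAt
      (Icc_mem_nhds hx01.1 hx01.2)).hasDerivWithinAt
  -- pointwise claim
  have claim : ∀ t ∈ Set.Icc (1/2:ℝ) 1,
      s ^ r * (f s)^2 ≤ 2 * 2 ^ r * (t ^ r * (f t)^2) + 2 * 2 ^ r / r * D := by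
    intro t ht
    have ht0 : (0:ℝ) < t := lt_of_lt_of_le (by norm_num) ht.1
    have htr0 : (0:ℝ) ≤ t ^ r := Real.rpow_nonneg ht0.le _
    have htf0 : (0:ℝ) ≤ t ^ r * (f t)^2 := mul_nonneg htr0 (sq_nonneg _)
    rcases eq_or_lt_of_le hs.1 with hs0 | hs0
    · rw [← hs0, Real.zero_rpow hr.ne', zero_mul]
      positivity
    have hsr0 : (0:ℝ) ≤ s ^ r := Real.rpow_nonneg hs0.le _
    have hsr1 : s ^ r ≤ 2 ^ r * t ^ r := by
      rw [← Real.mul_rpow (by norm_num) ht0.le]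
      exact Real.rpow_le_rpow hs0.le (by nlinarith [hs.2, ht.1]) hr.le
    have hB : s ^ r * (f t - f s)^2 ≤ 2 ^ r / r * D := by
      rcases le_total s t with hst | hts
      · have hcs := cs_aux r hr f' hcont hs0 hst ht.2
        rw [ftc s t hs.1 hst ht.2] at hcs
        have h2 : s ^ r * s ^ (-r) = 1 := by
          rw [← Real.rpow_add hs0]; norm_num
        have hDr : 0 ≤ D / r := div_nonneg hD hr.le
        calc s ^ r * (f t - f s)^2
            ≤ s ^ r * ((s ^ (-r) / r) * D) := mul_le_mul_of_nonneg_left hcs hsr0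
          _ = (s ^ r * s ^ (-r)) * (D / r) := by ring
          _ = 1 * (D / r) := by rw [h2]
          _ ≤ 2 ^ r * (D / r) := mul_le_mul_of_nonneg_right h2r hDr
          _ = 2 ^ r / r * D := by ring
      · have hcs := cs_aux r hr f' hcont ht0 hts hs.2
        rw [ftc t s ht0.le hts hs.2] at hcs
        have hcs' : (f t - f s)^2 ≤ t ^ (-r) / r * D := by
          rw [show (f t - f s)^2 = (f s - f t)^2 by ring]; exact hcs
        have hs1 : s ^ r ≤ 1 := Real.rpow_le_one hs0.le hs.2 hr.le
        have ht2 : t ^ (-r) ≤ 2 ^ r := by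
          have h1 : t ^ (-r) ≤ (1/2:ℝ) ^ (-r) :=
            Real.rpow_le_rpow_of_nonpos (by norm_num) ht.1 (by linarith)
          have h2 : (1/2:ℝ) ^ (-r) = 2 ^ r := by
            rw [one_div, Real.inv_rpow two_pos.le, Real.rpow_neg two_pos.le, inv_inv]
          linarith
        calc s ^ r * (f t - f s)^2
            ≤ 1 * (t ^ (-r) / r * D) :=
              mul_le_mul hs1 hcs' (sq_nonneg _)  zero_le_one
          _ = t ^ (-r) * (D / r) := by ring
          _ ≤ 2 ^ r * (D / r) :=
              mul_le_mul_of_nonneg_right ht2 (div_nonneg hD hr.le)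
          _ = 2 ^ r / r * D := by ring
    have hsq : (f s)^2 ≤ 2 * (f t)^2 + 2 * (f t - f s)^2 := by
      nlinarith [sq_nonneg (2 * f t - f s)]
    calc s ^ r * (f s)^2
        ≤ s ^ r * (2 * (f t)^2 + 2 * (f t - f s)^2) := mul_le_mul_of_nonneg_left hsq hsr0
      _ = 2 * (s ^ r * (f t)^2) + 2 * (s ^ r * (f t - f s)^2) := by ring
      _ ≤ 2 * (2 ^ r * t ^ r * (f t)^2) + 2 * (2 ^ r / r * D) := by
          have g1 : s ^ r * (f t)^2 ≤ 2 ^ r * t ^ r * (f t)^2 :=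
            mul_le_mul_of_nonneg_right hsr1 (sq_nonneg _)
          linarith
      _ = 2 * 2 ^ r * (t ^ r * (f t)^2) + 2 * 2 ^ r / r * D := by ring
  -- averaging
  have hcontA' : ContinuousOn (fun x : ℝ => x ^ r * (f x)^2) (Set.Icc 0 1) :=
    (contOn_rpow r hr).mul (hfc.pow 2)
  have hintA' : ∀ c d : ℝ, 0 ≤ c → c ≤ d → d ≤ 1 →
      IntervalIntegrable (fun x : ℝ => x ^ r * (f x)^2) volume c d := fun c d hc hcd hd =>
    (hcontA'.mono (by rw [Set.uIcc_of_le hcd]; exact Set.Icc_subset_Icc hc hd)).intervalIntegrable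
  have half1 : (1/2:ℝ) ≤ 1 := by norm_num
  have mono := intervalIntegral.integral_mono_on half1 intervalIntegrable_const
    (((hintA' (1/2) 1 (by norm_num) half1 le_rfl).const_mul (2 * 2 ^ r)).add
      intervalIntegrable_const) claim
  rw [intervalIntegral.integral_const,
    intervalIntegral.integral_add ((hintA' (1/2) 1 (by norm_num) half1 le_rfl).const_mul _)
      intervalIntegrable_const,
    intervalIntegral.integral_const_mul, intervalIntegral.integral_const] at mono
  have hI : ∫ t in (1/2:ℝ)..1, t ^ r * (f t)^2 ≤ A := by
    have s1 : (∫ t in (0:ℝ)..(1/2:ℝ), t ^ r * (f t)^2) + ∫ t in (1/2:ℝ)..1, t ^ r * (f t)^2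
        = A :=
      integral_add_adjacent_intervals (hintA' 0 (1/2) le_rfl (by norm_num) half1)
        (hintA' (1/2) 1 (by norm_num) half1 le_rfl)
    have n1 : (0:ℝ) ≤ ∫ t in (0:ℝ)..(1/2:ℝ), t ^ r * (f t)^2 :=
      intervalIntegral.integral_nonneg (by norm_num)
        (fun u hu => mul_nonneg (Real.rpow_nonneg hu.1 _) (sq_nonneg _))
    linarith
  have hI0 : (0:ℝ) ≤ ∫ t in (1/2:ℝ)..1, t ^ r * (f t)^2 :=
    intervalIntegral.integral_nonneg half1
      (fun u hu => mul_nonneg (Real.rpow_nonneg (le_trans (by norm_num) hu.1) _) (sq_nonneg _))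
  simp only [smul_eq_mul] at mono
  have key : s ^ r * (f s)^2 ≤ 4 * 2 ^ r * A + 2 * 2 ^ r / r * D := by nlinarith [mono, hI, hI0]
  have a1 : 0 ≤ 2 * 2 ^ r / r * A := by positivity
  have a2 : 0 ≤ 4 * 2 ^ r * D := by positivity
  nlinarith [key]
end

section
/- The function f(s) = arcsinh(ln s) on (0,1], extended by f(1) = 0, satisfies ∫₀¹ f(s)² ds < ∞ and ∫₀¹ s f'(s)² ds < ∞, while ∫₀¹ f(s)²/s ds = ∞ and sup_{s∈(0,1]} |f(s)| = ∞. -/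
open MeasureTheory Real Set

/-- |arsinh x| ≤ |x| -/
lemma abs_arsinh_le (x : ℝ) : |Real.arsinh x| ≤ |x| := by
  rcases le_total 0 x with hx | hx
  · rw [abs_of_nonneg (Real.arsinh_nonneg_iff.2 hx), abs_of_nonneg hx]
    have := Real.self_le_sinh_iff.2 hx
    calc Real.arsinh x ≤ Real.arsinh (Real.sinh x) := Real.arsinh_le_arsinh.2 this
      _ = x := Real.arsinh_sinh x
  · rw [abs_of_nonpos (Real.arsinh_nonpos_iff.2 hx), abs_of_nonpos hx]
    have hx' : 0 ≤ -x := by linarith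
    have := Real.self_le_sinh_iff.2 hx'
    have : Real.arsinh (-x) ≤ -x := by
      calc Real.arsinh (-x) ≤ Real.arsinh (Real.sinh (-x)) := Real.arsinh_le_arsinh.2 this
        _ = -x := Real.arsinh_sinh _
    rw [Real.arsinh_neg] at this; linarith

lemma sq_log_le (s : ℝ) (hs : 0 < s) (hs1 : s ≤ 1) :
    (Real.log s) ^ 2 ≤ 16 * s ^ (-(1/2) : ℝ) := by
  have ht : 0 ≤ -Real.log s := by
    have := Real.log_nonpos hs.le hs1; linarith
  set t : ℝ := -Real.log s with htdef
  have hrw : s ^ (-(1/2) : ℝ) = Real.exp (t / 2) := by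
    rw [Real.rpow_def_of_pos hs]
    ring_nf
    rw [htdef]; ring_nf
  rw [hrw]
  have h1 : 1 + t / 4 ≤ Real.exp (t / 4) := by linarith [Real.add_one_le_exp (t / 4)]
  have h2 : Real.exp (t / 2) = Real.exp (t / 4) * Real.exp (t / 4) := by
    rw [← Real.exp_add]; ring_nf
  have : Real.log s ^ 2 = t ^ 2 := by rw [htdef]; ring
  nlinarith [Real.exp_pos (t / 4)]

lemma hasDerivAt_f {s : ℝ} (hs : 0 < s) :
    HasDerivAt (fun t : ℝ => Real.arsinh (Real.log t))
      ((Real.sqrt (1 + (Real.log s) ^ 2))⁻¹ * s⁻¹) s :=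
  (Real.hasDerivAt_arsinh (Real.log s)).comp s (Real.hasDerivAt_log hs.ne')

lemma deriv_f {s : ℝ} (hs : 0 < s) :
    deriv (fun t : ℝ => Real.arsinh (Real.log t)) s
      = (Real.sqrt (1 + (Real.log s) ^ 2))⁻¹ * s⁻¹ :=
  (hasDerivAt_f hs).deriv

theorem stmt_5 :
    MeasureTheory.IntegrableOn (fun s : ℝ => (Real.arsinh (Real.log s))^2) (Set.Ioc 0 1) ∧
    MeasureTheory.IntegrableOn
      (fun s : ℝ => s * (deriv (fun t : ℝ => Real.arsinh (Real.log t)) s)^2) (Set.Ioc 0 1) ∧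
    ¬ MeasureTheory.IntegrableOn (fun s : ℝ => (Real.arsinh (Real.log s))^2 / s) (Set.Ioc 0 1) ∧
    ¬ BddAbove ((fun s : ℝ => |Real.arsinh (Real.log s)|) '' Set.Ioc 0 1) := by
  refine ⟨?_, ?_, ?_, ?_⟩
  · -- Part 1: dominate by 16 s^(-1/2)
    have hmaj : IntegrableOn (fun s : ℝ => 16 * s ^ (-(1/2) : ℝ)) (Set.Ioc 0 1) := by
      apply Integrable.const_mul
      have : IntegrableOn (fun s : ℝ => s ^ (-(1/2) : ℝ)) (Set.Ioo 0 1) :=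
        (intervalIntegral.integrableOn_Ioo_rpow_iff one_pos).2 (by norm_num)
      exact (integrableOn_Ioc_iff_integrableOn_Ioo (by simp)).2 this
    refine Integrable.mono' hmaj ?_ ?_
    · apply ContinuousOn.aestronglyMeasurable ?_ measurableSet_Ioc
      intro x hx
      exact (Real.continuous_arsinh.continuousAt.comp
        (Real.continuousAt_log hx.1.ne')).continuousWithinAt.pow 2
    · filter_upwards [ae_restrict_mem measurableSet_Ioc] with x hx
      have h1 : |Real.arsinh (Real.log x)| ≤ |Real.log x| := abs_arsinh_le _
      have h2 : (Real.log x) ^ 2 ≤ 16 * x ^ (-(1/2) : ℝ) := sq_log_le x hx.1 hx.2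
      have : ‖(Real.arsinh (Real.log x)) ^ 2‖ = |Real.arsinh (Real.log x)| ^ 2 := by
        rw [Real.norm_eq_abs, ← abs_pow, abs_of_nonneg (sq_nonneg _)]
      rw [this]
      calc |Real.arsinh (Real.log x)| ^ 2 ≤ |Real.log x| ^ 2 := by
            exact pow_le_pow_left₀ (abs_nonneg _) h1 2
        _ = (Real.log x) ^ 2 := sq_abs _
        _ ≤ 16 * x ^ (-(1/2) : ℝ) := h2
  · -- Part 2: g(s) = arctan (log s) extended by -π/2, its derivative is the integrand
    set g : ℝ → ℝ := fun s => if s ≤ 0 then -(Real.pi / 2) else Real.arctan (Real.log s) with hg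
    apply intervalIntegral.integrableOn_deriv_of_nonneg (g := g)
    · -- continuity on Icc 0 1
      intro x hx
      rcases eq_or_lt_of_le hx.1 with h0 | h0
      · -- x = 0
        subst h0
        have h1 : Set.Icc (0:ℝ) 1 ⊆ {0} ∪ Set.Ioi 0 := by
          intro y hy
          rcases eq_or_lt_of_le hy.1 with h | h
          · exact Or.inl (by simp [← h])
          · exact Or.inr h
        rw [ContinuousWithinAt]
        have hgl : g 0 = -(Real.pi / 2) := by simp [hg]
        rw [hgl]
        apply Filter.Tendsto.mono_left _ (nhdsWithin_mono _ h1)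
        rw [nhdsWithin_union]
        rw [Filter.tendsto_sup]
        constructor
        · simp only [nhdsWithin_singleton]
          rw [Filter.tendsto_pure_left]
          intro s hs
          exact mem_of_mem_nhds (by simpa [hgl] using hs)
        · have h2 : Filter.Tendsto g (nhdsWithin 0 (Set.Ioi 0)) (nhdsWithin (-(Real.pi/2)) (Set.Ioi (-(Real.pi/2)))) := by
            apply Filter.Tendsto.congr' _ (Real.tendsto_arctan_atBot.comp Real.tendsto_log_nhdsGT_zero)
            filter_upwards [self_mem_nhdsWithin] with y hy
            simp [hg, not_le.2 (Set.mem_Ioi.1 hy)]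
          exact h2.mono_right nhdsWithin_le_nhds
      · -- x > 0
        apply ContinuousAt.continuousWithinAt
        have heq : ∀ᶠ y in nhds x, g y = Real.arctan (Real.log y) := by
          filter_upwards [eventually_gt_nhds h0] with y hy
          simp [hg, not_le.2 hy]
        have hc : ContinuousAt (fun t => Real.arctan (Real.log t)) x :=
          Real.continuous_arctan.continuousAt.comp (Real.continuousAt_log h0.ne')
        exact hc.congr (heq.mono fun y h => h.symm)
    · -- derivative
      intro x hx
      have hx0 : (0:ℝ) < x := hx.1
      have hd : HasDerivAt g ((1 + (Real.log x) ^ 2)⁻¹ * x⁻¹) x := by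
        have : HasDerivAt (fun t => Real.arctan (Real.log t)) ((1 + (Real.log x) ^ 2)⁻¹ * x⁻¹) x :=
          (Real.hasDerivAt_arctan' (Real.log x)).comp x (Real.hasDerivAt_log hx0.ne')
        apply this.congr_of_eventuallyEq
        filter_upwards [eventually_gt_nhds hx0] with y hy
        simp [hg, not_le.2 hy]
      convert hd using 1
      rw [deriv_f hx0]
      have h1 : (0:ℝ) < 1 + (Real.log x) ^ 2 := by positivity
      have h2 : (Real.sqrt (1 + (Real.log x) ^ 2)) ^ 2 = 1 + (Real.log x) ^ 2 :=
        Real.sq_sqrt h1.le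
      field_simp
      nlinarith [Real.sqrt_nonneg (1 + (Real.log x)^2), Real.sqrt_pos.2 h1]
    · intro x hx
      have hx0 : (0:ℝ) < x := hx.1
      positivity
  · -- Part 3: not integrable
    intro hInt
    set c : ℝ := Real.exp (-2) with hc
    have hc0 : 0 < c := Real.exp_pos _
    have hc1 : c < 1 := by
      rw [hc]; calc Real.exp (-2) < Real.exp 0 := Real.exp_lt_exp.2 (by norm_num)
        _ = 1 := Real.exp_zero
    have hsub : Set.Ioo (0:ℝ) c ⊆ Set.Ioc 0 1 := fun x hx =>
      ⟨hx.1, le_of_lt (hx.2.trans hc1)⟩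
    have hInt' : IntegrableOn (fun s : ℝ => (Real.arsinh (Real.log s))^2 / s) (Set.Ioo 0 c) :=
      hInt.mono_set hsub
    have harsinh2 : (1:ℝ) ≤ Real.arsinh 2 := by
      have hs1 : Real.sinh 1 ≤ 2 := by
        rw [Real.sinh_eq]
        have h1 : Real.exp 1 < 2.7182818286 := Real.exp_one_lt_d9
        have h2 : 0 < Real.exp (-1) := Real.exp_pos _
        nlinarith
      calc (1:ℝ) = Real.arsinh (Real.sinh 1) := (Real.arsinh_sinh 1).symm
        _ ≤ Real.arsinh 2 := Real.arsinh_le_arsinh.2 hs1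
    have hbound : ∀ x ∈ Set.Ioo (0:ℝ) c, ‖x ^ (-1:ℝ)‖ ≤ (Real.arsinh (Real.log x))^2 / x := by
      intro x hx
      have hx0 : (0:ℝ) < x := hx.1
      have hlog : Real.log x ≤ -2 := by
        have := Real.log_le_log hx0 hx.2.le
        rw [hc, Real.log_exp] at this
        linarith [Real.log_lt_log hx0 hx.2, (by rw [hc, Real.log_exp] : Real.log c = -2)]
      have h1 : Real.arsinh (Real.log x) ≤ -1 := by
        have : Real.arsinh (Real.log x) ≤ Real.arsinh (-2) := Real.arsinh_le_arsinh.2 hlog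
        rw [show (-2:ℝ) = -(2:ℝ) by norm_num, Real.arsinh_neg] at this
        linarith
      have h2 : 1 ≤ (Real.arsinh (Real.log x))^2 := by nlinarith
      rw [Real.norm_eq_abs, Real.rpow_neg_one, abs_of_nonneg (inv_nonneg.2 hx0.le)]
      rw [div_eq_mul_inv]
      calc x⁻¹ = 1 * x⁻¹ := (one_mul _).symm
        _ ≤ (Real.arsinh (Real.log x))^2 * x⁻¹ := by
            apply mul_le_mul_of_nonneg_right h2 (inv_nonneg.2 hx0.le)
    have hinv : IntegrableOn (fun x : ℝ => x ^ (-1:ℝ)) (Set.Ioo 0 c) := by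
      apply Integrable.mono' hInt'
      · apply ContinuousOn.aestronglyMeasurable ?_ measurableSet_Ioo
        intro x hx
        exact (Real.continuousAt_rpow_const x (-1) (Or.inl hx.1.ne')).continuousWithinAt
      · filter_upwards [ae_restrict_mem measurableSet_Ioo] with x hx
        exact hbound x hx
    rw [intervalIntegral.integrableOn_Ioo_rpow_iff hc0] at hinv
    norm_num at hinv
  · -- Part 4: unbounded
    rintro ⟨M, hM⟩
    have hM0 : 0 ≤ M := by
      have h1 : (1:ℝ) ∈ Set.Ioc (0:ℝ) 1 := ⟨one_pos, le_refl _⟩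
      have := hM (Set.mem_image_of_mem _ h1)
      simpa using this
    set s : ℝ := Real.exp (-(Real.sinh (M + 1))) with hs
    have hs0 : 0 < s := Real.exp_pos _
    have hsinh : 0 ≤ Real.sinh (M + 1) := by
      rw [← Real.sinh_zero]
      exact Real.sinh_le_sinh.2 (by linarith)
    have hs1 : s ≤ 1 := by
      have : s ≤ Real.exp 0 := Real.exp_le_exp.2 (by linarith)
      simpa using this
    have hval : |Real.arsinh (Real.log s)| = M + 1 := by
      rw [hs, Real.log_exp, ← Real.sinh_neg, Real.arsinh_sinh, abs_neg,
        abs_of_nonneg (by linarith)]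
    have := hM (Set.mem_image_of_mem _ (⟨hs0, hs1⟩ : s ∈ Set.Ioc (0:ℝ) 1))
    rw [hval] at this
    linarith
end

section
/- For all natural numbers n, k with 1 ≤ k ≤ n and all real p, q > 0, the quantity s_k^{(p)} = Γ(k+p)/(n^p Γ(k)) satisfies s_k^{(p)} ≤ s_k^{(p+q)}/s_k^{(q)} ≤ (Γ(p+q+1)/(Γ(p+1)Γ(q+1))) · s_k^{(p)}. -/
open Real

lemma aux1 {x p q : ℝ} (hx : 0 < x) (hp : 0 < p) (hq : 0 < q) :
    Gamma (x + p) * Gamma (x + q) ≤ Gamma x * Gamma (x + p + q) := by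
  have hpq : 0 < p + q := by linarith
  have ha0 : (0:ℝ) ≤ q / (p + q) := by positivity
  have hb0 : (0:ℝ) ≤ p / (p + q) := by positivity
  have hab : q / (p + q) + p / (p + q) = 1 := by field_simp; ring
  have hx1 : x ∈ Set.Ioi (0:ℝ) := hx
  have hx2 : x + p + q ∈ Set.Ioi (0:ℝ) := by simp; linarith
  have h1 := Real.convexOn_log_Gamma.2 hx1 hx2 ha0 hb0 hab
  have h2 := Real.convexOn_log_Gamma.2 hx1 hx2 hb0 ha0 (by linarith)
  have e1 : (q / (p + q)) • x + (p / (p + q)) • (x + p + q) = x + p := by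
    simp only [smul_eq_mul]; field_simp; ring
  have e2 : (p / (p + q)) • x + (q / (p + q)) • (x + p + q) = x + q := by
    simp only [smul_eq_mul]; field_simp; ring
  rw [e1] at h1; rw [e2] at h2
  simp only [Function.comp_apply, smul_eq_mul] at h1 h2
  have hsum : q / (p + q) * log (Gamma x) + p / (p + q) * log (Gamma (x + p + q)) +
      (p / (p + q) * log (Gamma x) + q / (p + q) * log (Gamma (x + p + q))) =
      log (Gamma x) + log (Gamma (x + p + q)) := by
    linear_combination log (Gamma x) * hab + log (Gamma (x + p + q)) * hab
  have key : log (Gamma (x + p)) + log (Gamma (x + q)) ≤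
      log (Gamma x) + log (Gamma (x + p + q)) := by linarith
  have g1 : 0 < Gamma (x + p) := Gamma_pos_of_pos (by linarith)
  have g2 : 0 < Gamma (x + q) := Gamma_pos_of_pos (by linarith)
  have g3 : 0 < Gamma x := Gamma_pos_of_pos hx
  have g4 : 0 < Gamma (x + p + q) := Gamma_pos_of_pos (by linarith)
  have := Real.exp_le_exp.2 key
  rwa [Real.exp_add, Real.exp_add, Real.exp_log g1, Real.exp_log g2,
    Real.exp_log g3, Real.exp_log g4] at this

lemma aux2 {p q : ℝ} (hp : 0 < p) (hq : 0 < q) : ∀ k : ℕ, 1 ≤ k →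
    Gamma ((k:ℝ) + p + q) * Gamma (k:ℝ) * (Gamma (1 + p) * Gamma (1 + q)) ≤
    Gamma ((k:ℝ) + p) * Gamma ((k:ℝ) + q) * Gamma (1 + p + q) := by
  intro k hk
  induction k with
  | zero => omega
  | succ m ih =>
    rcases Nat.eq_or_lt_of_le hk with h1 | h1
    · have : (m:ℕ) = 0 := by omega
      subst this
      norm_num
      have g1 : 0 < Gamma (1 + p) := Gamma_pos_of_pos (by linarith)
      nlinarith [Gamma_pos_of_pos (show (0:ℝ) < 1 + p + q by linarith),
        Gamma_pos_of_pos (show (0:ℝ) < 1 + q by linarith), Real.Gamma_one]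
    · have hm : 1 ≤ m := by omega
      have ih := ih hm
      set K := (m:ℝ) with hK
      have hK1 : (1:ℝ) ≤ K := Nat.one_le_cast.mpr hm
      have hK0 : 0 < K := by linarith
      have push : ((m+1:ℕ):ℝ) = K + 1 := by push_cast; ring
      rw [push]
      have e1 : Gamma (K + 1 + p + q) = (K + p + q) * Gamma (K + p + q) := by
        rw [show K + 1 + p + q = (K + p + q) + 1 by ring,
          Gamma_add_one (by positivity : (K + p + q) ≠ 0)]
      have e2 : Gamma (K + 1) = K * Gamma K := Gamma_add_one hK0.ne'
      have e3 : Gamma (K + 1 + p) = (K + p) * Gamma (K + p) := by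
        rw [show K + 1 + p = (K + p) + 1 by ring,
          Gamma_add_one (by positivity : (K + p) ≠ 0)]
      have e4 : Gamma (K + 1 + q) = (K + q) * Gamma (K + q) := by
        rw [show K + 1 + q = (K + q) + 1 by ring,
          Gamma_add_one (by positivity : (K + q) ≠ 0)]
      rw [e1, e2, e3, e4]
      have hstep : (K + p + q) * K ≤ (K + p) * (K + q) := by nlinarith
      have g1 : 0 < Gamma (K + p) := Gamma_pos_of_pos (by linarith)
      have g2 : 0 < Gamma (K + q) := Gamma_pos_of_pos (by linarith)
      have g3 : 0 < Gamma (1 + p + q) := Gamma_pos_of_pos (by linarith)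
      have g4 : 0 < Gamma (K + p + q) := Gamma_pos_of_pos (by linarith)
      have g5 : 0 < Gamma K := Gamma_pos_of_pos hK0
      have g6 : 0 < Gamma (1 + p) := Gamma_pos_of_pos (by linarith)
      have g7 : 0 < Gamma (1 + q) := Gamma_pos_of_pos (by linarith)
      calc (K + p + q) * Gamma (K + p + q) * (K * Gamma K) * (Gamma (1 + p) * Gamma (1 + q))
          = ((K + p + q) * K) * (Gamma (K + p + q) * Gamma K * (Gamma (1 + p) * Gamma (1 + q))) := by ring
        _ ≤ ((K + p) * (K + q)) * (Gamma (K + p) * Gamma (K + q) * Gamma (1 + p + q)) := by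
            apply mul_le_mul hstep ih (by positivity) (by positivity)
        _ = (K + p) * Gamma (K + p) * ((K + q) * Gamma (K + q)) * Gamma (1 + p + q) := by ring

theorem stmt_6 (n k : ℕ) (hk : 1 ≤ k) (hkn : k ≤ n) (p q : ℝ) (hp : 0 < p) (hq : 0 < q) :
    let s : ℝ → ℝ := fun r => Real.Gamma ((k : ℝ) + r) / ((n : ℝ) ^ r * Real.Gamma k)
    s p ≤ s (p + q) / s q ∧
      s (p + q) / s q ≤
        (Real.Gamma (p + q + 1) / (Real.Gamma (p + 1) * Real.Gamma (q + 1))) * s p := by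
  intro s
  have hs : ∀ r, s r = Gamma ((k:ℝ) + r) / ((n:ℝ) ^ r * Gamma (k:ℝ)) := fun r => rfl
  rw [hs, hs, hs]
  have hn : 0 < (n:ℝ) := by exact_mod_cast Nat.lt_of_lt_of_le (by omega) hkn
  have hK0 : 0 < (k:ℝ) := by exact_mod_cast hk
  have g0 : 0 < Gamma (k:ℝ) := Gamma_pos_of_pos hK0
  have g1 : 0 < Gamma ((k:ℝ) + p) := Gamma_pos_of_pos (by linarith)
  have g2 : 0 < Gamma ((k:ℝ) + q) := Gamma_pos_of_pos (by linarith)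
  have g3 : 0 < Gamma ((k:ℝ) + p + q) := Gamma_pos_of_pos (by linarith)
  have np : (0:ℝ) < (n:ℝ) ^ p := rpow_pos_of_pos hn p
  have nq : (0:ℝ) < (n:ℝ) ^ q := rpow_pos_of_pos hn q
  have hsq : Gamma ((k:ℝ) + (p + q)) / ((n:ℝ) ^ (p + q) * Gamma (k:ℝ)) /
      (Gamma ((k:ℝ) + q) / ((n:ℝ) ^ q * Gamma (k:ℝ))) =
      Gamma ((k:ℝ) + p + q) / ((n:ℝ) ^ p * Gamma ((k:ℝ) + q)) := by
    rw [Real.rpow_add hn, show (k:ℝ) + (p + q) = (k:ℝ) + p + q by ring]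
    field_simp
  rw [hsq]
  have h1 := aux1 hK0 hp hq
  have h2 := aux2 hp hq k hk
  constructor
  · rw [div_le_div_iff₀ (by positivity) (by positivity)]
    calc Gamma ((k:ℝ) + p) * ((n:ℝ) ^ p * Gamma ((k:ℝ) + q))
        = (n:ℝ) ^ p * (Gamma ((k:ℝ) + p) * Gamma ((k:ℝ) + q)) := by ring
      _ ≤ (n:ℝ) ^ p * (Gamma ((k:ℝ)) * Gamma ((k:ℝ) + p + q)) := by
          exact mul_le_mul_of_nonneg_left h1 np.le
      _ = Gamma ((k:ℝ) + p + q) * ((n:ℝ) ^ p * Gamma (k:ℝ)) := by ring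
  · have e1 : Gamma (p + 1) = Gamma (1 + p) := by rw [add_comm]
    have e2 : Gamma (q + 1) = Gamma (1 + q) := by rw [add_comm]
    have e3 : Gamma (p + q + 1) = Gamma (1 + p + q) := by rw [show p + q + 1 = 1 + p + q by ring]
    rw [e1, e2, e3]
    have g6 : 0 < Gamma (1 + p) := Gamma_pos_of_pos (by linarith)
    have g7 : 0 < Gamma (1 + q) := Gamma_pos_of_pos (by linarith)
    have g8 : 0 < Gamma (1 + p + q) := Gamma_pos_of_pos (by linarith)
    rw [div_mul_div_comm, div_le_div_iff₀ (by positivity) (by positivity)]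
    calc Gamma ((k:ℝ) + p + q) * (Gamma (1+p) * Gamma (1+q) * ((n:ℝ) ^ p * Gamma (k:ℝ)))
        = (n:ℝ) ^ p * (Gamma ((k:ℝ) + p + q) * Gamma (k:ℝ) * (Gamma (1+p) * Gamma (1+q))) := by ring
      _ ≤ (n:ℝ) ^ p * (Gamma ((k:ℝ) + p) * Gamma ((k:ℝ) + q) * Gamma (1+p+q)) := by
          exact mul_le_mul_of_nonneg_left h2 np.le
      _ = Gamma (1+p+q) * Gamma ((k:ℝ)+p) * ((n:ℝ)^p * Gamma ((k:ℝ)+q)) := by ring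
end

section
/- Let κ : [0,1] → ℝ be continuous and nonnegative, and let G : [0,1]×[0,1] → ℝ be the Green function for the operator σ ↦ σ'' − κ(s)² σ with boundary conditions σ(0) = 0, σ'(1) = 0 (i.e., for each x, G(·,x) solves G_ss − κ² G = −δ(s−x), G(0,x)=0, G_s(1,x)=0). Then G(s,x) > 0 whenever x > 0 and 0 < s ≤ 1, and for 0 < x < 1, ∂_s G(s,x) > 0 for 0 < s < x and ∂_s G(s,x) ≤ 0 for x < s < 1. -/
open Filter

namespace Stmt9Aux

open Set

variable {κ g g' : ℝ → ℝ} {x : ℝ}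

lemma nebot_Ioo_l {c d : ℝ} (h : c < d) : (nhdsWithin d (Ioo c d)).NeBot :=
  mem_closure_iff_nhdsWithin_neBot.mp
    (by rw [closure_Ioo h.ne]; exact right_mem_Icc.mpr h.le)

lemma nebot_Ioo_r {c d : ℝ} (h : c < d) : (nhdsWithin c (Ioo c d)).NeBot :=
  mem_closure_iff_nhdsWithin_neBot.mp
    (by rw [closure_Ioo h.ne]; exact left_mem_Icc.mpr h.le)

lemma Ioo_mem_left {c : ℝ} (hx0 : 0 < x) (hc : c < x) :
    Ioo c x ∈ nhdsWithin x (Ioo 0 x) :=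
  mem_nhdsWithin.mpr ⟨Ioi c, isOpen_Ioi, hc, fun t ht => ⟨ht.1, ht.2.2⟩⟩

lemma Ioo_mem_right {c : ℝ} (hx1 : x < 1) (hc : x < c) :
    Ioo x c ∈ nhdsWithin x (Ioo x 1) :=
  mem_nhdsWithin.mpr ⟨Iio c, isOpen_Iio, hc, fun t ht => ⟨ht.2.1, ht.1⟩⟩

section basic

variable (hd1 : ∀ s ∈ Set.Icc (0:ℝ) 1, s ≠ x → HasDerivWithinAt g (g' s) (Set.Icc 0 1) s)
variable (hd2 : ∀ s ∈ Set.Icc (0:ℝ) 1, s ≠ x →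
      HasDerivWithinAt g' (κ s ^ 2 * g s) (Set.Icc 0 1) s)

include hd1 in
lemma hasDerivAt_g {s : ℝ} (hs : s ∈ Ioo (0:ℝ) 1) (hsx : s ≠ x) : HasDerivAt g (g' s) s :=
  (hd1 s (Ioo_subset_Icc_self hs) hsx).hasDerivAt (Icc_mem_nhds hs.1 hs.2)

include hd2 in
lemma hasDerivAt_g' {s : ℝ} (hs : s ∈ Ioo (0:ℝ) 1) (hsx : s ≠ x) :
    HasDerivAt g' (κ s ^ 2 * g s) s :=
  (hd2 s (Ioo_subset_Icc_self hs) hsx).hasDerivAt (Icc_mem_nhds hs.1 hs.2)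

include hd1 in
lemma monoOn_g (hgc : ContinuousOn g (Icc 0 1)) {D : Set ℝ} (hD : Convex ℝ D)
    (hsub : D ⊆ Icc 0 1) (hxD : x ∉ interior D)
    (hsgn : ∀ s ∈ interior D, 0 ≤ g' s) : MonotoneOn g D := by
  have hi : interior D ⊆ Ioo (0:ℝ) 1 := by
    have := interior_mono hsub
    rwa [interior_Icc] at this
  have hder : ∀ s ∈ interior D, HasDerivAt g (g' s) s := fun s hs =>
    hasDerivAt_g hd1 (hi hs) (fun h => hxD (h ▸ hs))
  exact monotoneOn_of_deriv_nonneg hD (hgc.mono hsub)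
    (fun s hs => (hder s hs).differentiableAt.differentiableWithinAt)
    (fun s hs => by rw [(hder s hs).deriv]; exact hsgn s hs)

include hd1 in
lemma antiOn_g (hgc : ContinuousOn g (Icc 0 1)) {D : Set ℝ} (hD : Convex ℝ D)
    (hsub : D ⊆ Icc 0 1) (hxD : x ∉ interior D)
    (hsgn : ∀ s ∈ interior D, g' s ≤ 0) : AntitoneOn g D := by
  have hi : interior D ⊆ Ioo (0:ℝ) 1 := by
    have := interior_mono hsub
    rwa [interior_Icc] at this
  have hder : ∀ s ∈ interior D, HasDerivAt g (g' s) s := fun s hs =>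
    hasDerivAt_g hd1 (hi hs) (fun h => hxD (h ▸ hs))
  exact antitoneOn_of_deriv_nonpos hD (hgc.mono hsub)
    (fun s hs => (hder s hs).differentiableAt.differentiableWithinAt)
    (fun s hs => by rw [(hder s hs).deriv]; exact hsgn s hs)

include hd1 in
lemma strictMonoOn_g (hgc : ContinuousOn g (Icc 0 1)) {D : Set ℝ} (hD : Convex ℝ D)
    (hsub : D ⊆ Icc 0 1) (hxD : x ∉ interior D)
    (hsgn : ∀ s ∈ interior D, 0 < g' s) : StrictMonoOn g D := by
  have hi : interior D ⊆ Ioo (0:ℝ) 1 := by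
    have := interior_mono hsub
    rwa [interior_Icc] at this
  have hder : ∀ s ∈ interior D, HasDerivAt g (g' s) s := fun s hs =>
    hasDerivAt_g hd1 (hi hs) (fun h => hxD (h ▸ hs))
  exact strictMonoOn_of_deriv_pos hD (hgc.mono hsub)
    (fun s hs => by rw [(hder s hs).deriv]; exact hsgn s hs)

include hd1 in
lemma strictAntiOn_g (hgc : ContinuousOn g (Icc 0 1)) {D : Set ℝ} (hD : Convex ℝ D)
    (hsub : D ⊆ Icc 0 1) (hxD : x ∉ interior D)
    (hsgn : ∀ s ∈ interior D, g' s < 0) : StrictAntiOn g D := by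
  have hi : interior D ⊆ Ioo (0:ℝ) 1 := by
    have := interior_mono hsub
    rwa [interior_Icc] at this
  have hder : ∀ s ∈ interior D, HasDerivAt g (g' s) s := fun s hs =>
    hasDerivAt_g hd1 (hi hs) (fun h => hxD (h ▸ hs))
  exact strictAntiOn_of_deriv_neg hD (hgc.mono hsub)
    (fun s hs => by rw [(hder s hs).deriv]; exact hsgn s hs)

include hd2 in
lemma monoOn_g' {D : Set ℝ} (hD : Convex ℝ D)
    (hsub : D ⊆ Icc 0 1 \ {x})
    (hsgn : ∀ s ∈ interior D, 0 ≤ g s) : MonotoneOn g' D := by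
  have hsub1 : D ⊆ Icc (0:ℝ) 1 := fun u hu => (hsub hu).1
  have hi : interior D ⊆ Ioo (0:ℝ) 1 := by
    have := interior_mono hsub1
    rwa [interior_Icc] at this
  have hder : ∀ s ∈ interior D, HasDerivAt g' (κ s ^ 2 * g s) s := fun s hs =>
    hasDerivAt_g' hd2 (hi hs) (fun h => (hsub (interior_subset hs)).2 (by simp [h]))
  refine monotoneOn_of_deriv_nonneg hD ?_
    (fun s hs => (hder s hs).differentiableAt.differentiableWithinAt)
    (fun s hs => by rw [(hder s hs).deriv]; exact mul_nonneg (sq_nonneg _) (hsgn s hs))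
  intro t ht
  exact ((hd2 t (hsub1 ht) (fun h => (hsub ht).2 (by simp [h]))).continuousWithinAt).mono hsub1

include hd2 in
lemma antiOn_g' {D : Set ℝ} (hD : Convex ℝ D)
    (hsub : D ⊆ Icc 0 1 \ {x})
    (hsgn : ∀ s ∈ interior D, g s ≤ 0) : AntitoneOn g' D := by
  have hsub1 : D ⊆ Icc (0:ℝ) 1 := fun u hu => (hsub hu).1
  have hi : interior D ⊆ Ioo (0:ℝ) 1 := by
    have := interior_mono hsub1
    rwa [interior_Icc] at this
  have hder : ∀ s ∈ interior D, HasDerivAt g' (κ s ^ 2 * g s) s := fun s hs =>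
    hasDerivAt_g' hd2 (hi hs) (fun h => (hsub (interior_subset hs)).2 (by simp [h]))
  refine antitoneOn_of_deriv_nonpos hD ?_
    (fun s hs => (hder s hs).differentiableAt.differentiableWithinAt)
    (fun s hs => by
      rw [(hder s hs).deriv]
      exact mul_nonpos_iff.mpr (Or.inl ⟨sq_nonneg _, hsgn s hs⟩))
  intro t ht
  exact ((hd2 t (hsub1 ht) (fun h => (hsub ht).2 (by simp [h]))).continuousWithinAt).mono hsub1

include hd1 in
lemma contra_left (hgc : ContinuousOn g (Icc 0 1)) (hx0 : 0 < x) (hx1 : x ≤ 1) {L : ℝ}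
    (hLt : Tendsto g' (nhdsWithin x (Ioo 0 x)) (nhds L)) (hL : 0 < L)
    (hmin : ∀ s ∈ Icc (0:ℝ) 1, g x ≤ g s) : False := by
  have hev0 : ∀ᶠ t in nhdsWithin x (Ioo 0 x), 0 < g' t := hLt.eventually (eventually_gt_nhds hL)
  rw [eventually_nhdsWithin_iff] at hev0
  obtain ⟨ε, hε, hball⟩ := Metric.eventually_nhds_iff.mp hev0
  set a := max (x/2) (x - ε/2) with ha
  have hax : a < x := max_lt (by linarith) (by linarith)
  have ha0 : 0 < a := lt_of_lt_of_le (by linarith : (0:ℝ) < x/2) (le_max_left _ _)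
  have hkey : ∀ t ∈ Ioo a x, 0 < g' t := by
    intro t ht
    have h1 : x - ε/2 ≤ a := le_max_right _ _
    have h2 : a < t := ht.1
    refine hball ?_ ⟨lt_trans ha0 ht.1, ht.2⟩
    rw [Real.dist_eq, abs_of_nonpos (by linarith [ht.2.le] : t - x ≤ 0)]
    linarith
  have hsm : StrictMonoOn g (Icc a x) := strictMonoOn_g hd1 hgc (convex_Icc _ _)
    (Icc_subset_Icc ha0.le hx1) (by rw [interior_Icc]; exact fun h => lt_irrefl x h.2)
    (by rw [interior_Icc]; exact hkey)
  have hmem1 : (a + x)/2 ∈ Icc a x := ⟨by linarith, by linarith⟩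
  have h3 := hsm hmem1 (right_mem_Icc.mpr hax.le) (by linarith)
  have h4 := hmin ((a+x)/2) ⟨by linarith, by linarith⟩
  linarith

include hd1 in
lemma contra_right (hgc : ContinuousOn g (Icc 0 1)) (hx0 : 0 < x) (hx1 : x < 1) {R : ℝ}
    (hRt : Tendsto g' (nhdsWithin x (Ioo x 1)) (nhds R)) (hR : R < 0)
    (hmin : ∀ s ∈ Icc (0:ℝ) 1, g x ≤ g s) : False := by
  have hev0 : ∀ᶠ t in nhdsWithin x (Ioo x 1), g' t < 0 := hRt.eventually (eventually_lt_nhds hR)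
  rw [eventually_nhdsWithin_iff] at hev0
  obtain ⟨ε, hε, hball⟩ := Metric.eventually_nhds_iff.mp hev0
  set b := min ((x+1)/2) (x + ε/2) with hb
  have hxb : x < b := lt_min (by linarith) (by linarith)
  have hb1 : b < 1 := lt_of_le_of_lt (min_le_left _ _) (by linarith)
  have hkey : ∀ t ∈ Ioo x b, g' t < 0 := by
    intro t ht
    have h1 : b ≤ x + ε/2 := min_le_right _ _
    have h2 : t < b := ht.2
    refine hball ?_ ⟨ht.1, lt_trans ht.2 hb1⟩
    rw [Real.dist_eq, abs_of_nonneg (by linarith [ht.1.le] : (0:ℝ) ≤ t - x)]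
    linarith
  have hsm : StrictAntiOn g (Icc x b) := strictAntiOn_g hd1 hgc (convex_Icc _ _)
    (Icc_subset_Icc hx0.le hb1.le) (by rw [interior_Icc]; exact fun h => lt_irrefl x h.1)
    (by rw [interior_Icc]; exact hkey)
  have hmem1 : (x + b)/2 ∈ Icc x b := ⟨by linarith, by linarith⟩
  have h3 := hsm (left_mem_Icc.mpr hxb.le) hmem1 (by linarith)
  have h4 := hmin ((x+b)/2) ⟨by linarith, by linarith⟩
  linarith

include hd1 hd2 in
lemma right_block (hgc : ContinuousOn g (Icc 0 1)) {a e : ℝ} (ha0 : 0 ≤ a) (hae : a < e)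
    (he1 : e ≤ 1) (hax : x ∉ Ico a e) (hg'a : g' a = 0) (hga : g a < 0) :
    (∀ t ∈ Ico a e, g t < 0) ∧ (∀ t ∈ Ioo a e, g' t ≤ 0) ∧ AntitoneOn g (Icc a e) := by
  have prop : ∀ u, a < u → u ≤ e → (∀ t ∈ Ico a u, g t < 0) →
      (∀ t ∈ Ioo a u, g' t ≤ 0) ∧ AntitoneOn g (Icc a u) := by
    intro u hau hue hneg
    have hxu : x ∉ Ico a u := fun h => hax ⟨h.1, lt_of_lt_of_le h.2 hue⟩
    have hg'le : ∀ t ∈ Ioo a u, g' t ≤ 0 := by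
      intro t ht
      have hanti : AntitoneOn g' (Icc a t) := by
        refine antiOn_g' hd2 (convex_Icc _ _) ?_ ?_
        · intro s hs
          refine ⟨⟨ha0.trans hs.1, hs.2.trans (le_trans ht.2.le (hue.trans he1))⟩, ?_⟩
          intro hsx
          rw [mem_singleton_iff] at hsx
          exact hxu (hsx ▸ ⟨hs.1, lt_of_le_of_lt hs.2 ht.2⟩)
        · rw [interior_Icc]
          exact fun s hs => (hneg s ⟨hs.1.le, lt_trans hs.2 ht.2⟩).le
      have := hanti (left_mem_Icc.mpr ht.1.le) (right_mem_Icc.mpr ht.1.le) ht.1.le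
      rwa [hg'a] at this
    refine ⟨hg'le, ?_⟩
    refine antiOn_g hd1 hgc (convex_Icc _ _) (Icc_subset_Icc ha0 (hue.trans he1)) ?_ ?_
    · rw [interior_Icc]; exact fun h => hxu ⟨h.1.le, h.2⟩
    · rw [interior_Icc]; exact hg'le
  have hallneg : ∀ t ∈ Ico a e, g t < 0 := by
    by_contra hcon
    push_neg at hcon
    obtain ⟨t0, ht0, ht0pos⟩ := hcon
    set Z := {t | t ∈ Icc a e ∧ 0 ≤ g t} with hZ
    have hZne : Z.Nonempty := ⟨t0, ⟨Ico_subset_Icc_self ht0, ht0pos⟩⟩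
    have hZclosed : IsClosed Z := by
      have heq : Z = Icc a e ∩ g ⁻¹' (Ici 0) := by
        ext t; simp [hZ, mem_preimage]
      rw [heq]
      exact (hgc.mono (Icc_subset_Icc ha0 he1)).preimage_isClosed_of_isClosed
        isClosed_Icc isClosed_Ici
    have hZbdd : BddBelow Z := (bddBelow_Icc : BddBelow (Icc a e)).mono
      (fun t ht => ht.1)
    set u := sInf Z with hu
    have huZ : u ∈ Z := hZclosed.csInf_mem hZne hZbdd
    have hau : a < u := by
      rcases eq_or_lt_of_le huZ.1.1 with h | h
      · exfalso; rw [← h] at huZ; linarith [huZ.2]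
      · exact h
    have hneg : ∀ t ∈ Ico a u, g t < 0 := by
      intro t ht
      by_contra h
      push_neg at h
      have : t ∈ Z := ⟨⟨ht.1, ht.2.le.trans huZ.1.2⟩, h⟩
      exact absurd (csInf_le hZbdd this) (not_le.mpr ht.2)
    obtain ⟨_, hanti⟩ := prop u hau huZ.1.2 hneg
    have := hanti (left_mem_Icc.mpr hau.le) (right_mem_Icc.mpr hau.le) hau.le
    linarith [huZ.2]
  obtain ⟨h2, h3⟩ := prop e hae le_rfl hallneg
  exact ⟨hallneg, h2, h3⟩

include hd1 hd2 in
lemma left_block (hgc : ContinuousOn g (Icc 0 1)) {a b : ℝ} (ha0 : 0 ≤ a) (hab : a < b)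
    (hb1 : b ≤ 1) (hax : x ∉ Ioc a b) (hg'b : g' b = 0) (hgb : g b < 0) :
    (∀ t ∈ Ioc a b, g t < 0) ∧ (∀ t ∈ Ioo a b, 0 ≤ g' t) ∧ MonotoneOn g (Icc a b) := by
  have prop : ∀ w, a ≤ w → w < b → (∀ t ∈ Ioc w b, g t < 0) →
      (∀ t ∈ Ioo w b, 0 ≤ g' t) ∧ MonotoneOn g (Icc w b) := by
    intro w haw hwb hneg
    have hxw : x ∉ Ioc w b := fun h => hax ⟨lt_of_le_of_lt haw h.1, h.2⟩
    have hg'ge : ∀ t ∈ Ioo w b, 0 ≤ g' t := by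
      intro t ht
      have hanti : AntitoneOn g' (Icc t b) := by
        refine antiOn_g' hd2 (convex_Icc _ _) ?_ ?_
        · intro s hs
          refine ⟨⟨(ha0.trans haw).trans (le_trans ht.1.le hs.1), hs.2.trans hb1⟩, ?_⟩
          intro hsx
          rw [mem_singleton_iff] at hsx
          exact hxw (hsx ▸ ⟨lt_of_lt_of_le ht.1 hs.1, hs.2⟩)
        · rw [interior_Icc]
          exact fun s hs => (hneg s ⟨lt_trans ht.1 hs.1, hs.2.le⟩).le
      have := hanti (left_mem_Icc.mpr ht.2.le) (right_mem_Icc.mpr ht.2.le) ht.2.le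
      rwa [hg'b] at this
    refine ⟨hg'ge, ?_⟩
    refine monoOn_g hd1 hgc (convex_Icc _ _) (Icc_subset_Icc (ha0.trans haw) hb1) ?_ ?_
    · rw [interior_Icc]; exact fun h => hxw ⟨h.1, h.2.le⟩
    · rw [interior_Icc]; exact hg'ge
  have hallneg : ∀ t ∈ Ioc a b, g t < 0 := by
    by_contra hcon
    push_neg at hcon
    obtain ⟨t0, ht0, ht0pos⟩ := hcon
    set Z := {t | t ∈ Icc a b ∧ 0 ≤ g t} with hZ
    have hZne : Z.Nonempty := ⟨t0, ⟨Ioc_subset_Icc_self ht0, ht0pos⟩⟩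
    have hZclosed : IsClosed Z := by
      have heq : Z = Icc a b ∩ g ⁻¹' (Ici 0) := by
        ext t; simp [hZ, mem_preimage]
      rw [heq]
      exact (hgc.mono (Icc_subset_Icc ha0 hb1)).preimage_isClosed_of_isClosed
        isClosed_Icc isClosed_Ici
    have hZbdd : BddAbove Z := (bddAbove_Icc (a := a) (b := b)).mono (fun t ht => ht.1)
    set w := sSup Z with hw
    have hwZ : w ∈ Z := hZclosed.csSup_mem hZne hZbdd
    have hwb : w < b := by
      rcases eq_or_lt_of_le hwZ.1.2 with h | h
      · exfalso; rw [h] at hwZ; linarith [hwZ.2]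
      · exact h
    have hneg : ∀ t ∈ Ioc w b, g t < 0 := by
      intro t ht
      by_contra h
      push_neg at h
      have : t ∈ Z := ⟨⟨hwZ.1.1.trans ht.1.le, ht.2⟩, h⟩
      exact absurd (le_csSup hZbdd this) (not_le.mpr ht.1)
    obtain ⟨_, hmono⟩ := prop w hwZ.1.1 hwb hneg
    have := hmono (left_mem_Icc.mpr hwb.le) (right_mem_Icc.mpr hwb.le) hwb.le
    linarith [hwZ.2]
  obtain ⟨h2, h3⟩ := prop a le_rfl hab hallneg
  exact ⟨hallneg, h2, h3⟩

variable (hκc : ContinuousOn κ (Set.Icc 0 1))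

include hκc hd1 hd2 in
lemma uniq_zero (hgc : ContinuousOn g (Icc 0 1))
    {a b : ℝ} (ha : 0 ≤ a) (hb : b ≤ 1) (hab : a ≤ b) (hxI : x ∉ Icc a b)
    {t₀ : ℝ} (ht₀ : t₀ ∈ Icc a b) (hga : g t₀ = 0) (hg'a : g' t₀ = 0) :
    ∀ t ∈ Icc a b, g t = 0 ∧ g' t = 0 := by
  have hsub : Icc a b ⊆ Icc (0:ℝ) 1 := Icc_subset_Icc ha hb
  obtain ⟨C, hC⟩ := isCompact_Icc.exists_bound_of_continuousOn (hκc.pow 2)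
  have hC0 : 0 ≤ C := le_trans (norm_nonneg _) (hC 0 (left_mem_Icc.mpr zero_le_one))
  set K : NNReal := ⟨max 1 C, le_trans zero_le_one (le_max_left _ _)⟩ with hK
  have hKval : (K : ℝ) = max 1 C := rfl
  set proj : ℝ → ℝ := fun t => min (max t 0) 1 with hproj
  have hprojmem : ∀ t, proj t ∈ Icc (0:ℝ) 1 := fun t =>
    ⟨le_min (le_max_right _ _) zero_le_one, min_le_right _ _⟩
  have hprojeq : ∀ t ∈ Icc (0:ℝ) 1, proj t = t := fun t ht => by
    simp only [hproj]
    rw [max_eq_left ht.1, min_eq_left ht.2]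
  set v : ℝ → ℝ × ℝ → ℝ × ℝ := fun t p => (p.2, κ (proj t) ^ 2 * p.1) with hv
  have hlip : ∀ t, LipschitzOnWith K (v t) univ := by
    intro t
    apply LipschitzWith.lipschitzOnWith
    rw [lipschitzWith_iff_dist_le_mul]
    intro p q
    have hb1 : κ (proj t) ^ 2 ≤ C := by
      have := hC _ (hprojmem t)
      rwa [Real.norm_eq_abs, abs_of_nonneg (sq_nonneg _)] at this
    simp only [hv, Prod.dist_eq, Real.dist_eq, hKval]
    have h1 : |p.2 - q.2| ≤ max |p.1 - q.1| |p.2 - q.2| := le_max_right _ _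
    have h2 : |κ (proj t) ^ 2 * p.1 - κ (proj t) ^ 2 * q.1| =
        κ (proj t) ^ 2 * |p.1 - q.1| := by
      rw [← mul_sub, abs_mul, abs_of_nonneg (sq_nonneg _)]
    have h3 : |p.1 - q.1| ≤ max |p.1 - q.1| |p.2 - q.2| := le_max_left _ _
    have h4 : (0:ℝ) ≤ max |p.1 - q.1| |p.2 - q.2| :=
      le_trans (abs_nonneg _) h3
    have h5 : (1:ℝ) ≤ max 1 C := le_max_left _ _
    have h6 : C ≤ max 1 C := le_max_right _ _
    apply max_le
    · nlinarith
    · rw [h2]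
      nlinarith [sq_nonneg (κ (proj t)), abs_nonneg (p.1 - q.1)]
  have hcontg' : ContinuousOn g' (Icc a b) := fun t ht =>
    ((hd2 t (hsub ht) (ne_of_mem_of_not_mem ht hxI)).continuousWithinAt).mono hsub
  have hcontf : ContinuousOn (fun t => (g t, g' t)) (Icc a b) :=
    (hgc.mono hsub).prodMk hcontg'
  have hderiv : ∀ t ∈ Ico a b, HasDerivWithinAt (fun t => (g t, g' t))
      (v t (g t, g' t)) (Ici t) t := by
    intro t ht
    have htx : t ≠ x := ne_of_mem_of_not_mem (Ico_subset_Icc_self ht) hxI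
    have ht01 : t ∈ Icc (0:ℝ) 1 := hsub (Ico_subset_Icc_self ht)
    have hmem : Icc (0:ℝ) 1 ∈ nhdsWithin t (Ici t) :=
      Icc_mem_nhdsGE_of_mem ⟨ht01.1, lt_of_lt_of_le ht.2 hb⟩
    have hp := HasDerivWithinAt.prodMk ((hd1 t ht01 htx).mono_of_mem_nhdsWithin hmem)
      ((hd2 t ht01 htx).mono_of_mem_nhdsWithin hmem)
    have : v t (g t, g' t) = (g' t, κ t ^ 2 * g t) := by
      simp only [hv]
      rw [hprojeq t ht01]
    rw [this]
    exact hp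
  have hderiv0 : ∀ t ∈ Ico a b, HasDerivWithinAt (fun _ : ℝ => ((0:ℝ), (0:ℝ)))
      (v t ((0:ℝ), (0:ℝ))) (Ici t) t := by
    intro t _
    have : v t ((0:ℝ), (0:ℝ)) = ((0:ℝ), (0:ℝ)) := by simp [hv]
    rw [this]
    have := hasDerivWithinAt_const t (Ici t) (((0:ℝ), (0:ℝ)) : ℝ × ℝ)
    exact this
  have hderivb : ∀ t ∈ Ioc a b, HasDerivWithinAt (fun t => (g t, g' t))
      (v t (g t, g' t)) (Iic t) t := by
    intro t ht
    have htx : t ≠ x := ne_of_mem_of_not_mem (Ioc_subset_Icc_self ht) hxI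
    have ht01 : t ∈ Icc (0:ℝ) 1 := hsub (Ioc_subset_Icc_self ht)
    have hmem : Icc (0:ℝ) 1 ∈ nhdsWithin t (Iic t) :=
      Icc_mem_nhdsLE_of_mem ⟨lt_of_le_of_lt ha ht.1, ht01.2⟩
    have hp := HasDerivWithinAt.prodMk ((hd1 t ht01 htx).mono_of_mem_nhdsWithin hmem)
      ((hd2 t ht01 htx).mono_of_mem_nhdsWithin hmem)
    have : v t (g t, g' t) = (g' t, κ t ^ 2 * g t) := by
      simp only [hv]
      rw [hprojeq t ht01]
    rw [this]
    exact hp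
  have hderivb0 : ∀ t ∈ Ioc a b, HasDerivWithinAt (fun _ : ℝ => ((0:ℝ), (0:ℝ)))
      (v t ((0:ℝ), (0:ℝ))) (Iic t) t := by
    intro t _
    have : v t ((0:ℝ), (0:ℝ)) = ((0:ℝ), (0:ℝ)) := by simp [hv]
    rw [this]
    have := hasDerivWithinAt_const t (Iic t) (((0:ℝ), (0:ℝ)) : ℝ × ℝ)
    exact this
  have heq0 : (fun t => (g t, g' t)) t₀ = (fun _ : ℝ => ((0:ℝ), (0:ℝ))) t₀ := by
    simp [hga, hg'a]
  -- uniqueness on [t₀, b]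
  have hright : ∀ t ∈ Icc t₀ b, g t = 0 ∧ g' t = 0 := by
    intro t ht
    have := ODE_solution_unique_of_mem_Icc_right (s := fun _ => univ) (fun t _ => hlip t)
      (hcontf.mono (Icc_subset_Icc ht₀.1 le_rfl))
      (fun u hu => hderiv u ⟨ht₀.1.trans hu.1, hu.2⟩)
      (fun _ _ => mem_univ _)
      (continuousOn_const)
      (fun u hu => hderiv0 u ⟨ht₀.1.trans hu.1, hu.2⟩)
      (fun _ _ => mem_univ _) heq0 ht
    exact ⟨congrArg Prod.fst this, congrArg Prod.snd this⟩
  have hleft : ∀ t ∈ Icc a t₀, g t = 0 ∧ g' t = 0 := by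
    intro t ht
    have := ODE_solution_unique_of_mem_Icc_left (s := fun _ => univ) (fun t _ => hlip t)
      (hcontf.mono (Icc_subset_Icc le_rfl ht₀.2))
      (fun u hu => hderivb u ⟨hu.1, hu.2.trans ht₀.2⟩)
      (fun _ _ => mem_univ _)
      (continuousOn_const)
      (fun u hu => hderivb0 u ⟨hu.1, hu.2.trans ht₀.2⟩)
      (fun _ _ => mem_univ _) heq0 ht
    exact ⟨congrArg Prod.fst this, congrArg Prod.snd this⟩
  intro t ht
  rcases le_total t t₀ with h | h
  · exact hleft t ⟨ht.1, h⟩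
  · exact hright t ⟨h, ht.2⟩

end basic

end Stmt9Aux

theorem stmt_9 (κ : ℝ → ℝ) (hκc : ContinuousOn κ (Set.Icc 0 1))
    (hκ0 : ∀ s ∈ Set.Icc (0:ℝ) 1, 0 ≤ κ s)
    (x : ℝ) (hx : x ∈ Set.Ioc (0:ℝ) 1)
    (g g' : ℝ → ℝ)
    (hgc : ContinuousOn g (Set.Icc 0 1))
    (hg0 : g 0 = 0)
    (hbc : g' 1 = 0)
    (hd1 : ∀ s ∈ Set.Icc (0:ℝ) 1, s ≠ x → HasDerivWithinAt g (g' s) (Set.Icc 0 1) s)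
    (hd2 : ∀ s ∈ Set.Icc (0:ℝ) 1, s ≠ x →
      HasDerivWithinAt g' (κ s ^ 2 * g s) (Set.Icc 0 1) s)
    (hjump : ∃ L R : ℝ,
      Tendsto g' (nhdsWithin x (Set.Ioo 0 x)) (nhds L) ∧
      (x < 1 → Tendsto g' (nhdsWithin x (Set.Ioo x 1)) (nhds R) ∧ L - R = 1) ∧
      (x = 1 → L = 1)) :
    (∀ s ∈ Set.Ioc (0:ℝ) 1, 0 < g s) ∧
    (x < 1 → (∀ s ∈ Set.Ioo (0:ℝ) x, 0 < g' s) ∧ ∀ s ∈ Set.Ioo x 1, g' s ≤ 0) := by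
  obtain ⟨hx0, hx1⟩ := hx
  obtain ⟨L, R, hLt, hjr, hj1⟩ := hjump
  have hpos : ∀ s ∈ Set.Ioc (0:ℝ) 1, 0 < g s := by
    by_contra hcon
    push_neg at hcon
    obtain ⟨p, hp, hple⟩ := hcon
    obtain ⟨s₀, hs₀mem, hs₀min'⟩ := isCompact_Icc.exists_isMinOn
      (Set.nonempty_Icc.mpr zero_le_one) hgc
    have hmin : ∀ s ∈ Set.Icc (0:ℝ) 1, g s₀ ≤ g s := fun s hs => hs₀min' hs
    have hm_le : g s₀ ≤ 0 := le_trans (hmin p ⟨hp.1.le, hp.2⟩) hple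
    haveI hnbl : (nhdsWithin x (Set.Ioo 0 x)).NeBot := Stmt9Aux.nebot_Ioo_l hx0
    rcases lt_or_eq_of_le hm_le with hmneg | hmzero
    · -- minimum is negative
      have hs₀pos : 0 < s₀ := by
        rcases eq_or_lt_of_le hs₀mem.1 with h | h
        · exfalso; rw [← h, hg0] at hmneg; exact lt_irrefl 0 hmneg
        · exact h
      rcases lt_or_ge s₀ x with hlt | hxle
      · -- Branch I : s₀ ∈ (0, x)
        have hs₀lt1 : s₀ < 1 := lt_of_lt_of_le hlt hx1
        have hg's₀ : g' s₀ = 0 :=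
          (hs₀min'.isLocalMin (Icc_mem_nhds hs₀pos hs₀lt1)).hasDerivAt_eq_zero
            (Stmt9Aux.hasDerivAt_g hd1 ⟨hs₀pos, hs₀lt1⟩ (ne_of_lt hlt))
        obtain ⟨hneg, hg'le, hanti⟩ := Stmt9Aux.right_block hd1 hd2 hgc hs₀pos.le hlt hx1
          (fun h => lt_irrefl x h.2) hg's₀ hmneg
        have hgxle : g x ≤ g s₀ :=
          hanti (Set.left_mem_Icc.mpr hlt.le) (Set.right_mem_Icc.mpr hlt.le) hlt.le
        have hminx : ∀ s ∈ Set.Icc (0:ℝ) 1, g x ≤ g s := fun s hs =>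
          hgxle.trans (hmin s hs)
        have hL0 : L ≤ 0 := le_of_tendsto hLt
          (Filter.mem_of_superset (Stmt9Aux.Ioo_mem_left hx0 hlt)
            (fun t ht => hg'le t ht))
        rcases eq_or_lt_of_le hx1 with hxeq | hxlt
        · rw [hj1 hxeq] at hL0; linarith
        · obtain ⟨hRt, hLR⟩ := hjr hxlt
          exact Stmt9Aux.contra_right hd1 hgc hx0 hxlt hRt (by linarith) hminx
      · -- s₀ ∈ [x, 1]
        rcases eq_or_lt_of_le hx1 with hxeq | hxlt
        · -- x = 1, so s₀ = x
          have hs₀x : s₀ = x := le_antisymm (hs₀mem.2.trans hxeq.symm.le) hxle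
          refine Stmt9Aux.contra_left hd1 hgc hx0 hx1 hLt
            (by rw [hj1 hxeq]; exact one_pos) (fun s hs => ?_)
          rw [← hs₀x]; exact hmin s hs
        · obtain ⟨hRt, hLR⟩ := hjr hxlt
          haveI hnbr : (nhdsWithin x (Set.Ioo x 1)).NeBot := Stmt9Aux.nebot_Ioo_r hxlt
          by_cases hall : ∀ t ∈ Set.Icc x 1, g t < 0
          · -- g negative on all of [x,1]
            obtain ⟨hneg, hg'ge, hmono⟩ := Stmt9Aux.left_block hd1 hd2 hgc hx0.le hxlt
              le_rfl (fun h => lt_irrefl x h.1) hbc (hall 1 ⟨hx1, le_rfl⟩)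
            have hgxm : g x ≤ g s₀ :=
              hmono (Set.left_mem_Icc.mpr hxlt.le) ⟨hxle, hs₀mem.2⟩ hxle
            have hminx : ∀ s ∈ Set.Icc (0:ℝ) 1, g x ≤ g s := fun s hs =>
              hgxm.trans (hmin s hs)
            have hR0 : 0 ≤ R := ge_of_tendsto hRt
              (Filter.mem_of_superset self_mem_nhdsWithin (fun t ht => hg'ge t ht))
            exact Stmt9Aux.contra_left hd1 hgc hx0 hx1 hLt (by linarith) hminx
          · push_neg at hall
            obtain ⟨t₀, ht₀mem, ht₀⟩ := hall
            rcases eq_or_lt_of_le hxle with hxeq₀ | hxlt₀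
            · -- s₀ = x : MVT argument
              have hgx : g x < 0 := by rw [hxeq₀]; exact hmneg
              set Z := {t | t ∈ Set.Icc x 1 ∧ 0 ≤ g t} with hZ
              have hZne : Z.Nonempty := ⟨t₀, ht₀mem, ht₀⟩
              have hZclosed : IsClosed Z := by
                have heq : Z = Set.Icc x 1 ∩ g ⁻¹' (Set.Ici 0) := by
                  ext t; simp [hZ, Set.mem_preimage]
                rw [heq]
                exact (hgc.mono (Set.Icc_subset_Icc hx0.le le_rfl)).preimage_isClosed_of_isClosed
                  isClosed_Icc isClosed_Ici
              have hZbdd : BddBelow Z := (bddBelow_Icc : BddBelow (Set.Icc x 1)).mono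
                (fun t ht => ht.1)
              set u := sInf Z with hu
              have huZ : u ∈ Z := hZclosed.csInf_mem hZne hZbdd
              have hxu : x < u := by
                rcases eq_or_lt_of_le huZ.1.1 with h | h
                · exfalso; rw [← h] at huZ; linarith [huZ.2]
                · exact h
              have hu1 : u ≤ 1 := huZ.1.2
              have hnegu : ∀ t ∈ Set.Ico x u, g t < 0 := by
                intro t ht
                by_contra h
                push_neg at h
                have : t ∈ Z := ⟨⟨ht.1, ht.2.le.trans hu1⟩, h⟩
                exact absurd (csInf_le hZbdd this) (not_le.mpr ht.2)
              obtain ⟨c, hc, hslope⟩ := exists_hasDerivAt_eq_slope g g' hxu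
                (hgc.mono (Set.Icc_subset_Icc hx0.le hu1))
                (fun t ht => Stmt9Aux.hasDerivAt_g hd1
                  ⟨lt_trans hx0 ht.1, lt_of_lt_of_le ht.2 hu1⟩ (ne_of_gt ht.1))
              have hcpos : 0 < g' c := by
                rw [hslope]
                exact div_pos (by linarith [huZ.2]) (by linarith [hxu])
              have hantic : AntitoneOn g' (Set.Ioc x c) := by
                refine Stmt9Aux.antiOn_g' hd2 (convex_Ioc _ _) ?_ ?_
                · intro t ht
                  refine ⟨⟨(hx0.trans ht.1).le, (ht.2.trans hc.2.le).trans hu1⟩, ?_⟩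
                  simp only [Set.mem_singleton_iff]
                  exact ne_of_gt ht.1
                · rw [interior_Ioc]
                  exact fun t ht => (hnegu t ⟨ht.1.le, lt_trans ht.2 hc.2⟩).le
              have hg'ge : ∀ t ∈ Set.Ioo x c, g' c ≤ g' t := fun t ht =>
                hantic ⟨ht.1, ht.2.le⟩ ⟨hc.1, le_rfl⟩ ht.2.le
              have hRge : g' c ≤ R := ge_of_tendsto hRt
                (Filter.mem_of_superset (Stmt9Aux.Ioo_mem_right hxlt hc.1) hg'ge)
              refine Stmt9Aux.contra_left hd1 hgc hx0 hx1 hLt (by linarith)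
                (fun s hs => ?_)
              rw [hxeq₀]; exact hmin s hs
            · -- s₀ ∈ (x, 1]
              have hg's₀ : g' s₀ = 0 := by
                rcases eq_or_lt_of_le hs₀mem.2 with h1 | h1
                · rw [h1]; exact hbc
                · exact (hs₀min'.isLocalMin
                    (Icc_mem_nhds (lt_trans hx0 hxlt₀) h1)).hasDerivAt_eq_zero
                    (Stmt9Aux.hasDerivAt_g hd1 ⟨lt_trans hx0 hxlt₀, h1⟩
                      (ne_of_gt hxlt₀))
              rcases lt_trichotomy t₀ s₀ with h2 | h2 | h2
              · obtain ⟨hneg, _, hmono⟩ := Stmt9Aux.left_block hd1 hd2 hgc hx0.le hxlt₀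
                  hs₀mem.2 (fun h => lt_irrefl x h.1) hg's₀ hmneg
                rcases eq_or_lt_of_le ht₀mem.1 with h3 | h3
                · have := hmono (Set.left_mem_Icc.mpr hxlt₀.le)
                    (Set.right_mem_Icc.mpr hxlt₀.le) hxlt₀.le
                  rw [← h3] at ht₀
                  linarith
                · exact absurd ht₀ (not_le.mpr (hneg t₀ ⟨h3, h2.le⟩))
              · rw [h2] at ht₀; linarith
              · have hs₀1 : s₀ < 1 := lt_of_lt_of_le h2 ht₀mem.2
                obtain ⟨hneg, _, hanti⟩ := Stmt9Aux.right_block hd1 hd2 hgc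
                  (lt_trans hx0 hxlt₀).le hs₀1 le_rfl
                  (fun h => absurd h.1 (not_le.mpr hxlt₀)) hg's₀ hmneg
                rcases eq_or_lt_of_le ht₀mem.2 with h4 | h4
                · have := hanti (Set.left_mem_Icc.mpr hs₀1.le)
                    (Set.right_mem_Icc.mpr hs₀1.le) hs₀1.le
                  rw [h4] at ht₀
                  linarith
                · exact absurd ht₀ (not_le.mpr (hneg t₀ ⟨h2.le, h4⟩))
    · -- minimum is zero : g ≥ 0 everywhere, g p = 0
      have hge : ∀ s ∈ Set.Icc (0:ℝ) 1, 0 ≤ g s := fun s hs => by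
        rw [← hmzero]; exact hmin s hs
      have hgp : g p = 0 := le_antisymm hple (hge p ⟨hp.1.le, hp.2⟩)
      rcases lt_trichotomy p x with hplt | hpeq | hplt
      · -- p ∈ (0, x)
        have hp1 : p < 1 := lt_of_lt_of_le hplt hx1
        have hg'p : g' p = 0 := by
          have hpmin : IsMinOn g (Set.Icc (0:ℝ) 1) p := isMinOn_iff.mpr
            (fun s hs => by rw [hgp]; exact hge s hs)
          exact (hpmin.isLocalMin (Icc_mem_nhds hp.1 hp1)).hasDerivAt_eq_zero
            (Stmt9Aux.hasDerivAt_g hd1 ⟨hp.1, hp1⟩ (ne_of_lt hplt))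
        have heqz : ∀ t ∈ Set.Ico p x, g t = 0 ∧ g' t = 0 := by
          intro t ht
          exact Stmt9Aux.uniq_zero hd1 hd2 hκc hgc hp.1.le (ht.2.le.trans hx1) ht.1
            (fun h => lt_irrefl x (lt_of_le_of_lt h.2 ht.2))
            (Set.left_mem_Icc.mpr ht.1) hgp hg'p t (Set.right_mem_Icc.mpr ht.1)
        have hL0 : L = 0 := by
          have h1 : (fun _ => (0:ℝ)) =ᶠ[nhdsWithin x (Set.Ioo 0 x)] g' :=
            Filter.mem_of_superset (Stmt9Aux.Ioo_mem_left hx0 hplt)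
              (fun t ht => ((heqz t ⟨ht.1.le, ht.2⟩).2).symm)
          exact tendsto_nhds_unique hLt (Filter.Tendsto.congr' h1 tendsto_const_nhds)
        have hgx : g x = 0 := by
          haveI : (nhdsWithin x (Set.Ioo p x)).NeBot := Stmt9Aux.nebot_Ioo_l hplt
          have h2 : Filter.Tendsto g (nhdsWithin x (Set.Ioo p x)) (nhds (g x)) :=
            ((hgc x ⟨hx0.le, hx1⟩).tendsto).mono_left
              (nhdsWithin_mono x (fun t ht => ⟨(hp.1.trans ht.1).le, ht.2.le.trans hx1⟩))
          have h3 : Filter.Tendsto g (nhdsWithin x (Set.Ioo p x)) (nhds 0) := by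
            refine Filter.Tendsto.congr' ?_ tendsto_const_nhds
            exact Filter.eventually_of_mem self_mem_nhdsWithin
              (fun t ht => ((heqz t ⟨ht.1.le, ht.2⟩).1).symm)
          exact tendsto_nhds_unique h2 h3
        rcases eq_or_lt_of_le hx1 with hxe | hxlt
        · rw [hj1 hxe] at hL0; exact one_ne_zero hL0
        · obtain ⟨hRt, hLR⟩ := hjr hxlt
          exact Stmt9Aux.contra_right hd1 hgc hx0 hxlt hRt (by linarith)
            (fun s hs => by rw [hgx]; exact hge s hs)
      · -- p = x
        have hgx : g x = 0 := by rw [← hpeq]; exact hgp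
        rcases eq_or_lt_of_le hx1 with hxe | hxlt
        · exact Stmt9Aux.contra_left hd1 hgc hx0 hx1 hLt
            (by rw [hj1 hxe]; exact one_pos)
            (fun s hs => by rw [hgx]; exact hge s hs)
        · haveI hnbr : (nhdsWithin x (Set.Ioo x 1)).NeBot := Stmt9Aux.nebot_Ioo_r hxlt
          obtain ⟨hRt, hLR⟩ := hjr hxlt
          have hmono : MonotoneOn g' (Set.Ioc x 1) := by
            refine Stmt9Aux.monoOn_g' hd2 (convex_Ioc _ _) ?_ ?_
            · intro t ht
              exact ⟨⟨(hx0.trans ht.1).le, ht.2⟩, by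
                simp only [Set.mem_singleton_iff]; exact ne_of_gt ht.1⟩
            · rw [interior_Ioc]
              exact fun t ht => hge t ⟨(hx0.trans ht.1).le, ht.2.le⟩
          have hg'le : ∀ t ∈ Set.Ioc x 1, g' t ≤ 0 := by
            intro t ht
            have := hmono ht (Set.right_mem_Ioc.mpr hxlt) ht.2
            rwa [hbc] at this
          have hanti : AntitoneOn g (Set.Icc x 1) := by
            refine Stmt9Aux.antiOn_g hd1 hgc (convex_Icc _ _)
              (Set.Icc_subset_Icc hx0.le le_rfl) ?_ ?_
            · rw [interior_Icc]; exact fun h => lt_irrefl x h.1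
            · rw [interior_Icc]; exact fun t ht => hg'le t ⟨ht.1, ht.2.le⟩
          have hzero : ∀ t ∈ Set.Icc x 1, g t = 0 := by
            intro t ht
            refine le_antisymm ?_ (hge t ⟨hx0.le.trans ht.1, ht.2⟩)
            have := hanti (Set.left_mem_Icc.mpr hxlt.le) ht ht.1
            rwa [hgx] at this
          have hg'zero : ∀ t ∈ Set.Ioo x 1, g' t = 0 := by
            intro t ht
            have hda : HasDerivAt g (g' t) t :=
              Stmt9Aux.hasDerivAt_g hd1 ⟨hx0.trans ht.1, ht.2⟩ (ne_of_gt ht.1)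
            have hconst : g =ᶠ[nhds t] (fun _ => (0:ℝ)) :=
              Filter.eventually_of_mem (isOpen_Ioo.mem_nhds ht)
                (fun s hs => hzero s ⟨hs.1.le, hs.2.le⟩)
            have h5 : HasDerivAt (fun _ => (0:ℝ)) (g' t) t :=
              hda.congr_of_eventuallyEq hconst.symm
            exact h5.unique (hasDerivAt_const t 0)
          have hR0 : R = 0 := by
            have h1 : (fun _ => (0:ℝ)) =ᶠ[nhdsWithin x (Set.Ioo x 1)] g' :=
              Filter.eventually_of_mem self_mem_nhdsWithin
                (fun t ht => (hg'zero t ht).symm)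
            exact tendsto_nhds_unique hRt (Filter.Tendsto.congr' h1 tendsto_const_nhds)
          exact Stmt9Aux.contra_left hd1 hgc hx0 hx1 hLt (by linarith)
            (fun s hs => by rw [hgx]; exact hge s hs)
      · -- p ∈ (x, 1]
        have hxlt : x < 1 := lt_of_lt_of_le hplt hp.2
        haveI hnbr : (nhdsWithin x (Set.Ioo x 1)).NeBot := Stmt9Aux.nebot_Ioo_r hxlt
        obtain ⟨hRt, hLR⟩ := hjr hxlt
        have hg'p : g' p = 0 := by
          rcases eq_or_lt_of_le hp.2 with h1 | h1
          · rw [h1]; exact hbc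
          · have hpmin : IsMinOn g (Set.Icc (0:ℝ) 1) p := isMinOn_iff.mpr
              (fun s hs => by rw [hgp]; exact hge s hs)
            exact (hpmin.isLocalMin (Icc_mem_nhds hp.1 h1)).hasDerivAt_eq_zero
              (Stmt9Aux.hasDerivAt_g hd1 ⟨hp.1, h1⟩ (ne_of_gt hplt))
        have heqz : ∀ t ∈ Set.Ioc x p, g t = 0 ∧ g' t = 0 := by
          intro t ht
          exact Stmt9Aux.uniq_zero hd1 hd2 hκc hgc (hx0.trans ht.1).le hp.2 ht.2
            (fun h => lt_irrefl x (lt_of_lt_of_le ht.1 h.1))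
            (Set.right_mem_Icc.mpr ht.2) hgp hg'p t (Set.left_mem_Icc.mpr ht.2)
        have hR0 : R = 0 := by
          have h1 : (fun _ => (0:ℝ)) =ᶠ[nhdsWithin x (Set.Ioo x 1)] g' :=
            Filter.mem_of_superset (Stmt9Aux.Ioo_mem_right hxlt hplt)
              (fun t ht => ((heqz t ⟨ht.1, ht.2.le⟩).2).symm)
          exact tendsto_nhds_unique hRt (Filter.Tendsto.congr' h1 tendsto_const_nhds)
        have hgx : g x = 0 := by
          haveI : (nhdsWithin x (Set.Ioo x p)).NeBot := Stmt9Aux.nebot_Ioo_r hplt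
          have h2 : Filter.Tendsto g (nhdsWithin x (Set.Ioo x p)) (nhds (g x)) :=
            ((hgc x ⟨hx0.le, hx1⟩).tendsto).mono_left
              (nhdsWithin_mono x (fun t ht => ⟨(hx0.trans ht.1).le, ht.2.le.trans hp.2⟩))
          have h3 : Filter.Tendsto g (nhdsWithin x (Set.Ioo x p)) (nhds 0) := by
            refine Filter.Tendsto.congr' ?_ tendsto_const_nhds
            exact Filter.eventually_of_mem self_mem_nhdsWithin
              (fun t ht => ((heqz t ⟨ht.1, ht.2.le⟩).1).symm)
          exact tendsto_nhds_unique h2 h3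
        exact Stmt9Aux.contra_left hd1 hgc hx0 hx1 hLt (by linarith)
          (fun s hs => by rw [hgx]; exact hge s hs)
  refine ⟨hpos, fun hx1' => ⟨?_, ?_⟩⟩
  · intro t ht
    by_contra hcon
    push_neg at hcon
    have htx : t < x := ht.2
    have ht1 : t < 1 := lt_of_lt_of_le htx hx1
    have hmono : MonotoneOn g' (Set.Icc 0 t) := by
      refine Stmt9Aux.monoOn_g' hd2 (convex_Icc _ _) ?_ ?_
      · intro s hs
        exact ⟨⟨hs.1, hs.2.trans ht1.le⟩, by
          simp only [Set.mem_singleton_iff]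
          exact ne_of_lt (lt_of_le_of_lt hs.2 htx)⟩
      · rw [interior_Icc]
        exact fun s hs => (hpos s ⟨hs.1, (hs.2.trans ht1).le⟩).le
    have hg'le : ∀ s ∈ Set.Ioo (0:ℝ) t, g' s ≤ 0 := fun s hs =>
      le_trans (hmono ⟨hs.1.le, hs.2.le⟩ (Set.right_mem_Icc.mpr ht.1.le) hs.2.le) hcon
    have hanti : AntitoneOn g (Set.Icc 0 t) := by
      refine Stmt9Aux.antiOn_g hd1 hgc (convex_Icc _ _)
        (Set.Icc_subset_Icc le_rfl ht1.le) ?_ ?_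
      · rw [interior_Icc]; exact fun h => lt_asymm htx h.2
      · rw [interior_Icc]; exact hg'le
    have h6 := hanti (Set.left_mem_Icc.mpr ht.1.le) (Set.right_mem_Icc.mpr ht.1.le) ht.1.le
    rw [hg0] at h6
    exact absurd (hpos t ⟨ht.1, ht1.le⟩) (not_lt.mpr h6)
  · intro t ht
    have hmono : MonotoneOn g' (Set.Ioc x 1) := by
      refine Stmt9Aux.monoOn_g' hd2 (convex_Ioc _ _) ?_ ?_
      · intro s hs
        exact ⟨⟨(hx0.trans hs.1).le, hs.2⟩, by
          simp only [Set.mem_singleton_iff]; exact ne_of_gt hs.1⟩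
      · rw [interior_Ioc]
        exact fun s hs => (hpos s ⟨hx0.trans hs.1, hs.2.le⟩).le
    have := hmono ⟨ht.1, ht.2.le⟩ (Set.right_mem_Ioc.mpr hx1') ht.2.le
    rwa [hbc] at this
end

section
/- Let κ : [0,1] → ℝ be continuous and nonnegative, and let G be the Green function for σ ↦ σ'' − κ² σ with σ(0)=0, σ'(1)=0. Then |∂_s G(s,x)| ≤ 1 for all s, x (s ≠ x), and 0 ≤ G(s,x) ≤ s for all s, x ∈ [0,1]. -/
open Filter

private lemma monoAux {f f' : ℝ → ℝ} {a b : ℝ}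
    (hcont : ContinuousOn f (Set.Icc a b))
    (hd : ∀ s ∈ Set.Ioo a b, HasDerivAt f (f' s) s)
    (hge : ∀ s ∈ Set.Ioo a b, 0 ≤ f' s) :
    MonotoneOn f (Set.Icc a b) := by
  refine monotoneOn_of_deriv_nonneg (convex_Icc a b) hcont ?_ ?_
  · rw [interior_Icc]
    exact fun s hs => ((hd s hs).differentiableAt).differentiableWithinAt
  · rw [interior_Icc]
    intro s hs
    rw [(hd s hs).deriv]
    exact hge s hs

private lemma antiAux {f f' : ℝ → ℝ} {a b : ℝ}
    (hcont : ContinuousOn f (Set.Icc a b))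
    (hd : ∀ s ∈ Set.Ioo a b, HasDerivAt f (f' s) s)
    (hle : ∀ s ∈ Set.Ioo a b, f' s ≤ 0) :
    AntitoneOn f (Set.Icc a b) := by
  refine antitoneOn_of_deriv_nonpos (convex_Icc a b) hcont ?_ ?_
  · rw [interior_Icc]
    exact fun s hs => ((hd s hs).differentiableAt).differentiableWithinAt
  · rw [interior_Icc]
    intro s hs
    rw [(hd s hs).deriv]
    exact hle s hs

private lemma strictAntiAux {f f' : ℝ → ℝ} {a b : ℝ}
    (hcont : ContinuousOn f (Set.Icc a b))
    (hd : ∀ s ∈ Set.Ioo a b, HasDerivAt f (f' s) s)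
    (hlt : ∀ s ∈ Set.Ioo a b, f' s < 0) :
    StrictAntiOn f (Set.Icc a b) := by
  refine strictAntiOn_of_deriv_neg (convex_Icc a b) hcont ?_
  rw [interior_Icc]
  intro s hs
  rw [(hd s hs).deriv]
  exact hlt s hs

theorem stmt_10 (κ : ℝ → ℝ) (hκc : ContinuousOn κ (Set.Icc 0 1))
    (hκ0 : ∀ s ∈ Set.Icc (0:ℝ) 1, 0 ≤ κ s)
    (x : ℝ) (hx : x ∈ Set.Ioc (0:ℝ) 1)
    (g g' : ℝ → ℝ)
    (hgc : ContinuousOn g (Set.Icc 0 1))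
    (hg0 : g 0 = 0)
    (hbc : g' 1 = 0)
    (hd1 : ∀ s ∈ Set.Icc (0:ℝ) 1, s ≠ x → HasDerivWithinAt g (g' s) (Set.Icc 0 1) s)
    (hd2 : ∀ s ∈ Set.Icc (0:ℝ) 1, s ≠ x →
      HasDerivWithinAt g' (κ s ^ 2 * g s) (Set.Icc 0 1) s)
    (hjump : ∃ L R : ℝ,
      Tendsto g' (nhdsWithin x (Set.Ioo 0 x)) (nhds L) ∧
      (x < 1 → Tendsto g' (nhdsWithin x (Set.Ioo x 1)) (nhds R) ∧ L - R = 1) ∧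
      (x = 1 → L = 1)) :
    (∀ s ∈ Set.Icc (0:ℝ) 1, s ≠ x → |g' s| ≤ 1) ∧
    (∀ s ∈ Set.Icc (0:ℝ) 1, 0 ≤ g s ∧ g s ≤ s) := by
  obtain ⟨hx0, hx1⟩ := hx
  obtain ⟨L, R, hLt, hRt, hLx1⟩ := hjump
  have hIcc : ∀ {a b : ℝ}, 0 ≤ a → b ≤ 1 → Set.Icc a b ⊆ Set.Icc (0:ℝ) 1 :=
    fun ha hb => Set.Icc_subset_Icc ha hb
  have hgat : ∀ s, 0 < s → s < 1 → s ≠ x → HasDerivAt g (g' s) s := fun s h0 h1 hne =>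
    (hd1 s ⟨h0.le, h1.le⟩ hne).hasDerivAt (Icc_mem_nhds h0 h1)
  have hg'at : ∀ s, 0 < s → s < 1 → s ≠ x → HasDerivAt g' (κ s ^ 2 * g s) s := fun s h0 h1 hne =>
    (hd2 s ⟨h0.le, h1.le⟩ hne).hasDerivAt (Icc_mem_nhds h0 h1)
  have hg'cont : ∀ {a b : ℝ}, 0 ≤ a → b ≤ 1 → (∀ s ∈ Set.Icc a b, s ≠ x) →
      ContinuousOn g' (Set.Icc a b) := by
    intro a b ha hb hne s hs
    exact ((hd2 s (hIcc ha hb hs) (hne s hs)).continuousWithinAt).mono (hIcc ha hb)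
  -- derivative of g * g'
  have hmul : ∀ s, 0 < s → s < 1 → s ≠ x →
      HasDerivAt (fun t => g t * g' t) (g' s * g' s + g s * (κ s ^ 2 * g s)) s :=
    fun s h0 h1 hne => (hgat s h0 h1 hne).mul (hg'at s h0 h1 hne)
  have hmulpos : ∀ s, 0 ≤ g' s * g' s + g s * (κ s ^ 2 * g s) := by
    intro s
    have h1 := mul_nonneg (sq_nonneg (κ s)) (mul_self_nonneg (g s))
    nlinarith [mul_self_nonneg (g' s)]
  -- g * g' ≥ 0 on (0, x)
  have hgg'L : ∀ s, 0 < s → s < x → 0 ≤ g s * g' s := by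
    intro s h0 hsx
    have hs1 : s < 1 := lt_of_lt_of_le hsx hx1
    have hmono : MonotoneOn (fun t => g t * g' t) (Set.Icc 0 s) := by
      refine monoAux (f' := fun t => g' t * g' t + g t * (κ t ^ 2 * g t)) ?_ ?_ ?_
      · exact (hgc.mono (hIcc le_rfl hs1.le)).mul
          (hg'cont le_rfl hs1.le (fun t ht => (lt_of_le_of_lt ht.2 hsx).ne))
      · intro t ht
        exact hmul t ht.1 (ht.2.trans hs1) ((ht.2.trans hsx).ne)
      · intro t _; exact hmulpos t
    have := hmono (Set.left_mem_Icc.2 h0.le) (Set.right_mem_Icc.2 h0.le) h0.le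
    simpa [hg0] using this
  -- g * g' ≤ 0 on (x, 1)
  have hgg'R : ∀ s, x < s → s < 1 → g s * g' s ≤ 0 := by
    intro s hxs hs1
    have h0s : 0 < s := hx0.trans hxs
    have hmono : MonotoneOn (fun t => g t * g' t) (Set.Icc s 1) := by
      refine monoAux (f' := fun t => g' t * g' t + g t * (κ t ^ 2 * g t)) ?_ ?_ ?_
      · exact (hgc.mono (hIcc h0s.le le_rfl)).mul
          (hg'cont h0s.le le_rfl (fun t ht => (hxs.trans_le ht.1).ne'))
      · intro t ht
        exact hmul t (h0s.trans ht.1) ht.2 ((hxs.trans ht.1).ne')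
      · intro t _; exact hmulpos t
    have := hmono (Set.left_mem_Icc.2 hs1.le) (Set.right_mem_Icc.2 hs1.le) hs1.le
    simpa [hbc] using this
  -- g² monotone on [0,x], antitone on [x,1]
  have hsqd : ∀ s, 0 < s → s < 1 → s ≠ x →
      HasDerivAt (fun t => g t * g t) (g' s * g s + g s * g' s) s :=
    fun s h0 h1 hne => (hgat s h0 h1 hne).mul (hgat s h0 h1 hne)
  have hsqmono : MonotoneOn (fun t => g t * g t) (Set.Icc 0 x) := by
    refine monoAux (f' := fun t => g' t * g t + g t * g' t) ?_ ?_ ?_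
    · exact (hgc.mono (hIcc le_rfl hx1)).mul (hgc.mono (hIcc le_rfl hx1))
    · intro t ht; exact hsqd t ht.1 (lt_of_lt_of_le ht.2 hx1) ht.2.ne
    · intro t ht
      have := hgg'L t ht.1 ht.2
      nlinarith
  have hsqanti : AntitoneOn (fun t => g t * g t) (Set.Icc x 1) := by
    refine antiAux (f' := fun t => g' t * g t + g t * g' t) ?_ ?_ ?_
    · exact (hgc.mono (hIcc hx0.le le_rfl)).mul (hgc.mono (hIcc hx0.le le_rfl))
    · intro t ht; exact hsqd t (hx0.trans ht.1) ht.2 ht.1.ne'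
    · intro t ht
      have := hgg'R t ht.1 ht.2
      nlinarith
  -- zero propagation
  have hzeroL : ∀ z ∈ Set.Icc (0:ℝ) x, g z = 0 → ∀ t ∈ Set.Icc (0:ℝ) z, g t = 0 := by
    intro z hz hz0 t ht
    have h1 : g t * g t ≤ g z * g z := hsqmono ⟨ht.1, ht.2.trans hz.2⟩ hz ht.2
    rw [hz0, mul_zero] at h1
    exact mul_self_eq_zero.1 (le_antisymm h1 (mul_self_nonneg (g t)))
  have hzeroR : ∀ z ∈ Set.Icc x 1, g z = 0 → ∀ t ∈ Set.Icc z 1, g t = 0 := by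
    intro z hz hz0 t ht
    have h1 : g t * g t ≤ g z * g z := hsqanti hz ⟨hz.1.trans ht.1, ht.2⟩ ht.1
    rw [hz0, mul_zero] at h1
    exact mul_self_eq_zero.1 (le_antisymm h1 (mul_self_nonneg (g t)))
  -- key: g x ≥ 0
  have hgx : 0 ≤ g x := by
    by_contra hneg
    push_neg at hneg
    -- g ≤ 0 on [0,x]
    have hle : ∀ t ∈ Set.Icc (0:ℝ) x, g t ≤ 0 := by
      intro t ht
      by_contra hpos
      push_neg at hpos
      have htx : t < x := lt_of_le_of_ne ht.2 (by rintro rfl; linarith)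
      obtain ⟨z, hz, hz0⟩ := intermediate_value_Icc' htx.le
        (hgc.mono (hIcc ht.1 hx1)) (Set.mem_Icc.2 ⟨hneg.le, hpos.le⟩)
      have := hzeroL z ⟨ht.1.trans hz.1, hz.2⟩ hz0 t ⟨ht.1, hz.1⟩
      linarith
    -- MVT on [0,x]
    obtain ⟨c, hc, hc'⟩ := exists_hasDerivAt_eq_slope g g' hx0 (hgc.mono (hIcc le_rfl hx1))
      (fun t ht => hgat t ht.1 (lt_of_lt_of_le ht.2 hx1) ht.2.ne)
    have hc'neg : g' c < 0 := by
      rw [hc', hg0]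
      apply div_neg_of_neg_of_pos <;> linarith
    -- g' ≤ g' c on [c, x)
    have hg'le : ∀ s, c ≤ s → s < x → g' s ≤ g' c := by
      intro s hcs hsx
      have hanti : AntitoneOn g' (Set.Icc 0 s) := by
        refine antiAux (f' := fun t => κ t ^ 2 * g t) ?_ ?_ ?_
        · exact hg'cont le_rfl (hsx.le.trans hx1) (fun t ht => (lt_of_le_of_lt ht.2 hsx).ne)
        · intro t ht
          exact hg'at t ht.1 (lt_of_lt_of_le (ht.2.trans hsx) hx1) (ht.2.trans hsx).ne
        · intro t ht
          have hgle := hle t ⟨ht.1.le, (ht.2.trans hsx).le⟩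
          nlinarith [sq_nonneg (κ t)]
      exact hanti ⟨hc.1.le, hcs⟩ ⟨hc.1.le.trans hcs, le_rfl⟩ hcs
    haveI : (nhdsWithin x (Set.Ioo 0 x)).NeBot := by
      rw [nhdsWithin_Ioo_eq_nhdsLT hx0]; infer_instance
    have hLneg : L < 0 := by
      have hev : ∀ᶠ y in nhdsWithin x (Set.Ioo 0 x), g' y ≤ g' c := by
        filter_upwards [self_mem_nhdsWithin,
          mem_nhdsWithin_of_mem_nhds (Ioi_mem_nhds hc.2)] with y hy1 hy2
        exact hg'le y (le_of_lt hy2) hy1.2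
      have := le_of_tendsto hLt hev
      linarith
    rcases eq_or_lt_of_le hx1 with h1 | h1
    · linarith [hLx1 h1]
    · obtain ⟨hRt', hLR⟩ := hRt h1
      -- g ≤ 0 on [x,1]
      have hleR : ∀ t ∈ Set.Icc x 1, g t ≤ 0 := by
        intro t ht
        by_contra hpos
        push_neg at hpos
        have hxt : x < t := lt_of_le_of_ne ht.1 (by rintro rfl; linarith)
        obtain ⟨z, hz, hz0⟩ := intermediate_value_Icc hxt.le
          (hgc.mono (hIcc hx0.le ht.2)) (Set.mem_Icc.2 ⟨hneg.le, hpos.le⟩)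
        have := hzeroR z ⟨hz.1, hz.2.trans ht.2⟩ hz0 t ⟨hz.2, ht.2⟩
        linarith
      -- g' ≥ 0 on (x, 1)
      have hg'ge : ∀ s, x < s → s < 1 → 0 ≤ g' s := by
        intro s hxs hs1
        have hanti : AntitoneOn g' (Set.Icc s 1) := by
          refine antiAux (f' := fun t => κ t ^ 2 * g t) ?_ ?_ ?_
          · exact hg'cont (hx0.le.trans hxs.le) le_rfl (fun t ht => (hxs.trans_le ht.1).ne')
          · intro t ht
            exact hg'at t (hx0.trans (hxs.trans ht.1)) ht.2 (hxs.trans ht.1).ne'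
          · intro t ht
            have hgle := hleR t ⟨(hxs.trans ht.1).le, ht.2.le⟩
            nlinarith [sq_nonneg (κ t)]
        have := hanti ⟨le_rfl, hs1.le⟩ ⟨hs1.le, le_rfl⟩ hs1.le
        rw [hbc] at this
        exact this
      haveI : (nhdsWithin x (Set.Ioo x 1)).NeBot := by
        rw [nhdsWithin_Ioo_eq_nhdsGT h1]; infer_instance
      have hR0 : 0 ≤ R := by
        refine ge_of_tendsto hRt' ?_
        filter_upwards [self_mem_nhdsWithin] with y hy
        exact hg'ge y hy.1 hy.2
      linarith
  -- g ≥ 0 on [0,1]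
  have hgpos : ∀ s ∈ Set.Icc (0:ℝ) 1, 0 ≤ g s := by
    intro s hs
    by_contra hneg
    push_neg at hneg
    rcases le_total s x with hsx | hxs
    · obtain ⟨z, hz, hz0⟩ := intermediate_value_Icc hsx
        (hgc.mono (hIcc hs.1 hx1)) (Set.mem_Icc.2 ⟨hneg.le, hgx⟩)
      have := hzeroL z ⟨hs.1.trans hz.1, hz.2⟩ hz0 s ⟨hs.1, hz.1⟩
      linarith
    · obtain ⟨z, hz, hz0⟩ := intermediate_value_Icc' hxs
        (hgc.mono (hIcc hx0.le hs.2)) (Set.mem_Icc.2 ⟨hneg.le, hgx⟩)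
      have := hzeroR z ⟨hz.1, hz.2.trans hs.2⟩ hz0 s ⟨hz.2, hs.2⟩
      linarith
  have hκg : ∀ t, 0 ≤ t → t ≤ 1 → 0 ≤ κ t ^ 2 * g t :=
    fun t h0 h1 => mul_nonneg (sq_nonneg _) (hgpos t ⟨h0, h1⟩)
  -- g' monotone on [0,s] for s < x, and on [s,1] for s > x
  have hmonoL : ∀ s, 0 ≤ s → s < x → MonotoneOn g' (Set.Icc 0 s) := by
    intro s h0s hsx
    refine monoAux (f' := fun t => κ t ^ 2 * g t) ?_ ?_ ?_
    · exact hg'cont le_rfl (hsx.le.trans hx1) (fun t ht => (lt_of_le_of_lt ht.2 hsx).ne)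
    · intro t ht
      exact hg'at t ht.1 (lt_of_lt_of_le (ht.2.trans hsx) hx1) (ht.2.trans hsx).ne
    · intro t ht
      exact hκg t ht.1.le ((ht.2.trans hsx).le.trans hx1)
  have hmonoR : ∀ s, x < s → s ≤ 1 → MonotoneOn g' (Set.Icc s 1) := by
    intro s hxs hs1
    refine monoAux (f' := fun t => κ t ^ 2 * g t) ?_ ?_ ?_
    · exact hg'cont (hx0.le.trans hxs.le) le_rfl (fun t ht => (hxs.trans_le ht.1).ne')
    · intro t ht
      exact hg'at t (hx0.trans (hxs.trans ht.1)) ht.2 (hxs.trans ht.1).ne'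
    · intro t ht
      exact hκg t (hx0.trans (hxs.trans ht.1)).le ht.2.le
  -- g' ≤ 0 on (x, 1]
  have hg'npR : ∀ s, x < s → s ≤ 1 → g' s ≤ 0 := by
    intro s hxs hs1
    have := hmonoR s hxs hs1 ⟨le_rfl, hs1⟩ ⟨hs1, le_rfl⟩ hs1
    rw [hbc] at this
    exact this
  -- g' ≥ 0 on (0, x)
  have hg'nnI : ∀ s, 0 < s → s < x → 0 ≤ g' s := by
    intro s h0s hsx
    by_contra hneg
    push_neg at hneg
    have hanti : StrictAntiOn g (Set.Icc 0 s) := by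
      refine strictAntiAux (f' := g') ?_ ?_ ?_
      · exact hgc.mono (hIcc le_rfl ((hsx.le).trans hx1))
      · intro t ht
        exact hgat t ht.1 (lt_of_lt_of_le (ht.2.trans hsx) hx1) (ht.2.trans hsx).ne
      · intro t ht
        have := hmonoL s h0s.le hsx ⟨ht.1.le, ht.2.le⟩ ⟨h0s.le, le_rfl⟩ ht.2.le
        linarith
    have h2 := hanti ⟨le_rfl, h0s.le⟩ ⟨h0s.le, le_rfl⟩ h0s
    rw [hg0] at h2
    have := hgpos s ⟨h0s.le, hsx.le.trans hx1⟩
    linarith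
  have hg'nnL : ∀ s, 0 ≤ s → s < x → 0 ≤ g' s := by
    intro s h0s hsx
    rcases eq_or_lt_of_le h0s with rfl | h0s'
    · by_contra hneg
      push_neg at hneg
      have hcw : ContinuousWithinAt g' (Set.Icc 0 1) 0 :=
        (hd2 0 ⟨le_rfl, zero_le_one⟩ hx0.ne).continuousWithinAt
      have hev : ∀ᶠ y in nhdsWithin (0:ℝ) (Set.Icc 0 1), g' y < 0 := by
        have := hcw (Iio_mem_nhds hneg)
        exact this
      have hle2 : nhdsWithin (0:ℝ) (Set.Ioo 0 x) ≤ nhdsWithin (0:ℝ) (Set.Icc 0 1) :=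
        nhdsWithin_mono _ (fun t ht => ⟨ht.1.le, ht.2.le.trans hx1⟩)
      haveI : (nhdsWithin (0:ℝ) (Set.Ioo 0 x)).NeBot := by
        rw [nhdsWithin_Ioo_eq_nhdsGT hx0]; infer_instance
      have hev2 : ∀ᶠ y in nhdsWithin (0:ℝ) (Set.Ioo 0 x), g' y < 0 := hle2 hev
      obtain ⟨y, hy1, hy2⟩ := (hev2.and eventually_mem_nhdsWithin).exists
      exact absurd (hg'nnI y hy2.1 hy2.2) (not_le.2 hy1)
    · exact hg'nnI s h0s' hsx
  -- limits
  haveI : (nhdsWithin x (Set.Ioo 0 x)).NeBot := by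
    rw [nhdsWithin_Ioo_eq_nhdsLT hx0]; infer_instance
  have hL0 : 0 ≤ L := by
    refine ge_of_tendsto hLt ?_
    filter_upwards [self_mem_nhdsWithin] with y hy
    exact hg'nnI y hy.1 hy.2
  have hLle1 : L ≤ 1 := by
    rcases eq_or_lt_of_le hx1 with h1 | h1
    · exact (hLx1 h1).le
    · obtain ⟨hRt', hLR⟩ := hRt h1
      haveI : (nhdsWithin x (Set.Ioo x 1)).NeBot := by
        rw [nhdsWithin_Ioo_eq_nhdsGT h1]; infer_instance
      have hRle : R ≤ 0 := by
        refine le_of_tendsto hRt' ?_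
        filter_upwards [self_mem_nhdsWithin] with y hy
        exact hg'npR y hy.1 hy.2.le
      linarith
  -- g' ≤ 1 on [0, x)
  have hg'le1L : ∀ s, 0 ≤ s → s < x → g' s ≤ 1 := by
    intro s h0s hsx
    have hsL : g' s ≤ L := by
      refine ge_of_tendsto hLt ?_
      filter_upwards [self_mem_nhdsWithin,
        mem_nhdsWithin_of_mem_nhds (Ioi_mem_nhds hsx)] with y hy1 hy2
      exact hmonoL y hy1.1.le hy1.2 ⟨h0s, le_of_lt hy2⟩ ⟨hy1.1.le, le_rfl⟩ (le_of_lt hy2)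
    linarith
  -- g' ≥ -1 on (x, 1]
  have hg'geR : ∀ s, x < s → s ≤ 1 → -1 ≤ g' s := by
    intro s hxs hs1
    have hxlt1 : x < 1 := lt_of_lt_of_le hxs hs1
    obtain ⟨hRt', hLR⟩ := hRt hxlt1
    haveI : (nhdsWithin x (Set.Ioo x 1)).NeBot := by
      rw [nhdsWithin_Ioo_eq_nhdsGT hxlt1]; infer_instance
    have hRs : R ≤ g' s := by
      refine le_of_tendsto hRt' ?_
      filter_upwards [self_mem_nhdsWithin,
        mem_nhdsWithin_of_mem_nhds (Iio_mem_nhds hxs)] with y hy1 hy2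
      exact hmonoR y hy1.1 hy1.2.le ⟨le_rfl, hy1.2.le⟩ ⟨(le_of_lt hy2), hs1⟩ (le_of_lt hy2)
    linarith
  constructor
  · intro s hs hsx
    rcases lt_or_gt_of_ne hsx with h | h
    · rw [abs_le]
      exact ⟨by linarith [hg'nnL s hs.1 h], hg'le1L s hs.1 h⟩
    · rw [abs_le]
      exact ⟨hg'geR s h hs.2, by linarith [hg'npR s h hs.2]⟩
  · intro s hs
    refine ⟨hgpos s hs, ?_⟩
    have hmono1 : MonotoneOn (fun t => t - g t) (Set.Icc 0 x) := by
      refine monoAux (f' := fun t => 1 - g' t) ?_ ?_ ?_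
      · exact continuousOn_id.sub (hgc.mono (hIcc le_rfl hx1))
      · intro t ht
        exact (hasDerivAt_id t).sub (hgat t ht.1 (ht.2.trans_le hx1) ht.2.ne)
      · intro t ht
        have := hg'le1L t ht.1.le ht.2
        linarith
    have hmono2 : MonotoneOn (fun t => t - g t) (Set.Icc x 1) := by
      refine monoAux (f' := fun t => 1 - g' t) ?_ ?_ ?_
      · exact continuousOn_id.sub (hgc.mono (hIcc hx0.le le_rfl))
      · intro t ht
        exact (hasDerivAt_id t).sub (hgat t (hx0.trans ht.1) ht.2 ht.1.ne')
      · intro t ht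
        have := hg'npR t ht.1 ht.2.le
        linarith
    have hxle : 0 ≤ x - g x := by
      have := hmono1 ⟨le_rfl, hx0.le⟩ ⟨hx0.le, le_rfl⟩ hx0.le
      simpa [hg0] using this
    rcases le_total s x with hsx | hxs
    · have := hmono1 ⟨le_rfl, hx0.le⟩ ⟨hs.1, hsx⟩ hs.1
      simp only [hg0, sub_zero] at this
      linarith
    · have := hmono2 ⟨le_rfl, hx1⟩ ⟨hxs, hs.2⟩ hxs
      dsimp only at this
      linarith
end

section
/- Let κ : [0,1] → ℝ be continuous and nonnegative, and let G be the Green function for σ ↦ σ'' − κ² σ with σ(0)=0, σ'(1)=0. Then G(s,x) ≤ min{s,x} for all s,x ∈ [0,1], and consequently for each p ∈ [0,1], G(s,x) ≤ s^p x^{1-p}. -/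
open Filter

private lemma mono_aux' {f f' : ℝ → ℝ} {a b : ℝ}
    (hcont : ContinuousOn f (Set.Icc a b))
    (hder : ∀ t ∈ Set.Ioo a b, HasDerivAt f (f' t) t)
    (hnn : ∀ t ∈ Set.Ioo a b, 0 ≤ f' t) : MonotoneOn f (Set.Icc a b) := by
  apply monotoneOn_of_deriv_nonneg (convex_Icc a b) hcont
  · rw [interior_Icc]
    exact fun t ht => (hder t ht).differentiableAt.differentiableWithinAt
  · intro t ht
    rw [interior_Icc] at ht
    rw [(hder t ht).deriv]
    exact hnn t ht

theorem stmt_11 (κ : ℝ → ℝ) (hκc : ContinuousOn κ (Set.Icc 0 1))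
    (hκ0 : ∀ s ∈ Set.Icc (0:ℝ) 1, 0 ≤ κ s)
    (x : ℝ) (hx : x ∈ Set.Ioc (0:ℝ) 1)
    (g g' : ℝ → ℝ)
    (hgc : ContinuousOn g (Set.Icc 0 1))
    (hg0 : g 0 = 0)
    (hbc : g' 1 = 0)
    (hd1 : ∀ s ∈ Set.Icc (0:ℝ) 1, s ≠ x → HasDerivWithinAt g (g' s) (Set.Icc 0 1) s)
    (hd2 : ∀ s ∈ Set.Icc (0:ℝ) 1, s ≠ x →
      HasDerivWithinAt g' (κ s ^ 2 * g s) (Set.Icc 0 1) s)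
    (hjump : ∃ L R : ℝ,
      Tendsto g' (nhdsWithin x (Set.Ioo 0 x)) (nhds L) ∧
      (x < 1 → Tendsto g' (nhdsWithin x (Set.Ioo x 1)) (nhds R) ∧ L - R = 1) ∧
      (x = 1 → L = 1)) :
    ∀ s ∈ Set.Icc (0:ℝ) 1,
      g s ≤ min s x ∧ ∀ p ∈ Set.Icc (0:ℝ) 1, g s ≤ s ^ p * x ^ (1 - p) := by
  obtain ⟨hx0, hx1⟩ := hx
  obtain ⟨L, R, hL, hRc, hLx1⟩ := hjump
  -- derivatives at interior points
  have hgd : ∀ t ∈ Set.Ioo (0:ℝ) 1, t ≠ x → HasDerivAt g (g' t) t := fun t ht hne =>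
    (hd1 t ⟨ht.1.le, ht.2.le⟩ hne).hasDerivAt (Icc_mem_nhds ht.1 ht.2)
  have hg'd : ∀ t ∈ Set.Ioo (0:ℝ) 1, t ≠ x → HasDerivAt g' (κ t ^ 2 * g t) t := fun t ht hne =>
    (hd2 t ⟨ht.1.le, ht.2.le⟩ hne).hasDerivAt (Icc_mem_nhds ht.1 ht.2)
  have hg'c : ∀ t ∈ Set.Icc (0:ℝ) 1, t ≠ x → ContinuousWithinAt g' (Set.Icc 0 1) t :=
    fun t ht hne => (hd2 t ht hne).continuousWithinAt
  -- monotonicity of w = g * g' on intervals avoiding x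
  have hwmono : ∀ a b : ℝ, 0 ≤ a → b ≤ 1 → x ∉ Set.Icc a b →
      MonotoneOn (fun t => g t * g' t) (Set.Icc a b) := by
    intro a b ha hb hxab
    have hsub : Set.Icc a b ⊆ Set.Icc (0:ℝ) 1 := Set.Icc_subset_Icc ha hb
    apply mono_aux' (f' := fun t => g' t * g' t + g t * (κ t ^ 2 * g t))
    · exact (hgc.mono hsub).mul
        (fun t ht => ((hg'c t (hsub ht) (fun h => hxab (h ▸ ht))).mono hsub))
    · intro t ht
      have htI : t ∈ Set.Ioo (0:ℝ) 1 :=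
        ⟨lt_of_le_of_lt ha ht.1, lt_of_lt_of_le ht.2 hb⟩
      have hne : t ≠ x := fun h => hxab (h ▸ Set.Ioo_subset_Icc_self ht)
      exact (hgd t htI hne).mul (hg'd t htI hne)
    · intro t ht
      nlinarith [sq_nonneg (g' t), sq_nonneg (κ t * g t)]
  have hw0 : ∀ s, 0 ≤ s → s < x → 0 ≤ g s * g' s := by
    intro s hs hsx
    have hm := hwmono 0 s le_rfl (le_of_lt (lt_of_lt_of_le hsx hx1))
      (fun h => absurd h.2 (not_le.mpr hsx))
    have := hm ⟨le_rfl, hs⟩ ⟨hs, le_rfl⟩ hs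
    simpa [hg0] using this
  have hw1 : ∀ s, x < s → s ≤ 1 → g s * g' s ≤ 0 := by
    intro s hsx hs1
    have hm := hwmono s 1 (le_of_lt (lt_trans hx0 hsx)) le_rfl
      (fun h => absurd h.1 (not_le.mpr hsx))
    have := hm ⟨le_rfl, hs1⟩ ⟨hs1, le_rfl⟩ hs1
    simpa [hbc] using this
  -- g x ≥ 0
  have hnbL : (nhdsWithin x (Set.Ioo 0 x)).NeBot := by
    apply mem_closure_iff_nhdsWithin_neBot.mp
    rw [closure_Ioo (ne_of_lt hx0)]
    exact ⟨hx0.le, le_rfl⟩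
  have hxmem : x ∈ Set.Icc (0:ℝ) 1 := ⟨hx0.le, hx1⟩
  have hgx_tend : Tendsto g (nhdsWithin x (Set.Ioo 0 x)) (nhds (g x)) :=
    (hgc x hxmem).mono (fun t ht => ⟨ht.1.le, le_trans ht.2.le hx1⟩)
  have hgxL : 0 ≤ g x * L := by
    apply ge_of_tendsto (hgx_tend.mul hL)
    filter_upwards [self_mem_nhdsWithin] with s hs
    exact hw0 s hs.1.le hs.2
  have hgx : 0 ≤ g x := by
    rcases eq_or_lt_of_le hx1 with hxe | hxl
    · have hL1 : L = 1 := hLx1 hxe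
      simpa [hL1] using hgxL
    · obtain ⟨hR, hLR⟩ := hRc hxl
      have hnbR : (nhdsWithin x (Set.Ioo x 1)).NeBot := by
        apply mem_closure_iff_nhdsWithin_neBot.mp
        rw [closure_Ioo (ne_of_lt hxl)]
        exact ⟨le_rfl, hxl.le⟩
      have hgx_tend' : Tendsto g (nhdsWithin x (Set.Ioo x 1)) (nhds (g x)) :=
        (hgc x hxmem).mono (fun t ht => ⟨le_trans hx0.le ht.1.le, ht.2.le⟩)
      have hgxR : g x * R ≤ 0 := by
        apply le_of_tendsto (hgx_tend'.mul hR)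
        filter_upwards [self_mem_nhdsWithin] with s hs
        exact hw1 s hs.1 hs.2.le
      nlinarith
  -- g ≥ 0 on [0, x]
  have hnn_left : ∀ s ∈ Set.Icc (0:ℝ) x, 0 ≤ g s := by
    intro s₀ hs₀
    by_contra hneg
    push_neg at hneg
    have hcont : ContinuousOn g (Set.Icc s₀ x) := hgc.mono (Set.Icc_subset_Icc hs₀.1 hx1)
    obtain ⟨b0, hb0mem, hb00⟩ := intermediate_value_Icc hs₀.2 hcont ⟨hneg.le, hgx⟩
    set Z : Set ℝ := Set.Icc s₀ x ∩ g ⁻¹' {0} with hZdef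
    have hZne : Z.Nonempty := ⟨b0, hb0mem, hb00⟩
    have hZdd : BddBelow Z := ⟨s₀, fun t ht => ht.1.1⟩
    have hZclosed : IsClosed Z :=
      hcont.preimage_isClosed_of_isClosed isClosed_Icc isClosed_singleton
    set b := sInf Z with hbdef
    have hbZ : b ∈ Z := hZclosed.csInf_mem hZne hZdd
    have hgb : g b = 0 := hbZ.2
    have hs₀b : s₀ < b := by
      rcases lt_or_eq_of_le hbZ.1.1 with h | h
      · exact h
      · exact absurd hgb (by rw [← h]; exact ne_of_lt hneg)
    have hgneg : ∀ t ∈ Set.Ico s₀ b, g t < 0 := by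
      intro t ht
      by_contra hge
      push_neg at hge
      have htx : t ≤ x := le_trans ht.2.le hbZ.1.2
      have hcont' : ContinuousOn g (Set.Icc s₀ t) :=
        hgc.mono (Set.Icc_subset_Icc hs₀.1 (le_trans htx hx1))
      obtain ⟨c, hc, hgc0⟩ := intermediate_value_Icc ht.1 hcont' ⟨hneg.le, hge⟩
      have hcZ : c ∈ Z := ⟨⟨hc.1, le_trans hc.2 htx⟩, hgc0⟩
      have := csInf_le hZdd hcZ
      linarith [hc.2, ht.2]
    have hanti : MonotoneOn (fun t => -g t) (Set.Icc s₀ b) := by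
      apply mono_aux' (f' := fun t => -(g' t))
      · exact (hgc.mono (Set.Icc_subset_Icc hs₀.1 (le_trans hbZ.1.2 hx1))).neg
      · intro t ht
        have htI : t ∈ Set.Ioo (0:ℝ) 1 :=
          ⟨lt_of_le_of_lt hs₀.1 ht.1, lt_of_lt_of_le ht.2 (le_trans hbZ.1.2 hx1)⟩
        exact (hgd t htI (ne_of_lt (lt_of_lt_of_le ht.2 hbZ.1.2))).neg
      · intro t ht
        have h1 : g t < 0 := hgneg t ⟨ht.1.le, ht.2⟩
        have h2 : 0 ≤ g t * g' t :=
          hw0 t (le_trans hs₀.1 ht.1.le) (lt_of_lt_of_le ht.2 hbZ.1.2)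
        nlinarith
    have := hanti ⟨le_rfl, hs₀b.le⟩ ⟨hs₀b.le, le_rfl⟩ hs₀b.le
    simp only [hgb, neg_zero] at this
    linarith
  -- g ≥ 0 on [x, 1]
  have hnn_right : ∀ s ∈ Set.Icc x 1, 0 ≤ g s := by
    intro s₀ hs₀
    by_contra hneg
    push_neg at hneg
    have hxs₀ : x < s₀ := by
      rcases lt_or_eq_of_le hs₀.1 with h | h
      · exact h
      · exact absurd hneg (by rw [← h]; exact not_lt.mpr hgx)
    have hcont : ContinuousOn g (Set.Icc x s₀) := hgc.mono (Set.Icc_subset_Icc hx0.le hs₀.2)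
    obtain ⟨a0, ha0mem, ha00⟩ := intermediate_value_Icc' hxs₀.le hcont ⟨hneg.le, hgx⟩
    set Z : Set ℝ := Set.Icc x s₀ ∩ g ⁻¹' {0} with hZdef
    have hZne : Z.Nonempty := ⟨a0, ha0mem, ha00⟩
    have hZbd : BddAbove Z := ⟨s₀, fun t ht => ht.1.2⟩
    have hZclosed : IsClosed Z :=
      hcont.preimage_isClosed_of_isClosed isClosed_Icc isClosed_singleton
    set a := sSup Z with hadef
    have haZ : a ∈ Z := hZclosed.csSup_mem hZne hZbd
    have hga : g a = 0 := haZ.2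
    have has₀ : a < s₀ := by
      rcases lt_or_eq_of_le haZ.1.2 with h | h
      · exact h
      · exact absurd hga (by rw [h]; exact ne_of_lt hneg)
    have hgneg : ∀ t ∈ Set.Ioc a s₀, g t < 0 := by
      intro t ht
      by_contra hge
      push_neg at hge
      have hxt : x ≤ t := le_trans haZ.1.1 ht.1.le
      have hcont' : ContinuousOn g (Set.Icc t s₀) :=
        hgc.mono (Set.Icc_subset_Icc (le_trans hx0.le hxt) hs₀.2)
      obtain ⟨c, hc, hgc0⟩ := intermediate_value_Icc' ht.2 hcont' ⟨hneg.le, hge⟩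
      have hcZ : c ∈ Z := ⟨⟨le_trans hxt hc.1, hc.2⟩, hgc0⟩
      have := le_csSup hZbd hcZ
      linarith [hc.1, ht.1]
    have hmono : MonotoneOn g (Set.Icc a s₀) := by
      apply mono_aux' (f' := g')
      · exact hgc.mono (Set.Icc_subset_Icc (le_trans hx0.le haZ.1.1) hs₀.2)
      · intro t ht
        have hxt : x < t := lt_of_le_of_lt haZ.1.1 ht.1
        have htI : t ∈ Set.Ioo (0:ℝ) 1 :=
          ⟨lt_trans hx0 hxt, lt_of_lt_of_le ht.2 hs₀.2⟩
        exact hgd t htI (ne_of_gt hxt)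
      · intro t ht
        have hxt : x < t := lt_of_le_of_lt haZ.1.1 ht.1
        have h1 : g t < 0 := hgneg t ⟨ht.1, ht.2.le⟩
        have h2 : g t * g' t ≤ 0 := hw1 t hxt (le_trans ht.2.le hs₀.2)
        nlinarith
    have := hmono ⟨le_rfl, has₀.le⟩ ⟨has₀.le, le_rfl⟩ has₀.le
    rw [hga] at this
    linarith
  have hgnn : ∀ s ∈ Set.Icc (0:ℝ) 1, 0 ≤ g s := by
    intro s hs
    rcases le_total s x with h | h
    · exact hnn_left s ⟨hs.1, h⟩
    · exact hnn_right s ⟨h, hs.2⟩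
  -- g' monotone on intervals avoiding x
  have hg'mono : ∀ a b : ℝ, 0 ≤ a → b ≤ 1 → x ∉ Set.Icc a b →
      MonotoneOn g' (Set.Icc a b) := by
    intro a b ha hb hxab
    have hsub : Set.Icc a b ⊆ Set.Icc (0:ℝ) 1 := Set.Icc_subset_Icc ha hb
    apply mono_aux' (f' := fun t => κ t ^ 2 * g t)
    · exact fun t ht => (hg'c t (hsub ht) (fun h => hxab (h ▸ ht))).mono hsub
    · intro t ht
      have htI : t ∈ Set.Ioo (0:ℝ) 1 :=
        ⟨lt_of_le_of_lt ha ht.1, lt_of_lt_of_le ht.2 hb⟩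
      exact hg'd t htI (fun h => hxab (h ▸ Set.Ioo_subset_Icc_self ht))
    · intro t ht
      exact mul_nonneg (sq_nonneg _) (hgnn t (hsub (Set.Ioo_subset_Icc_self ht)))
  have hg'le0 : ∀ s, x < s → s ≤ 1 → g' s ≤ 0 := by
    intro s hxs hs1
    have hm := hg'mono s 1 (le_of_lt (lt_trans hx0 hxs)) le_rfl
      (fun h => absurd h.1 (not_le.mpr hxs))
    have := hm ⟨le_rfl, hs1⟩ ⟨hs1, le_rfl⟩ hs1
    rwa [hbc] at this
  have hL1 : L ≤ 1 := by
    rcases eq_or_lt_of_le hx1 with hxe | hxl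
    · exact le_of_eq (hLx1 hxe)
    · obtain ⟨hR, hLR⟩ := hRc hxl
      have hnbR : (nhdsWithin x (Set.Ioo x 1)).NeBot := by
        apply mem_closure_iff_nhdsWithin_neBot.mp
        rw [closure_Ioo (ne_of_lt hxl)]
        exact ⟨le_rfl, hxl.le⟩
      have hR0 : R ≤ 0 := by
        apply le_of_tendsto hR
        filter_upwards [self_mem_nhdsWithin] with s hs
        exact hg'le0 s hs.1 hs.2.le
      linarith
  have hg'leL : ∀ s, 0 ≤ s → s < x → g' s ≤ L := by
    intro s hs hsx
    apply ge_of_tendsto hL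
    filter_upwards [self_mem_nhdsWithin, mem_nhdsWithin_of_mem_nhds (Ioi_mem_nhds hsx)]
      with c hc hsc
    have hm := hg'mono s c hs (le_of_lt (lt_of_lt_of_le hc.2 hx1))
      (fun h => absurd h.2 (not_le.mpr hc.2))
    exact hm ⟨le_rfl, le_of_lt hsc⟩ ⟨le_of_lt hsc, le_rfl⟩ (le_of_lt hsc)
  -- g s ≤ s on [0, x]
  have hgles : ∀ s ∈ Set.Icc (0:ℝ) x, g s ≤ s := by
    intro s hs
    have hmono : MonotoneOn (fun t => t - g t) (Set.Icc (0:ℝ) x) := by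
      apply mono_aux' (f' := fun t => 1 - g' t)
      · exact continuousOn_id.sub (hgc.mono (Set.Icc_subset_Icc le_rfl hx1))
      · intro t ht
        exact (hasDerivAt_id t).sub (hgd t ⟨ht.1, lt_of_lt_of_le ht.2 hx1⟩ (ne_of_lt ht.2))
      · intro t ht
        have := hg'leL t ht.1.le ht.2
        linarith
    have := hmono ⟨le_rfl, hx0.le⟩ hs hs.1
    simp only [hg0, sub_zero] at this
    linarith
  -- g decreasing on [x, 1]
  have hgdec : ∀ s ∈ Set.Icc x 1, g s ≤ g x := by
    intro s hs
    have hmono : MonotoneOn (fun t => -g t) (Set.Icc x 1) := by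
      apply mono_aux' (f' := fun t => -(g' t))
      · exact (hgc.mono (Set.Icc_subset_Icc hx0.le le_rfl)).neg
      · intro t ht
        exact (hgd t ⟨lt_trans hx0 ht.1, ht.2⟩ (ne_of_gt ht.1)).neg
      · intro t ht
        have := hg'le0 t ht.1 ht.2.le
        linarith
    have h2 : -g x ≤ -g s := hmono ⟨le_rfl, hx1⟩ hs hs.1
    linarith
  -- conclusion
  intro s hsI
  have hmain : g s ≤ min s x := by
    rcases le_total s x with hsx | hxs
    · rw [min_eq_left hsx]
      exact hgles s ⟨hsI.1, hsx⟩
    · rw [min_eq_right hxs]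
      exact le_trans (hgdec s ⟨hxs, hsI.2⟩) (hgles x ⟨hx0.le, le_rfl⟩)
  refine ⟨hmain, fun p hp => ?_⟩
  have hm0 : 0 ≤ min s x := le_min hsI.1 hx0.le
  have key : min s x ≤ s ^ p * x ^ (1 - p) := by
    rcases eq_or_lt_of_le hm0 with h0 | hpos
    · rw [← h0]
      exact mul_nonneg (Real.rpow_nonneg hsI.1 p) (Real.rpow_nonneg hx0.le _)
    · have h1 : p + (1 - p) = 1 := by ring
      calc min s x = (min s x) ^ p * (min s x) ^ (1 - p) := by
            rw [← Real.rpow_add hpos, h1, Real.rpow_one]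
        _ ≤ s ^ p * x ^ (1 - p) :=
            mul_le_mul (Real.rpow_le_rpow hm0 (min_le_left s x) hp.1)
              (Real.rpow_le_rpow hm0 (min_le_right s x) (by linarith [hp.2]))
              (Real.rpow_nonneg hm0 _) (Real.rpow_nonneg hsI.1 _)
  exact le_trans hmain key
end

section
/- Let κ : [0,1] → ℝ be continuous with ϱ = ∫₀¹ s κ(s)² ds < ∞, and let G be the Green function for σ ↦ σ'' − κ² σ with σ(0)=0, σ'(1)=0. Then inf_{0<s,x≤1} G(s,x)/(s x) ≥ e^{-ϱ}/(1+ϱ). -/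
open Filter MeasureTheory intervalIntegral Set

private lemma ftc_aux {f f' : ℝ → ℝ} {a b : ℝ} (hab : a ≤ b)
    (hcont : ContinuousOn f (Set.Icc a b))
    (hderiv : ∀ u ∈ Set.Ioo a b, HasDerivAt f (f' u) u)
    (hint : ContinuousOn f' (Set.Icc a b)) :
    ∫ u in a..b, f' u = f b - f a :=
  intervalIntegral.integral_eq_sub_of_hasDeriv_right_of_le hab hcont
    (fun u hu => (hderiv u hu).hasDerivWithinAt)
    (hint.intervalIntegrable_of_Icc hab)

private lemma prim_hasDerivAt {f : ℝ → ℝ} (hf : ContinuousOn f (Set.Icc 0 1)) {a s : ℝ}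
    (ha : a ∈ Set.Icc (0:ℝ) 1) (hs : s ∈ Set.Ioo (0:ℝ) 1) :
    HasDerivAt (fun t => ∫ u in a..t, f u) (f s) s := by
  refine intervalIntegral.integral_hasDerivAt_right
    ((hf.mono (Set.uIcc_subset_Icc ha (Set.Ioo_subset_Icc_self hs))).intervalIntegrable)
    ((hf.mono Set.Ioo_subset_Icc_self).stronglyMeasurableAtFilter isOpen_Ioo s hs)
    ((hf s (Set.Ioo_subset_Icc_self hs)).continuousAt (Icc_mem_nhds hs.1 hs.2))

private lemma prim_cont {f : ℝ → ℝ} (hf : ContinuousOn f (Set.Icc 0 1)) :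
    ContinuousOn (fun t => ∫ u in (0:ℝ)..t, f u) (Set.Icc 0 1) := by
  have h : IntegrableOn f (Set.uIcc (0:ℝ) 1) volume := by
    rw [Set.uIcc_of_le zero_le_one]
    exact hf.integrableOn_Icc
  simpa [Set.uIcc_of_le (zero_le_one (α := ℝ))] using
    intervalIntegral.continuousOn_primitive_interval h


set_option maxHeartbeats 1000000 in
theorem stmt_12 (κ : ℝ → ℝ) (hκc : ContinuousOn κ (Set.Icc 0 1))
    (x : ℝ) (hx : x ∈ Set.Ioc (0:ℝ) 1)
    (g g' : ℝ → ℝ)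
    (hgc : ContinuousOn g (Set.Icc 0 1))
    (hg0 : g 0 = 0)
    (hbc : g' 1 = 0)
    (hd1 : ∀ s ∈ Set.Icc (0:ℝ) 1, s ≠ x → HasDerivWithinAt g (g' s) (Set.Icc 0 1) s)
    (hd2 : ∀ s ∈ Set.Icc (0:ℝ) 1, s ≠ x →
      HasDerivWithinAt g' (κ s ^ 2 * g s) (Set.Icc 0 1) s)
    (hjump : ∃ L R : ℝ,
      Tendsto g' (nhdsWithin x (Set.Ioo 0 x)) (nhds L) ∧
      (x < 1 → Tendsto g' (nhdsWithin x (Set.Ioo x 1)) (nhds R) ∧ L - R = 1) ∧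
      (x = 1 → L = 1)) :
    ∀ s ∈ Set.Ioc (0:ℝ) 1,
      Real.exp (-(∫ u in (0:ℝ)..1, u * κ u ^ 2)) / (1 + ∫ u in (0:ℝ)..1, u * κ u ^ 2) ≤
        g s / (s * x) := by
  obtain ⟨hx0, hx1⟩ := hx
  obtain ⟨L, R, hLt, hRt, hL1⟩ := hjump
  set K : ℝ → ℝ := fun u => κ u ^ 2 * g u with hK
  have hKc : ContinuousOn K (Set.Icc 0 1) := (hκc.pow 2).mul hgc
  have hg'cw : ∀ u ∈ Set.Icc (0:ℝ) 1, u ≠ x → ContinuousWithinAt g' (Set.Icc 0 1) u :=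
    fun u hu hne => (hd2 u hu hne).continuousWithinAt
  have hgat : ∀ u ∈ Set.Ioo (0:ℝ) 1, u ≠ x → HasDerivAt g (g' u) u := fun u hu hne =>
    (hd1 u (Set.Ioo_subset_Icc_self hu) hne).hasDerivAt (Icc_mem_nhds hu.1 hu.2)
  have hg'at : ∀ u ∈ Set.Ioo (0:ℝ) 1, u ≠ x → HasDerivAt g' (K u) u := fun u hu hne =>
    (hd2 u (Set.Ioo_subset_Icc_self hu) hne).hasDerivAt (Icc_mem_nhds hu.1 hu.2)
  -- x is not a minimum point of g on [0,1]
  have hNotMin : ¬ (∀ t ∈ Set.Icc (0:ℝ) 1, g x ≤ g t) := by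
    intro H
    have hLle : L ≤ 0 := by
      have hfreq : ∃ᶠ u in nhdsWithin x (Set.Ioo 0 x), g' u ∈ Set.Iic (0:ℝ) := by
        rw [Filter.frequently_iff]
        intro U hU
        rw [mem_nhdsWithin] at hU
        obtain ⟨V, hVopen, hxV, hVU⟩ := hU
        obtain ⟨ε, hε, hball⟩ := Metric.isOpen_iff.mp hVopen x hxV
        set a : ℝ := max (x - ε / 2) (x / 2) with ha
        have hax : a < x := max_lt (by linarith) (by linarith)
        have ha0 : 0 < a := lt_of_lt_of_le (by linarith) (le_max_right _ _)
        have hsub : Set.Icc a x ⊆ Set.Icc 0 1 := Set.Icc_subset_Icc ha0.le hx1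
        obtain ⟨ξ, hξ, hsl⟩ := exists_hasDerivAt_eq_slope g g' hax (hgc.mono hsub)
          (fun u hu => hgat u ⟨lt_trans ha0 hu.1, lt_of_lt_of_le hu.2 hx1⟩ (ne_of_lt hu.2))
        refine ⟨ξ, hVU ⟨hball ?_, ha0.trans hξ.1, hξ.2⟩, ?_⟩
        · rw [Metric.mem_ball, Real.dist_eq, abs_lt]
          constructor
          · have : x - ε / 2 ≤ a := le_max_left _ _
            linarith [hξ.1]
          · linarith [hξ.2]
        · rw [Set.mem_Iic, hsl]
          apply div_nonpos_of_nonpos_of_nonneg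
          · have := H a (hsub ⟨le_refl a, hax.le⟩)
            linarith
          · linarith [hξ.2]
      have := mem_closure_of_frequently_of_tendsto hfreq hLt
      rwa [isClosed_Iic.closure_eq, Set.mem_Iic] at this
    rcases eq_or_lt_of_le hx1 with hx1' | hx1'
    · have := hL1 hx1'; linarith
    · obtain ⟨hRt', hLR⟩ := hRt hx1'
      have hRge : 0 ≤ R := by
        have hfreq : ∃ᶠ u in nhdsWithin x (Set.Ioo x 1), g' u ∈ Set.Ici (0:ℝ) := by
          rw [Filter.frequently_iff]
          intro U hU
          rw [mem_nhdsWithin] at hU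
          obtain ⟨V, hVopen, hxV, hVU⟩ := hU
          obtain ⟨ε, hε, hball⟩ := Metric.isOpen_iff.mp hVopen x hxV
          set b : ℝ := min (x + ε / 2) ((x + 1) / 2) with hb
          have hxb : x < b := lt_min (by linarith) (by linarith)
          have hb1 : b < 1 := lt_of_le_of_lt (min_le_right _ _) (by linarith)
          have hsub : Set.Icc x b ⊆ Set.Icc 0 1 := Set.Icc_subset_Icc hx0.le hb1.le
          obtain ⟨ξ, hξ, hsl⟩ := exists_hasDerivAt_eq_slope g g' hxb (hgc.mono hsub)
            (fun u hu => hgat u ⟨hx0.trans hu.1, hu.2.trans hb1⟩ (ne_of_gt hu.1))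
          refine ⟨ξ, hVU ⟨hball ?_, hξ.1, hξ.2.trans hb1⟩, ?_⟩
          · rw [Metric.mem_ball, Real.dist_eq, abs_lt]
            have : b ≤ x + ε / 2 := min_le_left _ _
            constructor <;> [linarith [hξ.1]; linarith [hξ.2]]
          · rw [Set.mem_Ici, hsl]
            apply div_nonneg
            · have := H b (hsub ⟨hxb.le, le_refl b⟩)
              linarith
            · linarith [hξ.1]
        have := mem_closure_of_frequently_of_tendsto hfreq hRt'
        rwa [isClosed_Ici.closure_eq, Set.mem_Ici] at this
      linarith
  -- g is nonnegative on [0,1]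
  have hg_nonneg : ∀ t ∈ Set.Icc (0:ℝ) 1, 0 ≤ g t := by
    by_contra hcon
    push_neg at hcon
    obtain ⟨t₀, ht₀, ht₀neg⟩ := hcon
    obtain ⟨s₀, hs₀mem, hs₀min⟩ := isCompact_Icc.exists_isMinOn ⟨0, Set.left_mem_Icc.mpr zero_le_one⟩ hgc
    have hs₀min' : ∀ t ∈ Set.Icc (0:ℝ) 1, g s₀ ≤ g t := fun t ht => hs₀min ht
    have hm : g s₀ < 0 := lt_of_le_of_lt (hs₀min' t₀ ht₀) ht₀neg
    have hs₀x : s₀ ≠ x := by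
      intro h
      exact hNotMin (fun t ht => h ▸ hs₀min' t ht)
    have hs₀0 : 0 < s₀ := by
      rcases hs₀mem.1.lt_or_eq with h | h
      · exact h
      · exfalso; rw [← h, hg0] at hm; exact absurd hm (lt_irrefl 0)
    -- the last zero of g before s₀
    set Z : Set ℝ := Set.Icc 0 s₀ ∩ g ⁻¹' {0} with hZ
    have hZclosed : IsClosed Z :=
      (hgc.mono (Set.Icc_subset_Icc (le_refl 0) hs₀mem.2)).preimage_isClosed_of_isClosed
        isClosed_Icc isClosed_singleton
    have hZcpt : IsCompact Z := isCompact_Icc.of_isClosed_subset hZclosed Set.inter_subset_left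
    have hZne : Z.Nonempty := ⟨0, ⟨le_refl 0, hs₀0.le⟩, hg0⟩
    set z : ℝ := sSup Z with hz
    have hzZ : z ∈ Z := hZcpt.sSup_mem hZne
    have hz0 : 0 ≤ z := hzZ.1.1
    have hgz : g z = 0 := hzZ.2
    have hzs₀ : z < s₀ := lt_of_le_of_ne hzZ.1.2 (by intro h; rw [h] at hgz; linarith)
    have hzub : ∀ w ∈ Z, w ≤ z := fun w hw => le_csSup hZcpt.bddAbove hw
    have hs₀1 : s₀ ≤ 1 := hs₀mem.2
    have hneg : ∀ u ∈ Set.Ioc z s₀, g u < 0 := by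
      intro u hu
      by_contra hge
      push_neg at hge
      rcases hge.lt_or_eq with hpos | heq
      · have hus₀ : u ≠ s₀ := by intro h; rw [h] at hpos; linarith
        have hus₀' : u < s₀ := lt_of_le_of_ne hu.2 hus₀
        have hsub : Set.Icc u s₀ ⊆ Set.Icc 0 1 :=
          Set.Icc_subset_Icc (hz0.trans hu.1.le) hs₀1
        have : (0:ℝ) ∈ Set.Ioo (g s₀) (g u) := ⟨hm, hpos⟩
        obtain ⟨w, hw, hgw⟩ := intermediate_value_Ioo' hus₀'.le (hgc.mono hsub) this
        have : w ≤ z := hzub w ⟨⟨hz0.trans (hu.1.trans hw.1).le, hw.2.le⟩, hgw⟩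
        linarith [hu.1, hw.1]
      · have : u ≤ z := hzub u ⟨⟨hz0.trans hu.1.le, hu.2⟩, heq.symm⟩
        linarith [hu.1]
    -- monotonicity claim on intervals avoiding x
    have hkeymono : ∀ c, z ≤ c → c < s₀ → x ∉ Set.Ioo c s₀ → g c ≤ g s₀ := by
      intro c hzc hcs₀ hxout
      have hc0 : 0 ≤ c := hz0.trans hzc
      -- derivative of g at s₀ is nonpositive-ish: in fact g' s₀ = 0 or s₀ = 1 with hbc
      have hg's₀ : g' s₀ = 0 := by
        rcases hs₀1.lt_or_eq with hs₀lt | hs₀eq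
        · have hloc : IsLocalMin g s₀ :=
            hs₀min.isLocalMin (Icc_mem_nhds hs₀0 hs₀lt)
          exact hloc.hasDerivAt_eq_zero (hgat s₀ ⟨hs₀0, hs₀lt⟩ hs₀x)
        · rw [hs₀eq]; exact hbc
      have hg'nonneg : ∀ a ∈ Set.Ioo c s₀, 0 ≤ g' a := by
        intro a ha
        have ha0 : 0 < a := lt_of_le_of_lt hc0 ha.1
        have hanti : AntitoneOn g' (Set.Icc a s₀) := by
          apply antitoneOn_of_hasDerivWithinAt_nonpos (convex_Icc a s₀)
          · intro u hu
            have hu01 : u ∈ Set.Icc (0:ℝ) 1 := ⟨ha0.le.trans hu.1, hu.2.trans hs₀1⟩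
            have hux : u ≠ x := by
              rcases hu.2.lt_or_eq with h | h
              · exact fun he => hxout (he ▸ ⟨lt_of_lt_of_le ha.1 hu.1, h⟩)
              · rw [h]; exact hs₀x
            exact (hg'cw u hu01 hux).mono (Set.Icc_subset_Icc (hc0.trans ha.1.le) hs₀1)
          · rw [interior_Icc]
            intro u hu
            have hu' : u ∈ Set.Ioo (0:ℝ) 1 := ⟨ha0.trans hu.1, lt_of_lt_of_le hu.2 hs₀1⟩
            have hux : u ≠ x := fun he => hxout (he ▸ ⟨lt_of_lt_of_le ha.1 hu.1.le, hu.2⟩)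
            exact (hg'at u hu' hux).hasDerivWithinAt
          · rw [interior_Icc]
            intro u hu
            have hgu : g u < 0 := hneg u ⟨lt_of_le_of_lt hzc (lt_of_lt_of_le ha.1 hu.1.le), hu.2.le⟩
            exact mul_nonpos_of_nonneg_of_nonpos (sq_nonneg _) hgu.le
        have := hanti ⟨le_refl a, ha.2.le⟩ ⟨ha.2.le, le_refl s₀⟩ ha.2.le
        rw [hg's₀] at this
        exact this
      have hmono : MonotoneOn g (Set.Icc c s₀) := by
        apply monotoneOn_of_hasDerivWithinAt_nonneg (convex_Icc c s₀)
          (hgc.mono (Set.Icc_subset_Icc hc0 hs₀1))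
        · rw [interior_Icc]
          intro u hu
          have hu' : u ∈ Set.Ioo (0:ℝ) 1 := ⟨lt_of_le_of_lt hc0 hu.1, lt_of_lt_of_le hu.2 hs₀1⟩
          have hux : u ≠ x := fun he => hxout (he ▸ hu)
          exact (hgat u hu' hux).hasDerivWithinAt
        · rw [interior_Icc]; exact hg'nonneg
      exact hmono ⟨le_refl c, hcs₀.le⟩ ⟨hcs₀.le, le_refl s₀⟩ hcs₀.le
    -- now the case analysis
    rcases lt_or_ge x s₀ with hxs | hsx
    · rcases le_or_gt x z with hxz | hzx
      · have := hkeymono z (le_refl z) hzs₀ (fun hmem => absurd hmem.1 (not_lt.mpr (hxz.trans (le_refl z))))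
        rw [hgz] at this; linarith
      · have := hkeymono x hzx.le hxs (fun hmem => absurd hmem.1 (lt_irrefl x))
        exact hNotMin (fun t ht => le_trans this (hs₀min' t ht))
    · have hxs' : s₀ < x := lt_of_le_of_ne hsx hs₀x
      have := hkeymono z (le_refl z) hzs₀ (fun hmem => absurd (hmem.2.trans hxs') (lt_irrefl x))
      rw [hgz] at this; linarith
  have hgx_pos : 0 < g x := by
    rcases (hg_nonneg x ⟨hx0.le, hx1⟩).lt_or_eq with h | h
    · exact h
    · exact absurd (fun t ht => le_trans h.ge (hg_nonneg t ht)) hNotMin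
  have hftc1 : ∀ a b : ℝ, 0 ≤ a → a ≤ b → b < x → ∫ u in a..b, K u = g' b - g' a := by
    intro a b ha hab hbx
    have hsub : Set.Icc a b ⊆ Set.Icc 0 1 := Set.Icc_subset_Icc ha (hbx.le.trans hx1)
    refine ftc_aux hab ?_ ?_ (hKc.mono hsub)
    · intro u hu
      exact (hg'cw u (hsub hu) (ne_of_lt (lt_of_le_of_lt hu.2 hbx))).mono hsub
    · intro u hu
      exact hg'at u ⟨lt_of_le_of_lt ha hu.1, lt_of_lt_of_le (hu.2.trans hbx) hx1⟩
        (ne_of_lt (hu.2.trans hbx))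
  have hftc2 : ∀ a : ℝ, x < a → a ≤ 1 → g' a = -∫ u in a..1, K u := by
    intro a hxa ha1
    have hsub : Set.Icc a 1 ⊆ Set.Icc 0 1 := Set.Icc_subset_Icc (hx0.le.trans hxa.le) le_rfl
    have heq := ftc_aux ha1
      (fun u hu => (hg'cw u (hsub hu) (ne_of_gt (lt_of_lt_of_le hxa hu.1))).mono hsub)
      (fun u hu => hg'at u ⟨hx0.trans (hxa.trans hu.1), hu.2⟩ (ne_of_gt (hxa.trans hu.1)))
      (hKc.mono hsub)
    rw [hbc] at heq
    linarith [heq]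
  have hp : ∀ b : ℝ, 0 < b → b < x → 0 ≤ b * g' b - g b := by
    intro b hb0 hbx
    have hbx1 : b < 1 := lt_of_lt_of_le hbx hx1
    have hsub : Set.Icc 0 b ⊆ Set.Icc (0:ℝ) 1 := Set.Icc_subset_Icc le_rfl hbx1.le
    have hmono : MonotoneOn (fun t => t * g' t - g t) (Set.Icc 0 b) := by
      apply monotoneOn_of_hasDerivWithinAt_nonneg (convex_Icc 0 b)
        (f' := fun t => t * K t) ?_ ?_ ?_
      · intro u hu
        exact (continuousWithinAt_id.mul
          ((hg'cw u (hsub hu) (ne_of_lt (lt_of_le_of_lt hu.2 hbx))).mono hsub)).sub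
          ((hgc u (hsub hu)).mono hsub)
      · rw [interior_Icc]
        intro u hu
        have hu' : u ∈ Set.Ioo (0:ℝ) 1 := ⟨hu.1, lt_trans hu.2 hbx1⟩
        have hux : u ≠ x := ne_of_lt (lt_trans hu.2 hbx)
        have H := ((hasDerivAt_id' u).mul (hg'at u hu' hux)).sub (hgat u hu' hux)
        have he : 1 * g' u + u * K u - g' u = u * K u := by ring
        rw [he] at H
        exact H.hasDerivWithinAt
      · rw [interior_Icc]
        intro u hu
        exact mul_nonneg hu.1.le (mul_nonneg (sq_nonneg _)
          (hg_nonneg u (hsub (Set.Ioo_subset_Icc_self hu))))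
    have := hmono (Set.left_mem_Icc.mpr hb0.le) (Set.right_mem_Icc.mpr hb0.le) hb0.le
    simpa [hg0] using this
  have hmono_h : ∀ a b : ℝ, 0 < a → a ≤ b → b < x → g a / a ≤ g b / b := by
    intro a b ha0 hab hbx
    have hbx1 : b < 1 := lt_of_lt_of_le hbx hx1
    have hsub : Set.Icc a b ⊆ Set.Icc (0:ℝ) 1 := Set.Icc_subset_Icc ha0.le hbx1.le
    have hmono : MonotoneOn (fun t => g t / t) (Set.Icc a b) := by
      apply monotoneOn_of_hasDerivWithinAt_nonneg (convex_Icc a b)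
        (f' := fun u => (g' u * u - g u * 1) / u ^ 2) ?_ ?_ ?_
      · exact (hgc.mono hsub).div continuousOn_id
          (fun u hu => ne_of_gt (lt_of_lt_of_le ha0 hu.1))
      · rw [interior_Icc]
        intro u hu
        have hu' : u ∈ Set.Ioo (0:ℝ) 1 := ⟨ha0.trans hu.1, lt_trans hu.2 hbx1⟩
        exact ((hgat u hu' (ne_of_lt (hu.2.trans hbx))).div (hasDerivAt_id' u)
          (ne_of_gt (ha0.trans hu.1))).hasDerivWithinAt
      · rw [interior_Icc]
        intro u hu
        apply div_nonneg ?_ (sq_nonneg u)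
        have := hp u (ha0.trans hu.1) (hu.2.trans hbx)
        linarith [this]
    exact hmono (Set.left_mem_Icc.mpr hab) (Set.right_mem_Icc.mpr hab) hab
  have hNB1 : (nhdsWithin x (Set.Ioo 0 x)).NeBot := by
    apply mem_closure_iff_nhdsWithin_neBot.mp
    rw [closure_Ioo (ne_of_lt hx0)]
    exact ⟨hx0.le, le_rfl⟩
  have hNB0 : (nhdsWithin 0 (Set.Ioo 0 x)).NeBot := by
    apply mem_closure_iff_nhdsWithin_neBot.mp
    rw [closure_Ioo (ne_of_lt hx0)]
    exact ⟨le_rfl, hx0.le⟩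
  have hlimx : Tendsto (fun u => g u / u) (nhdsWithin x (Set.Ioo 0 x)) (nhds (g x / x)) := by
    have h1 : ContinuousWithinAt (fun u => g u / u) (Set.Ioo 0 x) x := by
      apply ContinuousWithinAt.div
      · exact ((hgc x ⟨hx0.le, hx1⟩).mono (fun u hu => ⟨hu.1.le, hu.2.le.trans hx1⟩))
      · exact continuousWithinAt_id
      · exact ne_of_gt hx0
    exact h1.tendsto
  have hhub : ∀ u : ℝ, 0 < u → u < x → g u / u ≤ g x / x := by
    intro u hu0 hux
    refine ge_of_tendsto hlimx ?_
    have h1 : ∀ᶠ b in nhdsWithin x (Set.Ioo 0 x), u < b :=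
      Filter.Eventually.filter_mono nhdsWithin_le_nhds (eventually_gt_nhds hux)
    filter_upwards [self_mem_nhdsWithin, h1] with b hb hub
    exact hmono_h u b hu0 hub.le hb.2
  have hg_anti : AntitoneOn g (Set.Icc x 1) := by
    rcases hx1.lt_or_eq with hxlt | hxeq
    · apply antitoneOn_of_hasDerivWithinAt_nonpos (convex_Icc x 1)
        (hgc.mono (Set.Icc_subset_Icc hx0.le le_rfl)) (f' := g') ?_ ?_
      · rw [interior_Icc]
        intro u hu
        exact (hgat u ⟨hx0.trans hu.1, hu.2⟩ (ne_of_gt hu.1)).hasDerivWithinAt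
      · rw [interior_Icc]
        intro u hu
        rw [hftc2 u hu.1 hu.2.le]
        apply neg_nonpos_of_nonneg
        apply intervalIntegral.integral_nonneg hu.2.le
        intro w hw
        exact mul_nonneg (sq_nonneg _)
          (hg_nonneg w ⟨((hx0.trans hu.1).le.trans hw.1), hw.2⟩)
    · intro a ha b hb hab
      have : a = b := le_antisymm hab (hb.2.trans (hxeq ▸ ha.1))
      rw [this]
  have hsubIoo : Set.Ioo 0 x ⊆ Set.Icc (0:ℝ) 1 := fun u hu => ⟨hu.1.le, hu.2.le.trans hx1⟩
  have hIcont : ContinuousOn (fun t => ∫ u in (0:ℝ)..t, K u) (Set.Icc 0 1) := prim_cont hKc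
  have hg'eq : ∀ b : ℝ, 0 < b → b < x → g' b = g' 0 + ∫ u in (0:ℝ)..b, K u := by
    intro b hb0 hbx
    have := hftc1 0 b le_rfl hb0.le hbx
    linarith [this]
  have hLval : L = g' 0 + ∫ u in (0:ℝ)..x, K u := by
    have T1 : Tendsto (fun b => g' 0 + ∫ u in (0:ℝ)..b, K u)
        (nhdsWithin x (Set.Ioo 0 x)) (nhds (g' 0 + ∫ u in (0:ℝ)..x, K u)) :=
      tendsto_const_nhds.add (((hIcont x ⟨hx0.le, hx1⟩).mono hsubIoo).tendsto)
    have T2 : Tendsto g' (nhdsWithin x (Set.Ioo 0 x))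
        (nhds (g' 0 + ∫ u in (0:ℝ)..x, K u)) := by
      refine T1.congr' ?_
      filter_upwards [self_mem_nhdsWithin] with b hb
      exact (hg'eq b hb.1 hb.2).symm
    exact (tendsto_nhds_unique hLt T2)
  have hkey : g' 0 + (∫ u in (0:ℝ)..1, K u) = 1 := by
    rcases hx1.lt_or_eq with hxlt | hxeq
    · obtain ⟨hRt', hLR⟩ := hRt hxlt
      have hadd : ∀ b : ℝ, 0 ≤ b → b ≤ 1 →
          (∫ u in (0:ℝ)..b, K u) + (∫ u in b..1, K u) = ∫ u in (0:ℝ)..1, K u := by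
        intro b hb0 hb1
        exact intervalIntegral.integral_add_adjacent_intervals
          ((hKc.mono (Set.Icc_subset_Icc le_rfl hb1)).intervalIntegrable_of_Icc hb0)
          ((hKc.mono (Set.Icc_subset_Icc hb0 le_rfl)).intervalIntegrable_of_Icc hb1)
      have hNBr : (nhdsWithin x (Set.Ioo x 1)).NeBot := by
        apply mem_closure_iff_nhdsWithin_neBot.mp
        rw [closure_Ioo (ne_of_lt hxlt)]
        exact ⟨le_rfl, hxlt.le⟩
      have hRval : R = (∫ u in (0:ℝ)..x, K u) - ∫ u in (0:ℝ)..1, K u := by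
        have T1 : Tendsto (fun b => (∫ u in (0:ℝ)..b, K u) - ∫ u in (0:ℝ)..1, K u)
            (nhdsWithin x (Set.Ioo x 1))
            (nhds ((∫ u in (0:ℝ)..x, K u) - ∫ u in (0:ℝ)..1, K u)) :=
          (((hIcont x ⟨hx0.le, hx1⟩).mono
            (fun u hu => ⟨(hx0.trans hu.1).le, hu.2.le⟩)).tendsto).sub tendsto_const_nhds
        have T2 : Tendsto g' (nhdsWithin x (Set.Ioo x 1))
            (nhds ((∫ u in (0:ℝ)..x, K u) - ∫ u in (0:ℝ)..1, K u)) := by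
          refine T1.congr' ?_
          filter_upwards [self_mem_nhdsWithin] with b hb
          have h1 := hftc2 b hb.1 hb.2.le
          have h2 := hadd b (hx0.trans hb.1).le hb.2.le
          rw [h1]
          linarith [h2]
        exact tendsto_nhds_unique hRt' T2
      have h3 := hadd x hx0.le hx1
      rw [hLval, hRval] at hLR
      linarith [hLR, h3]
    · have h1 := hL1 hxeq
      rw [hLval, hxeq] at h1
      exact h1
  have hg'0le : g' 0 ≤ g x / x := by
    have hsub0 : Set.Ioo 0 x ⊆ Set.Icc (0:ℝ) 1 \ {0} :=
      fun u hu => ⟨hsubIoo hu, ne_of_gt hu.1⟩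
    have hslope : Tendsto (fun u => g u / u) (nhdsWithin 0 (Set.Ioo 0 x)) (nhds (g' 0)) := by
      have h1 := (hasDerivWithinAt_iff_tendsto_slope.mp
        (hd1 0 ⟨le_rfl, zero_le_one⟩ (ne_of_lt hx0)))
      have h2 := h1.mono_left (nhdsWithin_mono 0 hsub0)
      refine h2.congr (fun u => ?_)
      rw [slope_def_field, hg0, sub_zero, sub_zero]
    refine le_of_tendsto hslope ?_
    filter_upwards [self_mem_nhdsWithin] with u hu
    exact hhub u hu.1 hu.2
  have hϱ0 : 0 ≤ ∫ u in (0:ℝ)..1, u * κ u ^ 2 :=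
    intervalIntegral.integral_nonneg zero_le_one (fun u hu => mul_nonneg hu.1 (sq_nonneg _))
  have hgxd : 0 ≤ g x / x := div_nonneg hgx_pos.le hx0.le
  have hgu_ub : ∀ u ∈ Set.Icc (0:ℝ) 1, g u ≤ (g x / x) * u := by
    intro u hu
    rcases lt_trichotomy u x with h | h | h
    · rcases hu.1.lt_or_eq with hu0 | hu0
      · exact (div_le_iff₀ hu0).mp (hhub u hu0 h)
      · rw [← hu0, hg0, mul_zero]
    · rw [h, div_mul_cancel₀ _ (ne_of_gt hx0)]
    · have h1 : g u ≤ g x := hg_anti ⟨le_rfl, hx1⟩ ⟨h.le, hu.2⟩ h.le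
      have h2 : (g x / x) * x ≤ (g x / x) * u := mul_le_mul_of_nonneg_left h.le hgxd
      rw [div_mul_cancel₀ _ (ne_of_gt hx0)] at h2
      linarith
  have hIK : (∫ u in (0:ℝ)..1, K u) ≤ (g x / x) * ∫ u in (0:ℝ)..1, u * κ u ^ 2 := by
    rw [← intervalIntegral.integral_const_mul]
    apply intervalIntegral.integral_mono_on zero_le_one
      (hKc.intervalIntegrable_of_Icc zero_le_one)
      ((continuousOn_const.mul (continuousOn_id.mul (hκc.pow 2))).intervalIntegrable_of_Icc
        zero_le_one)
    intro u hu
    calc κ u ^ 2 * g u ≤ κ u ^ 2 * ((g x / x) * u) :=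
          mul_le_mul_of_nonneg_left (hgu_ub u hu) (sq_nonneg _)
      _ = (g x / x) * (u * κ u ^ 2) := by ring
  have h1ϱ : 0 < 1 + ∫ u in (0:ℝ)..1, u * κ u ^ 2 := by linarith
  have hgxx : 1 / (1 + ∫ u in (0:ℝ)..1, u * κ u ^ 2) ≤ g x / x := by
    rw [div_le_iff₀ h1ϱ]
    have h2 : (1:ℝ) ≤ g x / x + (g x / x) * ∫ u in (0:ℝ)..1, u * κ u ^ 2 := by
      linarith [hkey, hg'0le, hIK]
    calc (1:ℝ) ≤ g x / x + (g x / x) * ∫ u in (0:ℝ)..1, u * κ u ^ 2 := h2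
      _ = (g x / x) * (1 + ∫ u in (0:ℝ)..1, u * κ u ^ 2) := by ring
  -- primitives and their basic bounds
  have hc₁ : ContinuousOn (fun u : ℝ => u * κ u ^ 2) (Set.Icc 0 1) :=
    continuousOn_id.mul (hκc.pow 2)
  have hc₂ : ContinuousOn (fun u : ℝ => u ^ 2 * κ u ^ 2) (Set.Icc 0 1) :=
    (continuousOn_id.pow 2).mul (hκc.pow 2)
  have hF₁cont : ContinuousOn (fun t => ∫ u in (0:ℝ)..t, u * κ u ^ 2) (Set.Icc 0 1) :=
    prim_cont hc₁
  have hF₂cont : ContinuousOn (fun t => ∫ u in (0:ℝ)..t, u ^ 2 * κ u ^ 2) (Set.Icc 0 1) :=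
    prim_cont hc₂
  have hF₂nonneg : ∀ t : ℝ, 0 ≤ t → 0 ≤ ∫ u in (0:ℝ)..t, u ^ 2 * κ u ^ 2 := fun t ht =>
    intervalIntegral.integral_nonneg ht (fun u hu => mul_nonneg (sq_nonneg _) (sq_nonneg _))
  have hF₂le : ∀ t : ℝ, 0 < t → t ≤ 1 →
      (∫ u in (0:ℝ)..t, u ^ 2 * κ u ^ 2) ≤ t * ∫ u in (0:ℝ)..t, u * κ u ^ 2 := by
    intro t ht0 ht1
    rw [← intervalIntegral.integral_const_mul]
    apply intervalIntegral.integral_mono_on ht0.le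
      ((hc₂.mono (Set.Icc_subset_Icc le_rfl ht1)).intervalIntegrable_of_Icc ht0.le)
      (((continuousOn_const.mul hc₁).mono (Set.Icc_subset_Icc le_rfl ht1)).intervalIntegrable_of_Icc
        ht0.le)
    intro u hu
    show u ^ 2 * κ u ^ 2 ≤ t * (u * κ u ^ 2)
    nlinarith [mul_nonneg (mul_nonneg (sub_nonneg.mpr hu.2) hu.1) (sq_nonneg (κ u))]
  have hF₁le : ∀ t : ℝ, 0 ≤ t → t ≤ 1 →
      (∫ u in (0:ℝ)..t, u * κ u ^ 2) ≤ ∫ u in (0:ℝ)..1, u * κ u ^ 2 := by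
    intro t ht0 ht1
    have hadd : (∫ u in (0:ℝ)..t, u * κ u ^ 2) + (∫ u in t..1, u * κ u ^ 2)
        = ∫ u in (0:ℝ)..1, u * κ u ^ 2 :=
      intervalIntegral.integral_add_adjacent_intervals
        ((hc₁.mono (Set.Icc_subset_Icc le_rfl ht1)).intervalIntegrable_of_Icc ht0)
        ((hc₁.mono (Set.Icc_subset_Icc ht0 le_rfl)).intervalIntegrable_of_Icc ht1)
    have hpos : 0 ≤ ∫ u in t..1, u * κ u ^ 2 :=
      intervalIntegral.integral_nonneg ht1 (fun u hu => mul_nonneg (ht0.trans hu.1) (sq_nonneg _))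
    linarith
  have hF₁nonneg : ∀ t : ℝ, 0 ≤ t → 0 ≤ ∫ u in (0:ℝ)..t, u * κ u ^ 2 := fun t ht =>
    intervalIntegral.integral_nonneg ht (fun u hu => mul_nonneg hu.1 (sq_nonneg _))
  -- P(t) = t g'(t) - g(t) equals the integral of u ↦ u K u, hence bounded by (g t / t) F₂ t
  have hPQ : ∀ t : ℝ, 0 < t → t < x →
      g' t * t - g t * 1 ≤ (g t / t) * ∫ u in (0:ℝ)..t, u ^ 2 * κ u ^ 2 := by
    intro t ht0 htx
    have ht1 : t < 1 := lt_of_lt_of_le htx hx1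
    have hsub : Set.Icc (0:ℝ) t ⊆ Set.Icc (0:ℝ) 1 := Set.Icc_subset_Icc le_rfl ht1.le
    have hPft : ∫ u in (0:ℝ)..t, u * K u = (t * g' t - g t) - (0 * g' 0 - g 0) := by
      apply ftc_aux ht0.le
      · intro u hu
        exact (continuousWithinAt_id.mul
          ((hg'cw u (hsub hu) (ne_of_lt (lt_of_le_of_lt hu.2 htx))).mono hsub)).sub
          ((hgc u (hsub hu)).mono hsub)
      · intro u hu
        have hu' : u ∈ Set.Ioo (0:ℝ) 1 := ⟨hu.1, lt_trans hu.2 ht1⟩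
        have hux : u ≠ x := ne_of_lt (lt_trans hu.2 htx)
        have H := ((hasDerivAt_id' u).mul (hg'at u hu' hux)).sub (hgat u hu' hux)
        have he : 1 * g' u + u * K u - g' u = u * K u := by ring
        rw [he] at H; exact H
      · exact (continuousOn_id.mul hKc).mono hsub
    have hIle : ∫ u in (0:ℝ)..t, u * K u
        ≤ (g t / t) * ∫ u in (0:ℝ)..t, u ^ 2 * κ u ^ 2 := by
      rw [← intervalIntegral.integral_const_mul]
      apply intervalIntegral.integral_mono_on ht0.le
        (((continuousOn_id.mul hKc).mono hsub).intervalIntegrable_of_Icc ht0.le)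
        (((continuousOn_const.mul hc₂).mono hsub).intervalIntegrable_of_Icc ht0.le)
      intro u hu
      have hgu : g u ≤ (g t / t) * u := by
        rcases hu.1.lt_or_eq with hu0 | hu0
        · exact (div_le_iff₀ hu0).mp (hmono_h u t hu0 hu.2 htx)
        · rw [← hu0, hg0, mul_zero]
      calc u * K u = u * (κ u ^ 2 * g u) := rfl
        _ ≤ u * (κ u ^ 2 * ((g t / t) * u)) :=
            mul_le_mul_of_nonneg_left (mul_le_mul_of_nonneg_left hgu (sq_nonneg _)) hu.1
        _ = (g t / t) * (u ^ 2 * κ u ^ 2) := by ring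
    rw [hg0] at hPft
    nlinarith [hPft, hIle]
  -- region 1 estimate
  have hreg1 : ∀ s : ℝ, 0 < s → s < x →
      (g x / x) * Real.exp (-∫ u in (0:ℝ)..1, u * κ u ^ 2) ≤ g s / s := by
    intro s hs0 hsx
    have hNBs : (nhdsWithin x (Set.Ioo s x)).NeBot := by
      apply mem_closure_iff_nhdsWithin_neBot.mp
      rw [closure_Ioo (ne_of_lt hsx)]
      exact ⟨hsx.le, le_rfl⟩
    have hT : Tendsto (fun b => (g b / b) * Real.exp (-∫ u in (0:ℝ)..1, u * κ u ^ 2))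
        (nhdsWithin x (Set.Ioo s x))
        (nhds ((g x / x) * Real.exp (-∫ u in (0:ℝ)..1, u * κ u ^ 2))) :=
      Filter.Tendsto.mul_const _
        (hlimx.mono_left (nhdsWithin_mono x (fun u hu => ⟨hs0.trans hu.1, hu.2⟩)))
    refine le_of_tendsto hT ?_
    filter_upwards [self_mem_nhdsWithin] with b hb
    have hbx1 : b < 1 := lt_of_lt_of_le hb.2 hx1
    have hsb1 : Set.Icc s b ⊆ Set.Icc (0:ℝ) 1 := Set.Icc_subset_Icc hs0.le hbx1.le
    have hanti : AntitoneOn (fun t => (g t / t) *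
        Real.exp (-((∫ u in (0:ℝ)..t, u * κ u ^ 2) - (∫ u in (0:ℝ)..t, u ^ 2 * κ u ^ 2) / t)))
        (Set.Icc s b) := by
      apply antitoneOn_of_hasDerivWithinAt_nonpos (convex_Icc s b)
        (f' := fun t => ((g' t * t - g t * 1) / t ^ 2) *
          Real.exp (-((∫ u in (0:ℝ)..t, u * κ u ^ 2) - (∫ u in (0:ℝ)..t, u ^ 2 * κ u ^ 2) / t)) +
          (g t / t) *
          (Real.exp (-((∫ u in (0:ℝ)..t, u * κ u ^ 2) - (∫ u in (0:ℝ)..t, u ^ 2 * κ u ^ 2) / t)) *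
          -((∫ u in (0:ℝ)..t, u ^ 2 * κ u ^ 2) / t ^ 2))) ?_ ?_ ?_
      · apply ContinuousOn.mul
        · exact (hgc.mono hsb1).div continuousOn_id
            (fun u hu => ne_of_gt (lt_of_lt_of_le hs0 hu.1))
        · apply Real.continuous_exp.comp_continuousOn
          apply ContinuousOn.neg
          exact (hF₁cont.mono hsb1).sub ((hF₂cont.mono hsb1).div continuousOn_id
            (fun u hu => ne_of_gt (lt_of_lt_of_le hs0 hu.1)))
      · rw [interior_Icc]
        intro t ht
        have ht0 : 0 < t := hs0.trans ht.1
        have htx : t < x := ht.2.trans hb.2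
        have ht01 : t ∈ Set.Ioo (0:ℝ) 1 := ⟨ht0, lt_of_lt_of_le htx hx1⟩
        have hne : t ≠ 0 := ne_of_gt ht0
        have hB : HasDerivAt (fun y => (∫ u in (0:ℝ)..y, u * κ u ^ 2) -
            (∫ u in (0:ℝ)..y, u ^ 2 * κ u ^ 2) / y)
            ((∫ u in (0:ℝ)..t, u ^ 2 * κ u ^ 2) / t ^ 2) t := by
          have h1 := prim_hasDerivAt hc₁ ⟨le_rfl, zero_le_one⟩ ht01
          have h2 := (prim_hasDerivAt hc₂ ⟨le_rfl, zero_le_one⟩ ht01).div (hasDerivAt_id' t) hne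
          have h3 := h1.sub h2
          refine h3.congr_deriv ?_
          field_simp
          ring
        have hdg : HasDerivAt (fun y => g y / y) ((g' t * t - g t * 1) / t ^ 2) t :=
          (hgat t ht01 (ne_of_lt htx)).div (hasDerivAt_id' t) hne
        have hexp := (hB.neg).exp
        exact ((hdg.mul hexp).hasDerivWithinAt)
      · rw [interior_Icc]
        intro t ht
        have ht0 : 0 < t := hs0.trans ht.1
        have htx : t < x := ht.2.trans hb.2
        have hnum := hPQ t ht0 htx
        have hne : t ≠ 0 := ne_of_gt ht0
        have hD : ((g' t * t - g t * 1) / t ^ 2) *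
            Real.exp (-((∫ u in (0:ℝ)..t, u * κ u ^ 2) -
              (∫ u in (0:ℝ)..t, u ^ 2 * κ u ^ 2) / t)) +
            (g t / t) *
            (Real.exp (-((∫ u in (0:ℝ)..t, u * κ u ^ 2) -
              (∫ u in (0:ℝ)..t, u ^ 2 * κ u ^ 2) / t)) *
            -((∫ u in (0:ℝ)..t, u ^ 2 * κ u ^ 2) / t ^ 2)) =
            (((g' t * t - g t * 1) - (g t / t) * (∫ u in (0:ℝ)..t, u ^ 2 * κ u ^ 2)) / t ^ 2) *
            Real.exp (-((∫ u in (0:ℝ)..t, u * κ u ^ 2) -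
              (∫ u in (0:ℝ)..t, u ^ 2 * κ u ^ 2) / t)) := by
          field_simp
          ring
        beta_reduce
        rw [hD]
        apply mul_nonpos_of_nonpos_of_nonneg _ (Real.exp_nonneg _)
        apply div_nonpos_of_nonpos_of_nonneg _ (sq_nonneg t)
        linarith [hnum]
    have hΨ := hanti (Set.left_mem_Icc.mpr hb.1.le) (Set.right_mem_Icc.mpr hb.1.le) hb.1.le
    have hbd : ((∫ u in (0:ℝ)..b, u * κ u ^ 2) - (∫ u in (0:ℝ)..b, u ^ 2 * κ u ^ 2) / b) -
        ((∫ u in (0:ℝ)..s, u * κ u ^ 2) - (∫ u in (0:ℝ)..s, u ^ 2 * κ u ^ 2) / s)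
        ≤ ∫ u in (0:ℝ)..1, u * κ u ^ 2 := by
      have hb0 : 0 < b := hs0.trans hb.1
      have h1 : 0 ≤ (∫ u in (0:ℝ)..b, u ^ 2 * κ u ^ 2) / b :=
        div_nonneg (hF₂nonneg b hb0.le) hb0.le
      have h2 : (∫ u in (0:ℝ)..s, u ^ 2 * κ u ^ 2) / s ≤ ∫ u in (0:ℝ)..s, u * κ u ^ 2 := by
        rw [div_le_iff₀ hs0]
        have := hF₂le s hs0 (hsx.le.trans hx1)
        linarith
      have h3 := hF₁le b hb0.le hbx1.le
      linarith
    set A := (∫ u in (0:ℝ)..s, u * κ u ^ 2) - (∫ u in (0:ℝ)..s, u ^ 2 * κ u ^ 2) / s with hA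
    set Bb := (∫ u in (0:ℝ)..b, u * κ u ^ 2) - (∫ u in (0:ℝ)..b, u ^ 2 * κ u ^ 2) / b with hBb
    have hb0 : 0 < b := hs0.trans hb.1
    have e1 : Real.exp (-∫ u in (0:ℝ)..1, u * κ u ^ 2) ≤ Real.exp A * Real.exp (-Bb) := by
      rw [← Real.exp_add]
      exact Real.exp_le_exp.mpr (by linarith)
    have e2 : 0 ≤ g b / b := div_nonneg (hg_nonneg b ⟨hb0.le, hbx1.le⟩) hb0.le
    have e3 : (0:ℝ) ≤ Real.exp A := Real.exp_nonneg A
    have e4 : Real.exp A * Real.exp (-A) = 1 := by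
      rw [← Real.exp_add, add_neg_cancel, Real.exp_zero]
    have c1 : (g b / b) * Real.exp (-∫ u in (0:ℝ)..1, u * κ u ^ 2)
        ≤ (g b / b) * (Real.exp A * Real.exp (-Bb)) := mul_le_mul_of_nonneg_left e1 e2
    have c2 : Real.exp A * ((g b / b) * Real.exp (-Bb))
        ≤ Real.exp A * ((g s / s) * Real.exp (-A)) := mul_le_mul_of_nonneg_left hΨ e3
    have c3 : Real.exp A * ((g s / s) * Real.exp (-A)) = g s / s := by
      rw [show Real.exp A * ((g s / s) * Real.exp (-A)) = (g s / s) * (Real.exp A * Real.exp (-A))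
        from by ring, e4, mul_one]
    have c15 : (g b / b) * (Real.exp A * Real.exp (-Bb))
        = Real.exp A * ((g b / b) * Real.exp (-Bb)) := by ring
    linarith [c1, c2, c3, c15]
  -- region 2 estimate: g x * exp(-ϱ) ≤ g 1
  have hreg2 : g x * Real.exp (-∫ u in (0:ℝ)..1, u * κ u ^ 2) ≤ g 1 := by
    rcases hx1.lt_or_eq with hxlt | hxeq
    · -- x < 1
      have hκ2c : ContinuousOn (fun u : ℝ => κ u ^ 2) (Set.Icc 0 1) := hκc.pow 2
      have hprim1c : ∀ f : ℝ → ℝ, ContinuousOn f (Set.Icc 0 1) →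
          ContinuousOn (fun t => ∫ u in (1:ℝ)..t, f u) (Set.Icc 0 1) := by
        intro f hf
        have heq : ∀ t ∈ Set.Icc (0:ℝ) 1,
            (∫ u in (0:ℝ)..t, f u) - (∫ u in (0:ℝ)..1, f u) = ∫ u in (1:ℝ)..t, f u := by
          intro t ht
          have h1 : IntervalIntegrable f volume 0 1 := hf.intervalIntegrable_of_Icc zero_le_one
          have h2 : IntervalIntegrable f volume 1 t :=
            (hf.mono (Set.uIcc_subset_Icc ⟨zero_le_one, le_rfl⟩ ht)).intervalIntegrable
          have h3 := intervalIntegral.integral_add_adjacent_intervals h1 h2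
          linarith
        exact ((prim_cont hf).sub continuousOn_const).congr (fun t ht => (heq t ht).symm)
      have hNBr : (nhdsWithin x (Set.Ioo x 1)).NeBot := by
        apply mem_closure_iff_nhdsWithin_neBot.mp
        rw [closure_Ioo (ne_of_lt hxlt)]
        exact ⟨le_rfl, hxlt.le⟩
      have hT : Tendsto (fun a => g a * Real.exp (-∫ u in (0:ℝ)..1, u * κ u ^ 2))
          (nhdsWithin x (Set.Ioo x 1))
          (nhds (g x * Real.exp (-∫ u in (0:ℝ)..1, u * κ u ^ 2))) :=
        Filter.Tendsto.mul_const _ (((hgc x ⟨hx0.le, hx1⟩).mono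
          (fun u hu => ⟨(hx0.trans hu.1).le, hu.2.le⟩)).tendsto)
      refine le_of_tendsto hT ?_
      filter_upwards [self_mem_nhdsWithin] with a ha
      have ha0 : 0 < a := hx0.trans ha.1
      have hsub : Set.Icc a 1 ⊆ Set.Icc (0:ℝ) 1 := Set.Icc_subset_Icc ha0.le le_rfl
      have hmonoΦ : MonotoneOn (fun t => g t *
          Real.exp ((∫ u in (1:ℝ)..t, u * κ u ^ 2) - t * ∫ u in (1:ℝ)..t, κ u ^ 2))
          (Set.Icc a 1) := by
        apply monotoneOn_of_hasDerivWithinAt_nonneg (convex_Icc a 1)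
          (f' := fun t => g' t *
            Real.exp ((∫ u in (1:ℝ)..t, u * κ u ^ 2) - t * ∫ u in (1:ℝ)..t, κ u ^ 2) +
            g t * (Real.exp ((∫ u in (1:ℝ)..t, u * κ u ^ 2) - t * ∫ u in (1:ℝ)..t, κ u ^ 2) *
            -(∫ u in (1:ℝ)..t, κ u ^ 2))) ?_ ?_ ?_
        · apply ContinuousOn.mul (hgc.mono hsub)
          apply Real.continuous_exp.comp_continuousOn
          exact ((hprim1c _ hc₁).mono hsub).sub
            (continuousOn_id.mul ((hprim1c _ hκ2c).mono hsub))
        · rw [interior_Icc]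
          intro t ht
          have htx : x < t := ha.1.trans ht.1
          have ht01 : t ∈ Set.Ioo (0:ℝ) 1 := ⟨hx0.trans htx, ht.2⟩
          have hB : HasDerivAt (fun y => (∫ u in (1:ℝ)..y, u * κ u ^ 2) -
              y * ∫ u in (1:ℝ)..y, κ u ^ 2) (-(∫ u in (1:ℝ)..t, κ u ^ 2)) t := by
            have h1 := prim_hasDerivAt hc₁ ⟨zero_le_one, le_rfl⟩ ht01
            have h2 := (hasDerivAt_id' t).mul (prim_hasDerivAt hκ2c ⟨zero_le_one, le_rfl⟩ ht01)
            have h3 := h1.sub h2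
            refine h3.congr_deriv ?_
            ring
          exact ((hgat t ht01 (ne_of_gt htx)).mul (hB.exp)).hasDerivWithinAt
        · rw [interior_Icc]
          intro t ht
          have htx : x < t := ha.1.trans ht.1
          have hcore : 0 ≤ g' t + g t * -(∫ u in (1:ℝ)..t, κ u ^ 2) := by
            have hsym : (∫ u in (1:ℝ)..t, κ u ^ 2) = -∫ u in t..1, κ u ^ 2 :=
              intervalIntegral.integral_symm t 1
            have hg'val := hftc2 t htx ht.2.le
            have hint : (∫ u in t..1, K u) ≤ ∫ u in t..1, g t * κ u ^ 2 := by
              apply intervalIntegral.integral_mono_on ht.2.le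
                ((hKc.mono (Set.Icc_subset_Icc (hx0.trans htx).le le_rfl)).intervalIntegrable_of_Icc
                  ht.2.le)
                (((continuousOn_const.mul hκ2c).mono
                  (Set.Icc_subset_Icc (hx0.trans htx).le le_rfl)).intervalIntegrable_of_Icc ht.2.le)
              intro u hu
              have hgu : g u ≤ g t := hg_anti ⟨htx.le, ht.2.le⟩ ⟨htx.le.trans hu.1, hu.2⟩ hu.1
              calc κ u ^ 2 * g u ≤ κ u ^ 2 * g t :=
                    mul_le_mul_of_nonneg_left hgu (sq_nonneg _)
                _ = g t * κ u ^ 2 := by ring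
            have h2 : (∫ u in t..1, g t * κ u ^ 2) = g t * ∫ u in t..1, κ u ^ 2 :=
              intervalIntegral.integral_const_mul _ _
            rw [hsym, hg'val]
            rw [h2] at hint
            linarith
          have hD : g' t * Real.exp ((∫ u in (1:ℝ)..t, u * κ u ^ 2) -
              t * ∫ u in (1:ℝ)..t, κ u ^ 2) +
              g t * (Real.exp ((∫ u in (1:ℝ)..t, u * κ u ^ 2) -
              t * ∫ u in (1:ℝ)..t, κ u ^ 2) * -(∫ u in (1:ℝ)..t, κ u ^ 2)) =
              (g' t + g t * -(∫ u in (1:ℝ)..t, κ u ^ 2)) *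
              Real.exp ((∫ u in (1:ℝ)..t, u * κ u ^ 2) - t * ∫ u in (1:ℝ)..t, κ u ^ 2) := by
            ring
          beta_reduce
          rw [hD]
          exact mul_nonneg hcore (Real.exp_nonneg _)
      have hΦ := hmonoΦ (Set.left_mem_Icc.mpr ha.2.le) (Set.right_mem_Icc.mpr ha.2.le) ha.2.le
      beta_reduce at hΦ
      rw [intervalIntegral.integral_same, intervalIntegral.integral_same] at hΦ
      simp only [mul_zero, sub_zero, Real.exp_zero, mul_one] at hΦ
      -- hΦ : g a * exp (B a) ≤ g 1
      have hBa : -(∫ u in (0:ℝ)..1, u * κ u ^ 2) ≤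
          (∫ u in (1:ℝ)..a, u * κ u ^ 2) - a * ∫ u in (1:ℝ)..a, κ u ^ 2 := by
        have hsym1 : (∫ u in (1:ℝ)..a, u * κ u ^ 2) = -∫ u in a..1, u * κ u ^ 2 :=
          intervalIntegral.integral_symm a 1
        have hsym2 : (∫ u in (1:ℝ)..a, κ u ^ 2) = -∫ u in a..1, κ u ^ 2 :=
          intervalIntegral.integral_symm a 1
        have h1 : (∫ u in a..1, u * κ u ^ 2) ≤ ∫ u in (0:ℝ)..1, u * κ u ^ 2 := by
          have hadd : (∫ u in (0:ℝ)..a, u * κ u ^ 2) + (∫ u in a..1, u * κ u ^ 2)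
              = ∫ u in (0:ℝ)..1, u * κ u ^ 2 :=
            intervalIntegral.integral_add_adjacent_intervals
            ((hc₁.mono (Set.Icc_subset_Icc le_rfl ha.2.le)).intervalIntegrable_of_Icc ha0.le)
            ((hc₁.mono (Set.Icc_subset_Icc ha0.le le_rfl)).intervalIntegrable_of_Icc ha.2.le)
          have hpos : 0 ≤ ∫ u in (0:ℝ)..a, u * κ u ^ 2 := hF₁nonneg a ha0.le
          linarith
        have h2 : 0 ≤ ∫ u in a..1, κ u ^ 2 :=
          intervalIntegral.integral_nonneg ha.2.le (fun u hu => sq_nonneg _)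
        rw [hsym1, hsym2]
        nlinarith [mul_nonneg ha0.le h2]
      have hmul : g a * Real.exp (-∫ u in (0:ℝ)..1, u * κ u ^ 2) ≤
          g a * Real.exp ((∫ u in (1:ℝ)..a, u * κ u ^ 2) - a * ∫ u in (1:ℝ)..a, κ u ^ 2) :=
        mul_le_mul_of_nonneg_left (Real.exp_le_exp.mpr hBa)
          (hg_nonneg a ⟨ha0.le, ha.2.le⟩)
      linarith [hΦ, hmul]
    · have h1 : Real.exp (-∫ u in (0:ℝ)..1, u * κ u ^ 2) ≤ 1 :=
        Real.exp_le_one_iff.mpr (by linarith)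
      calc g x * Real.exp (-∫ u in (0:ℝ)..1, u * κ u ^ 2) ≤ g x * 1 :=
            mul_le_mul_of_nonneg_left h1 hgx_pos.le
        _ = g 1 := by rw [mul_one, hxeq]
  -- final assembly
  intro s hs
  obtain ⟨hs0, hs1⟩ := hs
  have hexppos : 0 < Real.exp (-∫ u in (0:ℝ)..1, u * κ u ^ 2) := Real.exp_pos _
  have e1 : Real.exp (-∫ u in (0:ℝ)..1, u * κ u ^ 2) / (1 + ∫ u in (0:ℝ)..1, u * κ u ^ 2)
      ≤ (g x / x) * Real.exp (-∫ u in (0:ℝ)..1, u * κ u ^ 2) := by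
    have heq : Real.exp (-∫ u in (0:ℝ)..1, u * κ u ^ 2) / (1 + ∫ u in (0:ℝ)..1, u * κ u ^ 2)
        = (1 / (1 + ∫ u in (0:ℝ)..1, u * κ u ^ 2)) * Real.exp (-∫ u in (0:ℝ)..1, u * κ u ^ 2) := by
      ring
    rw [heq]
    exact mul_le_mul_of_nonneg_right hgxx hexppos.le
  rcases lt_trichotomy s x with hlt | heq | hgt
  · have h1 := hreg1 s hs0 hlt
    have h3 : g s / s ≤ g s / (s * x) :=
      div_le_div_of_nonneg_left (hg_nonneg s ⟨hs0.le, hs1⟩) (mul_pos hs0 hx0)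
        (mul_le_of_le_one_right hs0.le hx1)
    linarith
  · subst heq
    have h2 : (1:ℝ) / (1 + ∫ u in (0:ℝ)..1, u * κ u ^ 2) ≤ g s / s := hgxx
    have h3 : g s / s ≤ g s / (s * s) :=
      div_le_div_of_nonneg_left (hg_nonneg s ⟨hs0.le, hs1⟩) (mul_pos hs0 hs0)
        (mul_le_of_le_one_right hs0.le hs1)
    have h4 : Real.exp (-∫ u in (0:ℝ)..1, u * κ u ^ 2) / (1 + ∫ u in (0:ℝ)..1, u * κ u ^ 2)
        ≤ 1 / (1 + ∫ u in (0:ℝ)..1, u * κ u ^ 2) := by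
      exact div_le_div_of_nonneg_right (Real.exp_le_one_iff.mpr (by linarith)) h1ϱ.le
    linarith
  · have h1 : g 1 ≤ g s := hg_anti ⟨hgt.le, hs1⟩ ⟨hx1, le_rfl⟩ hs1
    have e2 : (g x / x) * Real.exp (-∫ u in (0:ℝ)..1, u * κ u ^ 2)
        = (g x * Real.exp (-∫ u in (0:ℝ)..1, u * κ u ^ 2)) / x := by ring
    have e3 : (g x * Real.exp (-∫ u in (0:ℝ)..1, u * κ u ^ 2)) / x ≤ g 1 / x := by
      exact div_le_div_of_nonneg_right hreg2 hx0.le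
    have e4 : g 1 / x ≤ g s / x := div_le_div_of_nonneg_right h1 hx0.le
    have e5 : g s / x ≤ g s / (s * x) :=
      div_le_div_of_nonneg_left (hg_nonneg s ⟨hx0.le.trans hgt.le, hs1⟩) (mul_pos hs0 hx0)
        (mul_le_of_le_one_left hx0.le hs1)
    linarith
end
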